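/- arXiv:0805.2752 — 16 statements merged into one kernel-verified Lean document; each statement's English description precedes it below -/
import Mathlib

section
/- Let ε, α, β be real numbers with α ≥ 1, β > 0, and define g : [1, ∞) → ℝ by g(t) = t^ε − α·t^(ε−1) − β; let t_b ∈ [1, ∞) satisfy g(t_b) = 0. If 0 < ε ≤ 1 then α + β^(1/ε) ≤ t_b ≤ (1/ε)·α + β^(1/ε). If ε > 1 then (1/ε)·α + β^(1/ε) < t_b < α + β^(1/ε). -/
open Real

/-- Tangent line bound for concave power: `s^ε ≤ u^(ε-1) * (ε*s + (1-ε)*u)`. -/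
lemma tangent_le {ε u s : ℝ} (hε : 0 < ε) (hε1 : ε ≤ 1) (hu : 0 < u) (hs : 0 < s) :
    s ^ ε ≤ u ^ (ε - 1) * (ε * s + (1 - ε) * u) := by
  have hx : (-1 : ℝ) ≤ s / u - 1 := by
    have : 0 < s / u := div_pos hs hu
    linarith
  have hb := rpow_one_add_le_one_add_mul_self hx hε.le hε1
  have h1 : (1 : ℝ) + (s / u - 1) = s / u := by ring
  rw [h1, Real.div_rpow hs.le hu.le] at hb
  have huε : 0 < u ^ ε := Real.rpow_pos_of_pos hu ε
  have h2 : s ^ ε ≤ u ^ ε * (1 + ε * (s / u - 1)) := by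
    rw [div_le_iff₀ huε] at hb; linarith [hb]
  have huε1 : u ^ ε = u ^ (ε - 1) * u := by
    rw [← Real.rpow_add_one hu.ne' (ε - 1)]; ring_nf
  have h3 : u ^ ε * (1 + ε * (s / u - 1)) = u ^ (ε - 1) * (ε * s + (1 - ε) * u) := by
    rw [huε1]; field_simp; ring
  linarith [h3 ▸ h2]

/-- Strict tangent line bound for convex power. -/
lemma tangent_lt {ε u s : ℝ} (hε : 1 < ε) (hu : 0 < u) (hs : 0 < s) (hne : s ≠ u) :
    u ^ (ε - 1) * (ε * s + (1 - ε) * u) < s ^ ε := by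
  have hx : (-1 : ℝ) ≤ s / u - 1 := by
    have : 0 < s / u := div_pos hs hu
    linarith
  have hx0 : s / u - 1 ≠ 0 := by
    intro h
    apply hne
    have h' : s / u = 1 := by linarith
    field_simp at h'
    linarith
  have hb := one_add_mul_self_lt_rpow_one_add hx hx0 hε
  have h1 : (1 : ℝ) + (s / u - 1) = s / u := by ring
  rw [h1, Real.div_rpow hs.le hu.le] at hb
  have huε : 0 < u ^ ε := Real.rpow_pos_of_pos hu ε
  have h2 : u ^ ε * (1 + ε * (s / u - 1)) < s ^ ε := by
    rw [lt_div_iff₀ huε] at hb; linarith [hb]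
  have huε1 : u ^ ε = u ^ (ε - 1) * u := by
    rw [← Real.rpow_add_one hu.ne' (ε - 1)]; ring_nf
  have h3 : u ^ ε * (1 + ε * (s / u - 1)) = u ^ (ε - 1) * (ε * s + (1 - ε) * u) := by
    rw [huε1]; field_simp; ring
  linarith [h3 ▸ h2]

/-- bounds on the root t_b of g(t) = t^ε − α·t^(ε−1) − β in [1, ∞). -/
theorem stmt1 (ε α β : ℝ) (hε : 0 < ε) (hα : 1 ≤ α) (hβ : 0 < β)
    (tb : ℝ) (htb : tb ∈ Set.Ici (1 : ℝ))
    (hroot : tb ^ ε - α * tb ^ (ε - 1) - β = 0) :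
    (ε ≤ 1 → α + β ^ (1 / ε) ≤ tb ∧ tb ≤ (1 / ε) * α + β ^ (1 / ε)) ∧
    (1 < ε → (1 / ε) * α + β ^ (1 / ε) < tb ∧ tb < α + β ^ (1 / ε)) := by
  have htb1 : (1 : ℝ) ≤ tb := htb
  have htbpos : (0 : ℝ) < tb := lt_of_lt_of_le one_pos htb1
  set s : ℝ := β ^ (1 / ε) with hs_def
  have hspos : 0 < s := Real.rpow_pos_of_pos hβ _
  have hsε : s ^ ε = β := by
    rw [hs_def, ← Real.rpow_mul hβ.le, one_div_mul_cancel hε.ne', Real.rpow_one]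
  have hss : s ^ (ε - 1) * s = s ^ ε := by
    rw [← Real.rpow_add_one hspos.ne' (ε - 1)]; ring_nf
  have htbε : tb ^ ε = tb ^ (ε - 1) * tb := by
    rw [← Real.rpow_add_one htbpos.ne' (ε - 1)]; ring_nf
  have hφ : tb ^ (ε - 1) * (tb - α) = β := by linear_combination hroot - htbε
  have hL : tb ^ ε - α * tb ^ (ε - 1) = β := by linarith [hroot]
  have htbα : α < tb := by
    nlinarith [Real.rpow_pos_of_pos htbpos (ε - 1), hφ, hβ]
  constructor
  · -- case ε ≤ 1
    intro h1
    have gmono : ∀ x y : ℝ, 1 ≤ x → x < y →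
        x ^ ε - α * x ^ (ε - 1) < y ^ ε - α * y ^ (ε - 1) := by
      intro x y hx hxy
      have hxpos : 0 < x := lt_of_lt_of_le one_pos hx
      have ha : x ^ ε < y ^ ε := Real.rpow_lt_rpow hxpos.le hxy hε
      have hb : y ^ (ε - 1) ≤ x ^ (ε - 1) :=
        Real.rpow_le_rpow_of_nonpos hxpos hxy.le (by linarith)
      have hc := mul_le_mul_of_nonneg_left hb (by linarith : (0 : ℝ) ≤ α)
      linarith
    constructor
    · -- lower bound
      by_contra hc
      push_neg at hc
      have key := gmono tb (α + s) htb1 hc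
      have haspos : (0 : ℝ) < α + s := by linarith
      have he : (α + s) ^ ε = (α + s) ^ (ε - 1) * (α + s) := by
        rw [← Real.rpow_add_one haspos.ne' (ε - 1)]; ring_nf
      have hcmp : (α + s) ^ (ε - 1) ≤ s ^ (ε - 1) :=
        Real.rpow_le_rpow_of_nonpos hspos (by linarith) (by linarith)
      have h4 : (α + s) ^ (ε - 1) * s ≤ s ^ ε := by
        rw [← hss]; exact mul_le_mul_of_nonneg_right hcmp hspos.le
      have h5 : (α + s) ^ ε - α * (α + s) ^ (ε - 1) = (α + s) ^ (ε - 1) * s := by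
        rw [he]; ring
      linarith
    · -- upper bound
      set u : ℝ := (1 / ε) * α + s with hu_def
      by_contra hc
      push_neg at hc
      have h1e : (1 : ℝ) ≤ 1 / ε := by rw [le_div_iff₀ hε]; linarith
      have hprod : (1 : ℝ) ≤ 1 / ε * α := by
        have := mul_le_mul h1e hα zero_le_one (by linarith : (0:ℝ) ≤ 1/ε)
        linarith
      have h1u : (1 : ℝ) ≤ u := by rw [hu_def]; linarith
      have hupos : (0 : ℝ) < u := by linarith
      have key := gmono u tb h1u hc
      have htan := tangent_le hε h1 hupos hspos
      have hlin : ε * s + (1 - ε) * u = u - α := by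
        rw [hu_def]; field_simp; ring
      have he : u ^ ε = u ^ (ε - 1) * u := by
        rw [← Real.rpow_add_one hupos.ne' (ε - 1)]; ring_nf
      have heq : u ^ (ε - 1) * (ε * s + (1 - ε) * u) = u ^ ε - α * u ^ (ε - 1) := by
        rw [hlin, he]; ring
      linarith
  · -- case 1 < ε
    intro h2
    have φmono : ∀ x y : ℝ, α ≤ x → x ≤ y →
        x ^ (ε - 1) * (x - α) ≤ y ^ (ε - 1) * (y - α) := by
      intro x y hx hxy
      have hxpos : 0 < x := lt_of_lt_of_le (by linarith) hx
      have hr : x ^ (ε - 1) ≤ y ^ (ε - 1) :=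
        Real.rpow_le_rpow hxpos.le hxy (by linarith)
      have hy : 0 < y ^ (ε - 1) := Real.rpow_pos_of_pos (by linarith) _
      exact mul_le_mul hr (by linarith) (by linarith) hy.le
    constructor
    · -- lower bound
      set u : ℝ := (1 / ε) * α + s with hu_def
      by_contra hc
      push_neg at hc
      have hαε : 0 < (1 / ε) * α := mul_pos (by positivity) (by linarith)
      have hsu : s < u := by rw [hu_def]; linarith
      have hupos : (0 : ℝ) < u := by linarith
      have hmono := φmono tb u htbα.le hc
      have htan := tangent_lt h2 hupos hspos hsu.ne
      have hlin : ε * s + (1 - ε) * u = u - α := by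
        rw [hu_def]; field_simp; ring
      rw [hlin] at htan
      linarith
    · -- upper bound
      by_contra hc
      push_neg at hc
      have hmono := φmono (α + s) tb (by linarith) hc
      have h5 : s ^ (ε - 1) < (α + s) ^ (ε - 1) :=
        Real.rpow_lt_rpow hspos.le (by linarith) (by linarith)
      have h6 : s ^ (ε - 1) * s < (α + s) ^ (ε - 1) * s :=
        mul_lt_mul_of_pos_right h5 hspos
      have h7 : (α + s) ^ (ε - 1) * (α + s - α) = (α + s) ^ (ε - 1) * s := by ring
      rw [h7] at hmono
      linarith
end

section
/- For all real numbers x > 0, y > 0 and every real ε with −1 < ε ≤ 1, it holds that x^(1+ε)/(1+ε) − y^(1+ε)/(1+ε) ≤ (x² − y²)/(2·y^(1−ε)). -/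
/-- for x, y > 0 and −1 < ε ≤ 1,
x^(1+ε)/(1+ε) − y^(1+ε)/(1+ε) ≤ (x² − y²)/(2·y^(1−ε)). -/
theorem stmt2 (x y ε : ℝ) (hx : 0 < x) (hy : 0 < y) (hε1 : -1 < ε) (hε2 : ε ≤ 1) :
    x ^ (1 + ε) / (1 + ε) - y ^ (1 + ε) / (1 + ε) ≤ (x ^ 2 - y ^ 2) / (2 * y ^ (1 - ε)) := by
  have hp : (0:ℝ) < 1 + ε := by linarith
  have hy2 : (0:ℝ) < y ^ 2 := by positivity
  have hA : 0 < x ^ (1 + ε) := Real.rpow_pos_of_pos hx _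
  have hB : 0 < y ^ (1 + ε) := Real.rpow_pos_of_pos hy _
  have hC : 0 < y ^ (1 - ε) := Real.rpow_pos_of_pos hy _
  have hs : (-1:ℝ) ≤ x ^ 2 / y ^ 2 - 1 := by
    have : 0 < x ^ 2 / y ^ 2 := by positivity
    linarith
  have hb := rpow_one_add_le_one_add_mul_self hs (by linarith : (0:ℝ) ≤ (1+ε)/2)
    (by linarith : (1+ε)/2 ≤ 1)
  have h1 : (1 + (x ^ 2 / y ^ 2 - 1)) = (x/y) ^ (2:ℝ) := by
    rw [Real.rpow_two, div_pow]; ring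
  have h2 : ((x/y) ^ (2:ℝ)) ^ ((1+ε)/2) = x ^ (1+ε) / y ^ (1+ε) := by
    rw [← Real.rpow_mul (by positivity : (0:ℝ) ≤ x/y)]
    rw [show (2:ℝ)*((1+ε)/2) = 1+ε by ring, Real.div_rpow hx.le hy.le]
  rw [h1, h2] at hb
  -- hb : x^(1+ε) / y^(1+ε) ≤ 1 + (1+ε)/2 * (x²/y² - 1)
  have hBC : y ^ (1+ε) * y ^ (1-ε) = y ^ 2 := by
    rw [← Real.rpow_natCast y 2, ← Real.rpow_add hy]
    norm_num
  have hb' : x ^ (1+ε) * y ^ 2 ≤ y ^ (1+ε) * y ^ 2 + (1+ε)/2 * (x^2 - y^2) * y ^ (1+ε) := by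
    have := mul_le_mul_of_nonneg_right hb (by positivity : (0:ℝ) ≤ y ^ (1+ε) * y ^ 2)
    calc x ^ (1+ε) * y ^ 2 = x ^ (1+ε) / y ^ (1+ε) * (y ^ (1+ε) * y ^ 2) := by
          field_simp
      _ ≤ (1 + (1+ε)/2 * (x^2/y^2 - 1)) * (y ^ (1+ε) * y ^ 2) := this
      _ = y ^ (1+ε) * y ^ 2 + (1+ε)/2 * (x^2 - y^2) * y ^ (1+ε) := by
          field_simp
  rw [div_sub_div_same, div_le_div_iff₀ hp (by positivity)]
  have key : (x ^ (1+ε) - y ^ (1+ε)) * (2 * y ^ (1-ε)) * y ^ 2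
      ≤ (x^2 - y^2) * (1+ε) * y ^ 2 := by
    have h := mul_le_mul_of_nonneg_right hb' (by positivity : (0:ℝ) ≤ 2 * y ^ (1-ε))
    calc (x ^ (1+ε) - y ^ (1+ε)) * (2 * y ^ (1-ε)) * y ^ 2
        = x ^ (1+ε) * y ^ 2 * (2 * y ^ (1-ε))
          - y ^ (1+ε) * y ^ (1-ε) * (2 * y ^ 2) := by ring
      _ ≤ (y ^ (1+ε) * y ^ 2 + (1+ε)/2 * (x^2 - y^2) * y ^ (1+ε)) * (2 * y ^ (1-ε))
          - y ^ (1+ε) * y ^ (1-ε) * (2 * y ^ 2) := by linarith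
      _ = (x^2 - y^2) * (1+ε) * (y ^ (1+ε) * y ^ (1-ε)) := by ring
      _ = (x^2 - y^2) * (1+ε) * y ^ 2 := by rw [hBC]
  exact le_of_mul_le_mul_right key hy2
end

section
/- For every real t ≥ 1 and every real ε with 0 < ε ≤ 1, it holds that (t^ε − 1)/ε ≤ t^ε·(ln t)^(1−ε) − ⌊ε⌋, where ⌊ε⌋ denotes the integer part of ε (so ⌊ε⌋ = 0 for 0 < ε < 1 and ⌊ε⌋ = 1 for ε = 1). -/
open Real

/-- Key inequality: for `0 < ε < 1` and `0 < L`, `1 - exp(-(ε*L)) ≤ ε * L^(1-ε)`. -/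
lemma keylem (ε L : ℝ) (hε : 0 < ε) (hε1 : ε < 1) (hL : 0 < L) :
    1 - Real.exp (-(ε * L)) ≤ ε * L ^ (1 - ε) := by
  set A : ℝ := L ^ (1 - ε) with hA
  set B : ℝ := L ^ (-ε) with hB
  have hApos : 0 < A := Real.rpow_pos_of_pos hL _
  have hBpos : 0 < B := Real.rpow_pos_of_pos hL _
  -- pointwise weighted AM-GM
  have amgm : ∀ u : ℝ, Real.exp (-(ε * u)) ≤ ε * (A * Real.exp (-u)) + (1 - ε) * B := by
    intro u
    have h1 : (A * Real.exp (-u)) ^ ε * B ^ (1 - ε) = Real.exp (-(ε * u)) := by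
      rw [Real.mul_rpow hApos.le (Real.exp_nonneg _), hA, hB,
        ← Real.rpow_mul hL.le, ← Real.rpow_mul hL.le, ← Real.exp_mul]
      rw [mul_right_comm, ← Real.rpow_add hL, show (1 - ε) * ε + -ε * (1 - ε) = 0 by ring,
        Real.rpow_zero, one_mul]
      ring_nf
    calc Real.exp (-(ε * u)) = (A * Real.exp (-u)) ^ ε * B ^ (1 - ε) := h1.symm
      _ ≤ ε * (A * Real.exp (-u)) + (1 - ε) * B :=
        Real.geom_mean_le_arith_mean2_weighted hε.le (by linarith)
          (mul_nonneg hApos.le (Real.exp_nonneg _)) hBpos.le (by ring)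
  set f : ℝ → ℝ := fun u =>
    ε ^ 2 * A * (1 - Real.exp (-u)) + (1 - ε) * B * ε * u - 1 + Real.exp (-(ε * u)) with hf
  have hderiv : ∀ u : ℝ, HasDerivAt f
      (ε ^ 2 * A * Real.exp (-u) + (1 - ε) * B * ε - ε * Real.exp (-(ε * u))) u := by
    intro u
    have h1 : HasDerivAt (fun u : ℝ => Real.exp (-u)) (-Real.exp (-u)) u := by
      simpa [Function.comp_def] using (Real.hasDerivAt_exp (-u)).comp u (hasDerivAt_neg u)
    have h2 : HasDerivAt (fun u : ℝ => Real.exp (-(ε * u))) (-ε * Real.exp (-(ε * u))) u := by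
      have hinner : HasDerivAt (fun u : ℝ => -(ε * u)) (-ε) u := by
        simpa [Pi.neg_def] using ((hasDerivAt_id u).const_mul ε).neg
      simpa [mul_comm, Function.comp_def] using (Real.hasDerivAt_exp (-(ε * u))).comp u hinner
    have h3 : HasDerivAt (fun u : ℝ => ε ^ 2 * A * (1 - Real.exp (-u)))
        (ε ^ 2 * A * Real.exp (-u)) u := by
      have := ((hasDerivAt_const u (1 : ℝ)).sub h1).const_mul (ε ^ 2 * A)
      simpa using this
    have h4 : HasDerivAt (fun u : ℝ => (1 - ε) * B * ε * u) ((1 - ε) * B * ε) u := by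
      simpa using (hasDerivAt_id u).const_mul ((1 - ε) * B * ε)
    have := ((h3.add h4).sub (hasDerivAt_const u (1 : ℝ))).add h2
    rw [show ε ^ 2 * A * Real.exp (-u) + (1 - ε) * B * ε - ε * Real.exp (-(ε * u)) =
      ε ^ 2 * A * Real.exp (-u) + (1 - ε) * B * ε - 0 + -ε * Real.exp (-(ε * u)) by ring]
    exact this
  have hmono : MonotoneOn f (Set.Icc 0 L) := by
    apply monotoneOn_of_deriv_nonneg (convex_Icc 0 L)
    · exact Continuous.continuousOn (by fun_prop)
    · intro u hu
      exact (hderiv u).differentiableAt.differentiableWithinAt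
    · intro u hu
      rw [(hderiv u).deriv]
      have h := amgm u
      nlinarith [h, hε.le]
  have h0 : f 0 = 0 := by simp [hf]
  have hfL : 0 ≤ f L := by
    rw [← h0]
    exact hmono (Set.left_mem_Icc.2 hL.le) (Set.mem_Icc.2 ⟨hL.le, le_rfl⟩) hL.le
  have hBL : B * L = A := by
    rw [hB, hA]
    rw [show (1 : ℝ) - ε = -ε + 1 by ring, Real.rpow_add hL, Real.rpow_one]
  have hfLval : ε ^ 2 * A * (1 - Real.exp (-L)) + (1 - ε) * B * ε * L - 1
      + Real.exp (-(ε * L)) = f L := rfl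
  have hexp : 0 ≤ Real.exp (-L) := Real.exp_nonneg _
  have e1 : 0 ≤ ε ^ 2 * A * (1 - Real.exp (-L)) + (1 - ε) * B * ε * L - 1
      + Real.exp (-(ε * L)) := hfLval ▸ hfL
  have e2 : (1 - ε) * B * ε * L = (1 - ε) * ε * A := by rw [← hBL]; ring
  have e3 : ε ^ 2 * A * (1 - Real.exp (-L)) ≤ ε ^ 2 * A := by
    nlinarith [mul_nonneg (mul_nonneg (sq_nonneg ε) hApos.le) hexp]
  have e4 : ε ^ 2 * A + (1 - ε) * ε * A = ε * A := by ring
  linarith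

/-- for t ≥ 1 and 0 < ε ≤ 1,
(t^ε − 1)/ε ≤ t^ε·(ln t)^(1−ε) − ⌊ε⌋. -/
theorem stmt3 (t ε : ℝ) (ht : 1 ≤ t) (hε : 0 < ε) (hε1 : ε ≤ 1) :
    (t ^ ε - 1) / ε ≤ t ^ ε * (Real.log t) ^ (1 - ε) - (⌊ε⌋ : ℝ) := by
  rcases eq_or_lt_of_le hε1 with h1 | h1
  · subst h1
    simp only [Real.rpow_one, sub_self, Real.rpow_zero, mul_one, Int.floor_one]
    norm_num
  · have hfloor : ⌊ε⌋ = 0 := Int.floor_eq_zero_iff.2 ⟨hε.le, h1⟩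
    rw [hfloor]
    rcases eq_or_lt_of_le ht with ht1 | ht1
    · subst ht1
      rw [Real.one_rpow, Real.log_one, Real.zero_rpow (by linarith)]
      norm_num
    · have ht0 : 0 < t := by linarith
      have hL : 0 < Real.log t := Real.log_pos ht1
      set L := Real.log t with hLdef
      have htε : t ^ ε = Real.exp (ε * L) := by
        rw [Real.rpow_def_of_pos ht0, mul_comm]
      rw [htε, Int.cast_zero, sub_zero, div_le_iff₀ hε]
      have hkey := keylem ε L hε h1 hL
      have hEp : 0 < Real.exp (ε * L) := Real.exp_pos _
      have hmul : Real.exp (ε * L) * (1 - Real.exp (-(ε * L))) ≤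
          Real.exp (ε * L) * (ε * L ^ (1 - ε)) :=
        mul_le_mul_of_nonneg_left hkey hEp.le
      have hid : Real.exp (ε * L) * (1 - Real.exp (-(ε * L))) = Real.exp (ε * L) - 1 := by
        rw [mul_sub, mul_one, ← Real.exp_add]
        norm_num
      rw [hid] at hmul
      have : Real.exp (ε * L) * (ε * L ^ (1 - ε)) = Real.exp (ε * L) * L ^ (1 - ε) * ε := by
        ring
      linarith
end

section
/- Let ε, α₁, α₂, β be real numbers with 0 < ε < 1, α₁ > 0, α₂ > 0, β > 0, and suppose α := α₁ + α₂ ≥ 2 + ε. Define g : [1, ∞) → ℝ by g(t) = t^ε − (α₁·(ln t / t)^(1−ε) + α₂·t^(−1)) − β, and set t₀ = ((1/ε)·α + β^(1/ε))·(ln((1/ε)·α + β^(1/ε)))^(1−ε). Then g(t₀) > 0. -/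
/-- with 0 < ε < 1, α₁, α₂, β > 0, α = α₁ + α₂ ≥ 2 + ε,
g(t) = t^ε − (α₁·(ln t/t)^(1−ε) + α₂·t⁻¹) − β and
t₀ = ((1/ε)·α + β^(1/ε))·(ln((1/ε)·α + β^(1/ε)))^(1−ε) one has g(t₀) > 0. -/
theorem stmt4 (ε α₁ α₂ β α t₀ : ℝ) (hε : 0 < ε) (hε1 : ε < 1)
    (hα₁ : 0 < α₁) (hα₂ : 0 < α₂) (hβ : 0 < β)
    (hα_def : α = α₁ + α₂) (hα_ge : 2 + ε ≤ α)
    (ht₀ : t₀ = ((1 / ε) * α + β ^ (1 / ε)) *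
      (Real.log ((1 / ε) * α + β ^ (1 / ε))) ^ (1 - ε)) :
    0 < t₀ ^ ε - (α₁ * (Real.log t₀ / t₀) ^ (1 - ε) + α₂ * t₀⁻¹) - β := by
  set e1 := 1 - ε with he1
  have he1pos : 0 < e1 := by rw [he1]; linarith
  have he1lt : e1 < 1 := by rw [he1]; linarith
  have hee1 : ε + e1 = 1 := by rw [he1]; ring
  set u := (1 / ε) * α with hu
  set v := β ^ (1 / ε) with hv
  have hαpos : 0 < α := by linarith
  have hvpos : 0 < v := Real.rpow_pos_of_pos hβ _
  have hupos : 0 < u := by rw [hu]; positivity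
  have hu3 : 3 < u := by
    rw [hu, one_div, inv_mul_eq_div, lt_div_iff₀ hε]; nlinarith
  have hαu : α = ε * u := by
    rw [hu]; field_simp
  set s := u + v with hs
  have hs0 : 0 < s := by rw [hs]; linarith
  have hs3 : 3 < s := by rw [hs]; linarith
  have hS1 : 0 < s ^ e1 := Real.rpow_pos_of_pos hs0 _
  set L := Real.log s with hL
  have hL1 : 1 < L := by
    rw [hL]
    refine (Real.lt_log_iff_exp_lt hs0).2 ?_
    calc Real.exp 1 < 2.7182818286 := Real.exp_one_lt_d9
      _ < 3 := by norm_num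
      _ < s := hs3
  have hL0 : 0 < L := by linarith
  have hlogL : 0 < Real.log L := Real.log_pos hL1
  set a := ε * e1 with ha
  have hapos : 0 < a := mul_pos hε he1pos
  have ha1 : a < 1 := by nlinarith
  set P := L ^ a with hPdef
  have hP1 : 1 < P := by
    rw [hPdef]
    exact Real.one_lt_rpow_iff_of_pos hL0 |>.2 (Or.inl ⟨hL1, hapos⟩)
  set x := e1 * (Real.log L / L) with hx
  have hxpos : 0 < x := mul_pos he1pos (div_pos hlogL hL0)
  set c := 1 + e1 * x with hc
  -- t₀ folded by the sets above
  have ht₀def : t₀ = s * L ^ e1 := ht₀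
  clear_value c x P a L s v u e1
  have hc1 : 1 < c := by nlinarith
  -- t₀ facts
  have hLe1 : 1 ≤ L ^ e1 := Real.one_le_rpow hL1.le he1pos.le
  have ht₀pos : 0 < t₀ := by
    rw [ht₀def]; exact mul_pos hs0 (Real.rpow_pos_of_pos hL0 _)
  have hts : s ≤ t₀ := by
    rw [ht₀def]; exact le_mul_of_one_le_right hs0.le hLe1
  -- t₀ ^ ε = s * P / s ^ e1
  have hsε : s ^ ε = s / s ^ e1 := by
    rw [eq_div_iff (ne_of_gt hS1), ← Real.rpow_add hs0, hee1, Real.rpow_one]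
  have ht₀ε : t₀ ^ ε = s * P / s ^ e1 := by
    rw [ht₀def, Real.mul_rpow hs0.le (Real.rpow_nonneg hL0.le _),
      ← Real.rpow_mul hL0.le, mul_comm e1 ε, ← ha, ← hPdef, hsε]
    ring
  -- log t₀ / t₀ = L ^ ε * (1 + x) / s
  have hlt : Real.log t₀ = L * (1 + x) := by
    rw [ht₀def, Real.log_mul hs0.ne' (Real.rpow_pos_of_pos hL0 _).ne', Real.log_rpow hL0, ← hL, hx]
    field_simp
  have hLsum : L ^ ε * L ^ e1 = L := by
    rw [← Real.rpow_add hL0, hee1, Real.rpow_one]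
  have hlogdiv : Real.log t₀ / t₀ = L ^ ε * (1 + x) / s := by
    rw [hlt, ht₀def, div_eq_div_iff (mul_pos hs0 (Real.rpow_pos_of_pos hL0 _)).ne' hs0.ne']
    linear_combination (-(s * (1 + x))) * hLsum
  -- bound on first term
  have hX1 : (Real.log t₀ / t₀) ^ e1 ≤ P * c / s ^ e1 := by
    have h1x : (0:ℝ) ≤ 1 + x := by linarith
    have hrw : (Real.log t₀ / t₀) ^ e1 = P * (1 + x) ^ e1 / s ^ e1 := by
      rw [hlogdiv, Real.div_rpow (mul_nonneg (Real.rpow_nonneg hL0.le _) h1x) hs0.le,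
        Real.mul_rpow (Real.rpow_nonneg hL0.le _) h1x,
        ← Real.rpow_mul hL0.le, mul_comm ε e1, mul_comm e1 ε, ← ha, ← hPdef]
    rw [hrw]
    have hbern : (1 + x) ^ e1 ≤ 1 + e1 * x :=
      rpow_one_add_le_one_add_mul_self (by linarith) he1pos.le he1lt.le
    have : P * (1 + x) ^ e1 ≤ P * c := by
      rw [hc]
      exact mul_le_mul_of_nonneg_left hbern (by linarith)
    exact (div_le_div_iff_of_pos_right hS1).2 this
  -- bound on second term
  have hX2 : t₀⁻¹ ≤ P * c / s ^ e1 := by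
    rw [inv_eq_one_div, div_le_div_iff₀ ht₀pos hS1, one_mul]
    have hse : s ^ e1 ≤ s := by
      calc s ^ e1 ≤ s ^ (1:ℝ) :=
            Real.rpow_le_rpow_of_exponent_le (by linarith) he1lt.le
        _ = s := Real.rpow_one s
    have hPc : 1 ≤ P * c := by
      have := mul_le_mul hP1.le hc1.le zero_le_one (by linarith : (0:ℝ) ≤ P)
      linarith [this]
    calc s ^ e1 ≤ s := hse
      _ ≤ t₀ := hts
      _ = 1 * t₀ := (one_mul t₀).symm
      _ ≤ P * c * t₀ := mul_le_mul_of_nonneg_right hPc ht₀pos.le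
  -- bound on β
  have hβ' : β ≤ (v + e1 * u) / s ^ e1 := by
    rw [le_div_iff₀ hS1]
    have hvε : v ^ ε = β := by
      rw [hv, ← Real.rpow_mul hβ.le, one_div_mul_cancel hε.ne', Real.rpow_one]
    have hAM : v ^ ε * s ^ e1 ≤ ε * v + e1 * s :=
      Real.geom_mean_le_arith_mean2_weighted hε.le he1pos.le hvpos.le hs0.le hee1
    rw [← hvε]
    have : ε * v + e1 * s = v + e1 * u := by rw [hs, he1]; ring
    linarith
  -- the key elementary inequality
  have hy : a * Real.log L ≤ L - 1 := by
    have hlog : Real.log L ≤ L - 1 := Real.log_le_sub_one_of_pos hL0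
    have h5 : a * Real.log L ≤ 1 * Real.log L :=
      mul_le_mul_of_nonneg_right ha1.le hlogL.le
    linarith
  have hPexp : 1 + a * Real.log L ≤ P := by
    rw [hPdef, Real.rpow_def_of_pos hL0, mul_comm a (Real.log L)]
    linarith [Real.add_one_le_exp (Real.log L * a)]
  have key1 : L ≤ P * (L - a * Real.log L) := by
    have h6 : 0 ≤ (P - 1 - a * Real.log L) * (L - a * Real.log L) :=
      mul_nonneg (by linarith) (by linarith)
    have h7 : 0 ≤ (a * Real.log L) * (L - 1 - a * Real.log L) :=
      mul_nonneg (mul_nonneg hapos.le hlogL.le) (by linarith)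
    have hid6 : P * (L - a * Real.log L) - L
        = (P - 1 - a * Real.log L) * (L - a * Real.log L)
          + (a * Real.log L) * (L - 1 - a * Real.log L) := by ring
    linarith
  have h2 : 1 ≤ P * (1 - a * (Real.log L / L)) := by
    have hrw : P * (1 - a * (Real.log L / L)) = P * (L - a * Real.log L) / L := by
      field_simp
    rw [hrw, le_div_iff₀ hL0, one_mul]
    exact key1
  have h1 : e1 ≤ P * (1 - ε * c) := by
    have hid : 1 - ε * c = e1 * (1 - a * (Real.log L / L)) := by
      rw [hc, hx, ha, he1]; ring
    calc e1 = e1 * 1 := by ring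
      _ ≤ e1 * (P * (1 - a * (Real.log L / L))) :=
          mul_le_mul_of_nonneg_left h2 he1pos.le
      _ = P * (1 - ε * c) := by rw [hid]; ring
  -- the main numeric inequality
  have hmain : 0 < s * P - α * c * P - (v + e1 * u) := by
    have hsplit : s * P - α * c * P - (v + e1 * u)
        = u * (P * (1 - ε * c) - e1) + v * (P - 1) := by
      rw [hαu, hs]; ring
    rw [hsplit]
    have h3 : 0 ≤ u * (P * (1 - ε * c) - e1) := mul_nonneg hupos.le (by linarith)
    have h4 : 0 < v * (P - 1) := mul_pos hvpos (by linarith)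
    linarith
  -- put everything together
  have hfin : 0 < (s * P - α * c * P - (v + e1 * u)) / s ^ e1 := div_pos hmain hS1
  have hsplit2 : (s * P - α * c * P - (v + e1 * u)) / s ^ e1
      = s * P / s ^ e1 - (α₁ * (P * c / s ^ e1) + α₂ * (P * c / s ^ e1))
        - (v + e1 * u) / s ^ e1 := by
    rw [hα_def]; field_simp
  have hA : α₁ * (Real.log t₀ / t₀) ^ e1 ≤ α₁ * (P * c / s ^ e1) :=
    mul_le_mul_of_nonneg_left hX1 hα₁.le
  have hB : α₂ * t₀⁻¹ ≤ α₂ * (P * c / s ^ e1) :=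
    mul_le_mul_of_nonneg_left hX2 hα₂.le
  rw [ht₀ε]
  linarith [hfin, hsplit2.symm.le]
end

section
/- Let a : ℕ → E be a perceptron update sequence. Then for every t ∈ ℕ one has ‖a_t‖ ≥ ⟨a_t, u⟩ ≥ γ_d·t. -/
open scoped RealInnerProductSpace

/-- for a perceptron update sequence, ‖a_t‖ ≥ ⟨a_t, u⟩ ≥ γ_d·t. -/
theorem stmt5 {E : Type*} [NormedAddCommGroup E] [InnerProductSpace ℝ E]
    {n : ℕ} (hn : 0 < n) (y : Fin n → E)
    (u : E) (hu : ‖u‖ = 1) (γd : ℝ) (hγd : 0 < γd)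
    (hmargin : ∀ k : Fin n, γd ≤ ⟪u, y k⟫)
    (a : ℕ → E) (ha0 : a 0 = 0)
    (hupd : ∀ t : ℕ, ∃ k : Fin n, a (t + 1) = a t + y k) :
    ∀ t : ℕ, γd * t ≤ ⟪a t, u⟫ ∧ ⟪a t, u⟫ ≤ ‖a t‖ := by
  have key : ∀ t : ℕ, γd * t ≤ ⟪a t, u⟫ := by
    intro t
    induction t with
    | zero => simp [ha0]
    | succ t ih =>
      obtain ⟨k, hk⟩ := hupd t
      rw [hk, inner_add_left]
      have := hmargin k
      rw [real_inner_comm] at this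
      push_cast
      ring_nf
      nlinarith
  intro t
  refine ⟨key t, ?_⟩
  calc ⟪a t, u⟫ ≤ ‖a t‖ * ‖u‖ := real_inner_le_norm _ _
    _ = ‖a t‖ := by rw [hu, mul_one]
end

section
/- Let 0 < ε ≤ 1, b > 0, and let a : ℕ → E be a t-margitron run of length T. Then for every t ≤ T it holds that ‖a_t‖² ≤ R²·t + (2/(2−ε))·b·t^(2−ε). -/
open scoped RealInnerProductSpace

lemma key_rpow (t : ℕ) (ht : 1 ≤ t) {ε : ℝ} (hε : 0 < ε) (hε1 : ε ≤ 1) :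
    (t : ℝ) ^ (2 - ε) + (2 - ε) * (t : ℝ) ^ (1 - ε) ≤ ((t : ℝ) + 1) ^ (2 - ε) := by
  have htpos : (0:ℝ) < t := by exact_mod_cast ht
  have hp : (1:ℝ) ≤ 2 - ε := by linarith
  have hz : (-1:ℝ) ≤ 1 / t := by
    have : (0:ℝ) ≤ 1 / t := by positivity
    linarith
  have h := one_add_mul_self_le_rpow_one_add hz hp
  have htp : (0:ℝ) < (t:ℝ) ^ (2 - ε) := Real.rpow_pos_of_pos htpos _
  have hmul := mul_le_mul_of_nonneg_left h htp.le
  have h1 : (t:ℝ) ^ (2 - ε) * (1 + 1/t) ^ (2 - ε) = ((t:ℝ) + 1) ^ (2 - ε) := by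
    rw [← Real.mul_rpow htpos.le (by positivity)]
    congr 1
    field_simp
  have hmulpow : (t:ℝ) ^ (1 - ε) * (t:ℝ) = (t:ℝ) ^ (2 - ε) := by
    have h := Real.rpow_add htpos (1 - ε) 1
    rw [Real.rpow_one] at h
    rw [← h]
    congr 1
    ring
  have h2 : (t:ℝ) ^ (2 - ε) * (1 + (2 - ε) * (1/t))
      = (t:ℝ) ^ (2 - ε) + (2 - ε) * (t : ℝ) ^ (1 - ε) := by
    have ht0 : (t:ℝ) ≠ 0 := htpos.ne'
    field_simp
    linear_combination (ε - 2) * hmulpow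
  rw [h1, h2] at hmul
  exact hmul

/-- for a t-margitron run of length T with 0 < ε ≤ 1, b > 0,
‖a_t‖² ≤ R²·t + (2/(2−ε))·b·t^(2−ε) for all t ≤ T. -/
theorem stmt6 {E : Type*} [NormedAddCommGroup E] [InnerProductSpace ℝ E]
    {n : ℕ} (hn : 0 < n) (y : Fin n → E)
    (R : ℝ) (hR : IsGreatest (Set.range (fun k : Fin n => ‖y k‖)) R)
    (u : E) (hu : ‖u‖ = 1) (γd : ℝ) (hγd : 0 < γd)
    (hmargin : ∀ k : Fin n, γd ≤ ⟪u, y k⟫)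
    (ε b : ℝ) (hε : 0 < ε) (hε1 : ε ≤ 1) (hb : 0 < b)
    (T : ℕ) (a : ℕ → E) (ha0 : a 0 = 0)
    (hrun : ∀ t : ℕ, t < T → ∃ k : Fin n, a (t + 1) = a t + y k ∧
      ⟪a t, y k⟫ ≤ if t = 0 then 0 else b * (t : ℝ) ^ (1 - ε)) :
    ∀ t : ℕ, t ≤ T →
      ‖a t‖ ^ 2 ≤ R ^ 2 * t + (2 / (2 - ε)) * b * (t : ℝ) ^ (2 - ε) := by
  have hyR : ∀ k : Fin n, ‖y k‖ ≤ R := fun k => hR.2 ⟨k, rfl⟩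
  have hR0 : 0 ≤ R := le_trans (norm_nonneg _) (hyR ⟨0, hn⟩)
  have h2ε : (0:ℝ) < 2 - ε := by linarith
  have hc : (0:ℝ) < 2 / (2 - ε) := by positivity
  intro t
  induction t with
  | zero =>
    intro _
    simp [ha0, Real.zero_rpow (ne_of_gt (by linarith : (0:ℝ) < 2 - ε))]
  | succ t ih =>
    intro hlt
    have htT : t < T := Nat.lt_of_succ_le hlt
    have iht := ih (le_of_lt htT)
    obtain ⟨k, heq, hip⟩ := hrun t htT
    have hnorm : ‖a (t+1)‖ ^ 2 = ‖a t‖ ^ 2 + 2 * ⟪a t, y k⟫ + ‖y k‖ ^ 2 := by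
      rw [heq]; exact norm_add_sq_real _ _
    have hy2 : ‖y k‖ ^ 2 ≤ R ^ 2 := by
      have := hyR k
      nlinarith [norm_nonneg (y k)]
    rcases Nat.eq_zero_or_pos t with rfl | ht1
    · simp only [if_pos rfl] at hip
      have h1 : ‖a (0+1)‖ ^ 2 ≤ R ^ 2 := by
        have h0 : ⟪(0:E), y k⟫ = (0:ℝ) := inner_zero_left _
        rw [hnorm, ha0, h0]
        simpa using hy2
      norm_num [Real.one_rpow]
      nlinarith
    · have hkey := key_rpow t ht1 hε hε1
      have hip' : ⟪a t, y k⟫ ≤ b * (t : ℝ) ^ (1 - ε) := by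
        simpa [ht1.ne'] using hip
      have hstep : (2 / (2 - ε)) * b * (t : ℝ) ^ (2 - ε) + 2 * (b * (t : ℝ) ^ (1 - ε))
          ≤ (2 / (2 - ε)) * b * ((t : ℝ) + 1) ^ (2 - ε) := by
        have h3 : (2:ℝ) * (b * (t : ℝ) ^ (1 - ε))
            = (2 / (2 - ε)) * b * ((2 - ε) * (t : ℝ) ^ (1 - ε)) := by
          field_simp
        rw [h3, ← mul_add]
        have hcb : (0:ℝ) ≤ 2 / (2 - ε) * b := by positivity
        exact mul_le_mul_of_nonneg_left hkey hcb
      rw [hnorm]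
      push_cast
      nlinarith
end

section
/- Let 0 < ε ≤ 1, b > 0, and let a : ℕ → E be a t-margitron run of length T. Then T ≤ (1/ε)·R²/γ_d² + ((2/(2−ε))·b/γ_d²)^(1/ε). -/
open scoped RealInnerProductSpace

/-- Bernoulli-type bound: `(2-ε)·t^(1-ε) + t^(2-ε) ≤ (t+1)^(2-ε)` for `t ≥ 1`. -/
lemma aux_bernoulli {ε : ℝ} (hε : 0 < ε) (hε1 : ε ≤ 1) {t : ℝ} (ht : 1 ≤ t) :
    (2 - ε) * t ^ (1 - ε) + t ^ (2 - ε) ≤ (t + 1) ^ (2 - ε) := by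
  have ht0 : 0 < t := lt_of_lt_of_le zero_lt_one ht
  have hs : (-1:ℝ) ≤ 1 / t := by
    have : (0:ℝ) ≤ 1 / t := by positivity
    linarith
  have hp : (1:ℝ) ≤ 2 - ε := by linarith
  have hb := one_add_mul_self_le_rpow_one_add hs hp
  have hmul := mul_le_mul_of_nonneg_left hb (Real.rpow_nonneg ht0.le (2 - ε))
  have h1 : t ^ (2 - ε) * (1 + 1 / t) ^ (2 - ε) = (t + 1) ^ (2 - ε) := by
    rw [← Real.mul_rpow ht0.le (by positivity)]
    congr 1
    field_simp
  have h2 : t ^ (2 - ε) * (1 / t) = t ^ (1 - ε) := by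
    have : t ^ (2 - ε) = t ^ (1 - ε) * t := by
      have h := Real.rpow_add ht0 (1 - ε) 1
      rw [Real.rpow_one] at h
      rw [show (2:ℝ) - ε = (1 - ε) + 1 by ring, h]
    rw [this]
    field_simp
  calc (2 - ε) * t ^ (1 - ε) + t ^ (2 - ε)
      = t ^ (2 - ε) * (1 + (2 - ε) * (1 / t)) := by rw [mul_add, mul_one, ← mul_assoc,
        mul_comm (t ^ (2 - ε)) (2 - ε), mul_assoc, h2]; ring
    _ ≤ t ^ (2 - ε) * (1 + 1 / t) ^ (2 - ε) := hmul
    _ = (t + 1) ^ (2 - ε) := h1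

lemma aux_sum {ε : ℝ} (hε : 0 < ε) (hε1 : ε ≤ 1) (T : ℕ) :
    ∑ s ∈ Finset.range T, (if s = 0 then (0:ℝ) else (s : ℝ) ^ (1 - ε))
      ≤ (T : ℝ) ^ (2 - ε) / (2 - ε) := by
  have h2ε : (0:ℝ) < 2 - ε := by linarith
  induction T with
  | zero => simp [Real.zero_rpow h2ε.ne']
  | succ t ih =>
    rw [Finset.sum_range_succ]
    rcases Nat.eq_zero_or_pos t with rfl | ht
    · simp only [if_pos rfl, Finset.range_zero, Finset.sum_empty, zero_add, Nat.cast_one,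
        Nat.zero_add, Real.one_rpow]
      exact div_nonneg zero_le_one h2ε.le
    · have ht1 : (1:ℝ) ≤ (t:ℝ) := by exact_mod_cast ht
      rw [if_neg (by omega)]
      have hb := aux_bernoulli hε hε1 ht1
      have : (t:ℝ) ^ (1 - ε) ≤ ((t:ℝ) + 1) ^ (2 - ε) / (2 - ε) - (t:ℝ) ^ (2 - ε) / (2 - ε) := by
        rw [div_sub_div_same, le_div_iff₀ h2ε]
        linarith
      push_cast
      linarith


/-- a t-margitron run of length T with 0 < ε ≤ 1, b > 0 satisfies
T ≤ (1/ε)·R²/γ_d² + ((2/(2−ε))·b/γ_d²)^(1/ε). -/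
theorem stmt7 {E : Type*} [NormedAddCommGroup E] [InnerProductSpace ℝ E]
    {n : ℕ} (hn : 0 < n) (y : Fin n → E)
    (R : ℝ) (hR : IsGreatest (Set.range (fun k : Fin n => ‖y k‖)) R)
    (u : E) (hu : ‖u‖ = 1) (γd : ℝ) (hγd : 0 < γd)
    (hmargin : ∀ k : Fin n, γd ≤ ⟪u, y k⟫)
    (ε b : ℝ) (hε : 0 < ε) (hε1 : ε ≤ 1) (hb : 0 < b)
    (T : ℕ) (a : ℕ → E) (ha0 : a 0 = 0)
    (hrun : ∀ t : ℕ, t < T → ∃ k : Fin n, a (t + 1) = a t + y k ∧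
      ⟪a t, y k⟫ ≤ if t = 0 then 0 else b * (t : ℝ) ^ (1 - ε)) :
    (T : ℝ) ≤ (1 / ε) * (R ^ 2 / γd ^ 2) + ((2 / (2 - ε)) * b / γd ^ 2) ^ (1 / ε) := by
  have h2ε : (0:ℝ) < 2 - ε := by linarith
  have hR0 : 0 ≤ R := by
    obtain ⟨k, hk⟩ := hR.1
    exact hk ▸ norm_nonneg _
  have hRk : ∀ k : Fin n, ‖y k‖ ≤ R := fun k => hR.2 ⟨k, rfl⟩
  set B : ℝ := 2 * b / ((2 - ε) * γd ^ 2) with hB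
  have hBpos : 0 < B := by positivity
  have hBeq : (2 / (2 - ε)) * b / γd ^ 2 = B := by
    rw [hB, div_mul_eq_mul_div, div_div]
  rw [hBeq]
  have hrhs : 0 ≤ (1 / ε) * (R ^ 2 / γd ^ 2) + B ^ (1 / ε) := by
    have h1 : (0:ℝ) ≤ B ^ (1 / ε) := Real.rpow_nonneg hBpos.le _
    have h2 : (0:ℝ) ≤ (1 / ε) * (R ^ 2 / γd ^ 2) := by positivity
    linarith
  rcases Nat.eq_zero_or_pos T with rfl | hT
  · simpa using hrhs
  -- lower bound on ⟪u, a t⟫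
  have hlow : ∀ t, t ≤ T → (t : ℝ) * γd ≤ ⟪u, a t⟫ := by
    intro t
    induction t with
    | zero => intro _; simp [ha0]
    | succ t ih =>
      intro ht
      obtain ⟨k, hk, -⟩ := hrun t (by omega)
      have h1 := ih (by omega)
      have h2 := hmargin k
      rw [hk, inner_add_right]
      push_cast
      linarith
  -- upper bound on ‖a t‖²
  have hup : ∀ t, t ≤ T → ‖a t‖ ^ 2 ≤ (t : ℝ) * R ^ 2 +
      2 * b * ∑ s ∈ Finset.range t, (if s = 0 then (0:ℝ) else (s : ℝ) ^ (1 - ε)) := by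
    intro t
    induction t with
    | zero => intro _; simp [ha0]
    | succ t ih =>
      intro ht
      obtain ⟨k, hk, hmis⟩ := hrun t (by omega)
      have h1 := ih (by omega)
      have h2 : ‖y k‖ ^ 2 ≤ R ^ 2 := by
        have := hRk k
        nlinarith [norm_nonneg (y k)]
      rw [hk, @norm_add_sq_real, Finset.sum_range_succ]
      have h3 : 2 * ⟪a t, y k⟫ ≤ 2 * b * (if t = 0 then (0:ℝ) else (t : ℝ) ^ (1 - ε)) := by
        rcases eq_or_ne t 0 with rfl | h0
        · norm_num at hmis ⊢; linarith
        · simp only [if_neg h0] at hmis ⊢; linarith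
      push_cast
      linarith
  -- combine at time T
  have hTnorm : (T : ℝ) * γd ≤ ‖a T‖ := by
    have h1 := hlow T le_rfl
    have h2 := real_inner_le_norm u (a T)
    rw [hu, one_mul] at h2
    linarith
  have hTnn : (0:ℝ) ≤ (T : ℝ) * γd := by positivity
  have hsq : ((T:ℝ) * γd) ^ 2 ≤ ‖a T‖ ^ 2 := by nlinarith [norm_nonneg (a T)]
  have hsum := aux_sum hε hε1 T
  have hkey : (T:ℝ) ^ 2 * γd ^ 2 ≤ (T:ℝ) * R ^ 2 + (2 * b / (2 - ε)) * (T:ℝ) ^ (2 - ε) := by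
    have h5 := hup T le_rfl
    have h4 : 2 * b * ∑ s ∈ Finset.range T, (if s = 0 then (0:ℝ) else (s : ℝ) ^ (1 - ε))
        ≤ 2 * b * ((T:ℝ) ^ (2 - ε) / (2 - ε)) :=
      mul_le_mul_of_nonneg_left hsum (by positivity)
    have h6 : 2 * b * ((T:ℝ) ^ (2 - ε) / (2 - ε)) = (2 * b / (2 - ε)) * (T:ℝ) ^ (2 - ε) := by
      ring
    have h7 : ((T:ℝ) * γd) ^ 2 = (T:ℝ) ^ 2 * γd ^ 2 := by ring
    linarith
  have hT1 : (1:ℝ) ≤ (T:ℝ) := by exact_mod_cast hT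
  have hTpos : (0:ℝ) < (T:ℝ) := by linarith
  have hsplit : (T:ℝ) ^ (2 - ε) = (T:ℝ) * (T:ℝ) ^ (1 - ε) := by
    have h := Real.rpow_add hTpos (1 - ε) 1
    rw [Real.rpow_one] at h
    rw [show (2:ℝ) - ε = (1 - ε) + 1 by ring, h, mul_comm]
  have hlin : (T:ℝ) * γd ^ 2 ≤ R ^ 2 + (2 * b / (2 - ε)) * (T:ℝ) ^ (1 - ε) := by
    rw [← mul_le_mul_iff_right₀ hTpos]
    calc (T:ℝ) * ((T:ℝ) * γd ^ 2) = (T:ℝ) ^ 2 * γd ^ 2 := by ring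
      _ ≤ (T:ℝ) * R ^ 2 + (2 * b / (2 - ε)) * ((T:ℝ) * (T:ℝ) ^ (1 - ε)) := by
          rw [← hsplit]; exact hkey
      _ = (T:ℝ) * (R ^ 2 + (2 * b / (2 - ε)) * (T:ℝ) ^ (1 - ε)) := by ring
  have hγ2 : (0:ℝ) < γd ^ 2 := by positivity
  have hAB : (T:ℝ) ≤ R ^ 2 / γd ^ 2 + B * (T:ℝ) ^ (1 - ε) := by
    rw [← mul_le_mul_iff_left₀ hγ2]
    have hexp : (R ^ 2 / γd ^ 2 + B * (T:ℝ) ^ (1 - ε)) * γd ^ 2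
        = R ^ 2 + (2 * b / (2 - ε)) * (T:ℝ) ^ (1 - ε) := by
      rw [hB]
      field_simp
    rw [hexp]; exact hlin
  rcases eq_or_lt_of_le hε1 with rfl | hεlt
  · rw [show (1:ℝ) - 1 = 0 by ring, Real.rpow_zero, mul_one] at hAB
    rw [show (1:ℝ)/1 = 1 by norm_num, one_mul, Real.rpow_one]
    exact hAB
  · have hconj : (1 / (1 - ε)).HolderConjugate (1 / ε) := by
      rw [Real.holderConjugate_iff]
      constructor
      · rw [lt_div_iff₀ (by linarith)]; linarith
      · rw [one_div, one_div, inv_inv, inv_inv]; ring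
    have hyoung := Real.young_inequality_of_nonneg
      (Real.rpow_nonneg hTpos.le (1 - ε)) hBpos.le hconj
    have hTexp : ((T:ℝ) ^ (1 - ε)) ^ (1 / (1 - ε)) = (T:ℝ) := by
      rw [← Real.rpow_mul hTpos.le, mul_one_div,
        div_self (show (1:ℝ) - ε ≠ 0 by linarith), Real.rpow_one]
    rw [hTexp, show ((T:ℝ)) / (1/(1-ε)) = (T:ℝ) * (1-ε) from by rw [one_div, div_inv_eq_mul],
      show B ^ (1/ε) / (1/ε) = B ^ (1/ε) * ε from by rw [one_div, div_inv_eq_mul]] at hyoung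
    -- hyoung : T^(1-ε) * B ≤ T * (1-ε) + B^(1/ε) * ε
    have h7 : ε * (T:ℝ) ≤ R ^ 2 / γd ^ 2 + ε * B ^ (1 / ε) := by nlinarith
    have h8 : (T:ℝ) ≤ (R ^ 2 / γd ^ 2 + ε * B ^ (1 / ε)) / ε := by
      rw [le_div_iff₀ hε]; linarith
    have heq : (R ^ 2 / γd ^ 2 + ε * B ^ (1 / ε)) / ε
        = 1 / ε * (R ^ 2 / γd ^ 2) + B ^ (1 / ε) := by
      field_simp
    rw [heq] at h8
    exact h8
end

section
/- Let 0 < ε ≤ 1, b > 0, and let a : ℕ → E be a t-margitron run of length t_c ≥ 1 that has converged after t_c updates, i.e. ⟨a_{t_c}, y_k⟩ > b·t_c^(1−ε) for every k ∈ {1, …, n}. Then a_{t_c} ≠ 0 and the achieved directional margin γ'_d := min_k ⟨a_{t_c}/‖a_{t_c}‖, y_k⟩ satisfies γ'_d/γ_d ≥ (R²/b + 2/(2−ε))^(−1). -/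
open scoped RealInnerProductSpace

/-- Bernoulli-type bound: for `1 ≤ c` and `1 ≤ x`, `x ^ c + c * x ^ (c - 1) ≤ (x + 1) ^ c`. -/
lemma stmt8_bern {c x : ℝ} (hc : 1 ≤ c) (hx : 1 ≤ x) :
    x ^ c + c * x ^ (c - 1) ≤ (x + 1) ^ c := by
  have hx0 : (0 : ℝ) < x := lt_of_lt_of_le one_pos hx
  have hs : (-1 : ℝ) ≤ 1 / x := by
    have : (0:ℝ) ≤ 1 / x := by positivity
    linarith
  have hB : 1 + c * (1 / x) ≤ (1 + 1 / x) ^ c :=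
    one_add_mul_self_le_rpow_one_add hs hc
  have hkey : x ^ c * (1 + c * (1 / x)) ≤ x ^ c * (1 + 1 / x) ^ c :=
    mul_le_mul_of_nonneg_left hB (Real.rpow_nonneg hx0.le c)
  have h1 : x ^ c * (1 + 1 / x) ^ c = (x + 1) ^ c := by
    rw [← Real.mul_rpow hx0.le (by positivity)]
    congr 1
    field_simp
  have h2 : x ^ c * (1 + c * (1 / x)) = x ^ c + c * x ^ (c - 1) := by
    have : x ^ (c - 1) = x ^ c * x⁻¹ := by
      rw [← Real.rpow_neg_one x, ← Real.rpow_add hx0]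
      ring_nf
    rw [this]; field_simp
  rw [h1] at hkey
  rw [h2] at hkey
  exact hkey

set_option maxHeartbeats 1000000 in
/-- a converged t-margitron run with 0 < ε ≤ 1 achieves
γ'_d/γ_d ≥ (R²/b + 2/(2−ε))⁻¹, and a_{t_c} ≠ 0. -/
theorem stmt8 {E : Type*} [NormedAddCommGroup E] [InnerProductSpace ℝ E]
    {n : ℕ} (hn : 0 < n) (y : Fin n → E)
    (R : ℝ) (hR : IsGreatest (Set.range (fun k : Fin n => ‖y k‖)) R)
    (u : E) (hu : ‖u‖ = 1) (γd : ℝ) (hγd : 0 < γd)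
    (hmargin : ∀ k : Fin n, γd ≤ ⟪u, y k⟫)
    (ε b : ℝ) (hε : 0 < ε) (hε1 : ε ≤ 1) (hb : 0 < b)
    (tc : ℕ) (htc : 1 ≤ tc) (a : ℕ → E) (ha0 : a 0 = 0)
    (hrun : ∀ t : ℕ, t < tc → ∃ k : Fin n, a (t + 1) = a t + y k ∧
      ⟪a t, y k⟫ ≤ if t = 0 then 0 else b * (t : ℝ) ^ (1 - ε))
    (hconv : ∀ k : Fin n, b * (tc : ℝ) ^ (1 - ε) < ⟪a tc, y k⟫) :
    a tc ≠ 0 ∧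
    (Finset.univ.inf' (Finset.univ_nonempty_iff.mpr ⟨⟨0, hn⟩⟩)
        (fun k : Fin n => ⟪(‖a tc‖)⁻¹ • a tc, y k⟫)) / γd ≥
      (R ^ 2 / b + 2 / (2 - ε))⁻¹ := by
  have h2ε : (1 : ℝ) ≤ 2 - ε := by linarith
  have h2ε0 : (0 : ℝ) < 2 - ε := by linarith
  -- bound on ‖y k‖ and R
  have hyR : ∀ k : Fin n, ‖y k‖ ≤ R := fun k => hR.2 ⟨k, rfl⟩
  have hR0 : 0 < R := by
    obtain ⟨k, hk⟩ := hR.1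
    have h1 : γd ≤ ⟪u, y k⟫ := hmargin k
    have h2 : ⟪u, y k⟫ ≤ ‖u‖ * ‖y k‖ := real_inner_le_norm u (y k)
    rw [hu, one_mul] at h2
    simp only at hk
    linarith
  -- uniform misclassification bound
  have hmis : ∀ t : ℕ, t < tc → ∃ k : Fin n, a (t + 1) = a t + y k ∧
      ⟪a t, y k⟫ ≤ b * (t : ℝ) ^ (1 - ε) := by
    intro t ht
    obtain ⟨k, hk1, hk2⟩ := hrun t ht
    refine ⟨k, hk1, ?_⟩
    rcases eq_or_ne t 0 with rfl | h
    · simp only [if_pos rfl] at hk2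
      exact hk2.trans (by positivity)
    · simpa [h] using hk2
  -- main induction
  have key : ∀ t : ℕ, t ≤ tc →
      γd * t ≤ ⟪u, a t⟫ ∧ ‖a t‖ ^ 2 ≤ R ^ 2 * t + (2 * b / (2 - ε)) * (t : ℝ) ^ (2 - ε) := by
    intro t
    induction t with
    | zero =>
      intro _
      constructor
      · simp [ha0]
      · simp [ha0]
        positivity
    | succ t ih =>
      intro ht
      have ht' : t < tc := Nat.lt_of_succ_le ht
      obtain ⟨ih1, ih2⟩ := ih (le_of_lt ht')
      obtain ⟨k, hk1, hk2⟩ := hmis t ht'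
      constructor
      · rw [hk1, inner_add_right]
        push_cast
        have := hmargin k
        linarith [hmargin k]
      · rw [hk1, @norm_add_sq_real]
        have hy2 : ‖y k‖ ^ 2 ≤ R ^ 2 := by
          have := hyR k
          nlinarith [norm_nonneg (y k)]
        have hstep : (2 * b / (2 - ε)) * (t : ℝ) ^ (2 - ε) + 2 * (b * (t : ℝ) ^ (1 - ε)) ≤
            (2 * b / (2 - ε)) * ((t : ℝ) + 1) ^ (2 - ε) := by
          rcases Nat.eq_zero_or_pos t with h0 | h0
          · subst h0
            push_cast
            have hz : 2 * (b * (0:ℝ) ^ (1 - ε)) ≤ 2 * b / (2 - ε) := by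
              rcases lt_or_eq_of_le hε1 with h | h
              · rw [Real.zero_rpow (by linarith : (1:ℝ) - ε ≠ 0)]
                rw [mul_zero, mul_zero]
                positivity
              · subst h
                norm_num
            rw [Real.zero_rpow (by linarith : (2:ℝ) - ε ≠ 0), zero_add, Real.one_rpow,
              mul_zero, zero_add, mul_one]
            exact hz
          · have hx : (1 : ℝ) ≤ (t : ℝ) := by exact_mod_cast h0
            have hbern := stmt8_bern h2ε hx
            have hsub : (2 : ℝ) - ε - 1 = 1 - ε := by ring
            rw [hsub] at hbern
            have hmul : (2 * b / (2 - ε)) * ((t : ℝ) ^ (2 - ε) + (2 - ε) * (t : ℝ) ^ (1 - ε)) ≤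
                (2 * b / (2 - ε)) * ((t : ℝ) + 1) ^ (2 - ε) := by
              apply mul_le_mul_of_nonneg_left hbern
              positivity
            have heq : (2 * b / (2 - ε)) * ((t : ℝ) ^ (2 - ε) + (2 - ε) * (t : ℝ) ^ (1 - ε)) =
                (2 * b / (2 - ε)) * (t : ℝ) ^ (2 - ε) + 2 * (b * (t : ℝ) ^ (1 - ε)) := by
              field_simp
            linarith [heq ▸ hmul]
        push_cast
        nlinarith [hk2]
  obtain ⟨hkey1, hkey2⟩ := key tc le_rfl
  have hT1 : (1 : ℝ) ≤ (tc : ℝ) := by exact_mod_cast htc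
  have hT0 : (0 : ℝ) < (tc : ℝ) := by linarith
  -- a tc ≠ 0
  have hinner_pos : 0 < ⟪u, a tc⟫ := lt_of_lt_of_le (by positivity) hkey1
  have hane : a tc ≠ 0 := by
    intro h
    rw [h, inner_zero_right] at hinner_pos
    exact lt_irrefl 0 hinner_pos
  refine ⟨hane, ?_⟩
  have hN0 : 0 < ‖a tc‖ := norm_pos_iff.mpr hane
  -- γd * tc ≤ ‖a tc‖
  have hγN : γd * (tc : ℝ) ≤ ‖a tc‖ := by
    have h2 : ⟪u, a tc⟫ ≤ ‖u‖ * ‖a tc‖ := real_inner_le_norm u (a tc)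
    rw [hu, one_mul] at h2
    linarith
  set N := ‖a tc‖ with hN
  set T := (tc : ℝ) with hTdef
  set C : ℝ := R ^ 2 + 2 * b / (2 - ε) with hC
  set m := Finset.univ.inf' (Finset.univ_nonempty_iff.mpr ⟨⟨0, hn⟩⟩)
      (fun k : Fin n => ⟪N⁻¹ • a tc, y k⟫) with hm
  clear_value N T C m
  have hC0 : 0 < C := by rw [hC]; positivity
  have hTle : T ≤ T ^ (2 - ε) := by
    calc T = T ^ (1 : ℝ) := (Real.rpow_one T).symm
    _ ≤ T ^ (2 - ε) := Real.rpow_le_rpow_of_exponent_le hT1 h2ε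
  have hP0 : (0 : ℝ) < T ^ (2 - ε) := Real.rpow_pos_of_pos hT0 _
  have hQ0 : (0 : ℝ) < T ^ (1 - ε) := Real.rpow_pos_of_pos hT0 _
  have hN2 : N ^ 2 ≤ C * T ^ (2 - ε) := by
    have h1 : R ^ 2 * T ≤ R ^ 2 * T ^ (2 - ε) := by nlinarith
    have h2 : C * T ^ (2 - ε) = R ^ 2 * T ^ (2 - ε) + (2 * b / (2 - ε)) * T ^ (2 - ε) := by
      rw [hC]; ring
    linarith [hkey2]
  have hinf : b * T ^ (1 - ε) / N ≤ m := by
    rw [hm]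
    apply Finset.le_inf'
    intro k _
    calc b * T ^ (1 - ε) / N = N⁻¹ * (b * T ^ (1 - ε)) := by rw [div_eq_inv_mul]
    _ ≤ N⁻¹ * ⟪a tc, y k⟫ :=
        mul_le_mul_of_nonneg_left (hconv k).le (inv_nonneg.mpr hN0.le)
    _ = ⟪N⁻¹ • a tc, y k⟫ := (real_inner_smul_left _ _ _).symm
  have hTT : T ^ (1 - ε) * T = T ^ (2 - ε) := by
    have he : (1 - ε) + 1 = 2 - ε := by ring
    rw [← he, Real.rpow_add hT0, Real.rpow_one]
  have hsum : R ^ 2 / b + 2 / (2 - ε) = C / b := by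
    rw [hC, eq_div_iff hb.ne', add_mul, div_mul_cancel₀ _ hb.ne', div_mul_eq_mul_div]
  have hconst : (R ^ 2 / b + 2 / (2 - ε))⁻¹ = b / C := by
    rw [hsum, inv_div]
  rw [hconst, ge_iff_le, div_le_div_iff₀ hC0 hγd]
  -- b * γd ≤ m * C
  have h1 : b * γd ≤ b * N / T := by
    rw [le_div_iff₀ hT0]
    nlinarith [hγN]
  have h2 : b * N / T ≤ b * T ^ (1 - ε) / N * C := by
    rw [div_mul_eq_mul_div, div_le_div_iff₀ hT0 hN0]
    have heq : b * T ^ (1 - ε) * C * T = b * C * T ^ (2 - ε) := by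
      rw [← hTT]; ring
    rw [heq]
    nlinarith [hN2]
  have h3 : b * T ^ (1 - ε) / N * C ≤ m * C :=
    mul_le_mul_of_nonneg_right hinf hC0.le
  linarith only [h1, h2, h3]
end

section
/- Let 0 < ε ≤ 1, b > 0, and let a : ℕ → E be a t-margitron run of length t_c ≥ 1 that has converged after t_c updates, i.e. ⟨a_{t_c}, y_k⟩ > b·t_c^(1−ε) for every k ∈ {1, …, n}. Then the achieved directional margin γ'_d := min_k ⟨a_{t_c}/‖a_{t_c}‖, y_k⟩ satisfies the after-running estimate γ'_d/γ_d ≥ ((R²/b)·t_c^(ε−1) + 2/(2−ε))^(−1). -/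
open scoped RealInnerProductSpace

lemma sumpow_le {ε : ℝ} (hε : 0 < ε) (hε1 : ε ≤ 1) (t : ℕ) :
    ∑ s ∈ Finset.Ico 1 t, (s : ℝ) ^ (1 - ε) ≤ (t : ℝ) ^ (2 - ε) / (2 - ε) := by
  have h2ε : (0:ℝ) < 2 - ε := by linarith
  induction t with
  | zero => simp [Real.zero_rpow (by linarith : (2:ℝ) - ε ≠ 0)]
  | succ t ih =>
    rcases Nat.eq_zero_or_pos t with rfl | ht
    · simp only [Nat.zero_add, Finset.Ico_self, Finset.sum_empty, Nat.cast_one,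
        Real.one_rpow]
      positivity
    · have ht0 : (0:ℝ) < t := by exact_mod_cast ht
      rw [Finset.sum_Ico_succ_top (by omega)]
      have hbern : 1 + (2 - ε) * (1 / (t:ℝ)) ≤ (1 + 1/(t:ℝ)) ^ (2 - ε) :=
        one_add_mul_self_le_rpow_one_add (by nlinarith [one_div_pos.mpr ht0]) (by linarith)
      have hmul := mul_le_mul_of_nonneg_left hbern
        (Real.rpow_nonneg ht0.le (2 - ε))
      have hrhs : (t:ℝ) ^ (2 - ε) * (1 + 1/(t:ℝ)) ^ (2 - ε) = ((t:ℝ) + 1) ^ (2 - ε) := by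
        rw [← Real.mul_rpow ht0.le (by positivity)]
        congr 1
        field_simp
      have hdiv : (t:ℝ) ^ (2 - ε) * (1 / (t:ℝ)) = (t:ℝ) ^ (1 - ε) := by
        have h := Real.rpow_add ht0 (1 - ε) 1
        rw [Real.rpow_one, show (1:ℝ) - ε + 1 = 2 - ε by ring] at h
        rw [h]
        field_simp
      have key : (t:ℝ) ^ (2 - ε) + (2 - ε) * (t:ℝ) ^ (1 - ε) ≤ ((t:ℝ) + 1) ^ (2 - ε) := by
        calc (t:ℝ) ^ (2 - ε) + (2 - ε) * (t:ℝ) ^ (1 - ε)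
            = (t:ℝ) ^ (2 - ε) * (1 + (2 - ε) * (1 / (t:ℝ))) := by
              rw [mul_add, mul_one, ← mul_assoc, mul_comm ((t:ℝ) ^ (2 - ε)) (2 - ε),
                mul_assoc, hdiv]
          _ ≤ (t:ℝ) ^ (2 - ε) * (1 + 1/(t:ℝ)) ^ (2 - ε) := hmul
          _ = ((t:ℝ) + 1) ^ (2 - ε) := hrhs
      push_cast
      rw [le_div_iff₀ h2ε]
      rw [le_div_iff₀ h2ε] at ih
      nlinarith [key, ih]

/-- after-running estimate for a converged t-margitron run:
γ'_d/γ_d ≥ ((R²/b)·t_c^(ε−1) + 2/(2−ε))⁻¹. -/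
theorem stmt9 {E : Type*} [NormedAddCommGroup E] [InnerProductSpace ℝ E]
    {n : ℕ} (hn : 0 < n) (y : Fin n → E)
    (R : ℝ) (hR : IsGreatest (Set.range (fun k : Fin n => ‖y k‖)) R)
    (u : E) (hu : ‖u‖ = 1) (γd : ℝ) (hγd : 0 < γd)
    (hmargin : ∀ k : Fin n, γd ≤ ⟪u, y k⟫)
    (ε b : ℝ) (hε : 0 < ε) (hε1 : ε ≤ 1) (hb : 0 < b)
    (tc : ℕ) (htc : 1 ≤ tc) (a : ℕ → E) (ha0 : a 0 = 0)
    (hrun : ∀ t : ℕ, t < tc → ∃ k : Fin n, a (t + 1) = a t + y k ∧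
      ⟪a t, y k⟫ ≤ if t = 0 then 0 else b * (t : ℝ) ^ (1 - ε))
    (hconv : ∀ k : Fin n, b * (tc : ℝ) ^ (1 - ε) < ⟪a tc, y k⟫) :
    (Finset.univ.inf' (Finset.univ_nonempty_iff.mpr ⟨⟨0, hn⟩⟩)
        (fun k : Fin n => ⟪(‖a tc‖)⁻¹ • a tc, y k⟫)) / γd ≥
      ((R ^ 2 / b) * (tc : ℝ) ^ (ε - 1) + 2 / (2 - ε))⁻¹ := by
  have h2ε : (0:ℝ) < 2 - ε := by linarith
  have hq1 : (1:ℝ) ≤ (tc:ℝ) := by exact_mod_cast htc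
  have hq0 : (0:ℝ) < (tc:ℝ) := by linarith
  have hR0 : 0 ≤ R := by
    obtain ⟨k, hk⟩ := hR.1
    exact hk ▸ norm_nonneg _
  -- directional growth
  have hdir : ∀ t, t ≤ tc → γd * t ≤ ⟪u, a t⟫ := by
    intro t
    induction t with
    | zero => intro _; simp [ha0]
    | succ t ih =>
      intro hle
      obtain ⟨k, hupd, _⟩ := hrun t (by omega)
      rw [hupd, inner_add_right]
      have := hmargin k
      have := ih (by omega)
      push_cast
      linarith
  -- norm growth
  have hnormsq : ∀ t, t ≤ tc →
      ‖a t‖ ^ 2 ≤ R ^ 2 * t + 2 * b * ∑ s ∈ Finset.Ico 1 t, (s : ℝ) ^ (1 - ε) := by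
    intro t
    induction t with
    | zero => intro _; simp [ha0]
    | succ t ih =>
      intro hle
      obtain ⟨k, hupd, hmis⟩ := hrun t (by omega)
      have hyk : ‖y k‖ ≤ R := hR.2 ⟨k, rfl⟩
      have hyk2 : ‖y k‖ ^ 2 ≤ R ^ 2 :=
        pow_le_pow_left₀ (norm_nonneg _) hyk 2
      have hsq : ‖a (t+1)‖ ^ 2 = ‖a t‖ ^ 2 + 2 * ⟪a t, y k⟫ + ‖y k‖ ^ 2 := by
        rw [hupd]; exact norm_add_sq_real _ _
      have ih' := ih (by omega)
      rcases Nat.eq_zero_or_pos t with rfl | ht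
      · simp only [if_pos rfl] at hmis
        have hI : Finset.Ico 1 (0+1) = (∅ : Finset ℕ) := rfl
        have h00 : ‖a 0‖ ^ 2 = 0 := by simp [ha0]
        rw [hI, Finset.sum_empty]
        norm_num at hsq hmis ⊢
        nlinarith [h00, hyk2, hmis, hsq]
      · rw [if_neg (by omega)] at hmis
        rw [Finset.sum_Ico_succ_top (by omega)]
        push_cast
        nlinarith
  -- lower bound on N
  have hNlow : γd * tc ≤ ‖a tc‖ := by
    have h1 := hdir tc le_rfl
    have h2 : ⟪u, a tc⟫ ≤ ‖u‖ * ‖a tc‖ := real_inner_le_norm u (a tc)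
    rw [hu, one_mul] at h2
    linarith
  have hNpos : 0 < ‖a tc‖ := lt_of_lt_of_le (by positivity) hNlow
  have hsum := sumpow_le hε hε1 tc
  have hNsq : ‖a tc‖ ^ 2 ≤ R ^ 2 * tc + 2 * b * ((tc:ℝ) ^ (2 - ε) / (2 - ε)) := by
    have := hnormsq tc le_rfl
    have h2b : 0 ≤ 2 * b := by linarith
    nlinarith [mul_le_mul_of_nonneg_left hsum h2b]
  have hrpos : (0:ℝ) < (tc:ℝ) ^ (ε - 1) := Real.rpow_pos_of_pos hq0 _
  have hr1pos : (0:ℝ) < (tc:ℝ) ^ (1 - ε) := Real.rpow_pos_of_pos hq0 _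
  have hDpos : 0 < (R ^ 2 / b) * (tc : ℝ) ^ (ε - 1) + 2 / (2 - ε) := by positivity
  have hcancel : (tc:ℝ) ^ (1 - ε) * (tc:ℝ) ^ (ε - 1) = 1 := by
    rw [← Real.rpow_add hq0]
    norm_num
  have hsplit : (tc:ℝ) ^ (2 - ε) = (tc:ℝ) ^ (1 - ε) * (tc:ℝ) := by
    rw [show (2:ℝ) - ε = (1 - ε) + 1 by ring, Real.rpow_add hq0, Real.rpow_one]
  -- the min is at least b * tc^(1-ε) / ‖a tc‖
  have hmlow : b * (tc:ℝ) ^ (1 - ε) / ‖a tc‖ ≤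
      Finset.univ.inf' (Finset.univ_nonempty_iff.mpr ⟨⟨0, hn⟩⟩)
        (fun k : Fin n => ⟪(‖a tc‖)⁻¹ • a tc, y k⟫) := by
    apply Finset.le_inf'
    intro k _
    rw [real_inner_smul_left, div_le_iff₀ hNpos] at *
    rw [mul_comm _ ‖a tc‖, ← mul_assoc, mul_inv_cancel₀ (ne_of_gt hNpos), one_mul]
    exact (hconv k).le
  -- key: b * tc^(1-ε) * D ≥ γd * ‖a tc‖
  have hkey : γd * ‖a tc‖ ≤ b * (tc:ℝ) ^ (1 - ε) *
      ((R ^ 2 / b) * (tc : ℝ) ^ (ε - 1) + 2 / (2 - ε)) := by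
    have h1 : γd * ‖a tc‖ ≤ ‖a tc‖ ^ 2 / tc := by
      rw [le_div_iff₀ hq0, sq]
      nlinarith [hNlow, hNpos]
    have h2 : ‖a tc‖ ^ 2 / tc ≤ R ^ 2 + 2 * b * (tc:ℝ) ^ (1 - ε) / (2 - ε) := by
      rw [div_le_iff₀ hq0, add_mul]
      have e1 : 2 * b * ((tc:ℝ) ^ (2 - ε) / (2 - ε))
          = 2 * b * (tc:ℝ) ^ (1 - ε) / (2 - ε) * tc := by
        rw [hsplit]; ring
      linarith [hNsq, e1]
    have hbb : b / b = 1 := div_self hb.ne'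
    have h3 : b * (tc:ℝ) ^ (1 - ε) * ((R ^ 2 / b) * (tc : ℝ) ^ (ε - 1) + 2 / (2 - ε))
        = R ^ 2 + 2 * b * (tc:ℝ) ^ (1 - ε) / (2 - ε) := by
      calc b * (tc:ℝ) ^ (1 - ε) * ((R ^ 2 / b) * (tc : ℝ) ^ (ε - 1) + 2 / (2 - ε))
          = R ^ 2 * ((tc:ℝ) ^ (1 - ε) * (tc:ℝ) ^ (ε - 1)) * (b / b)
              + 2 * b * (tc:ℝ) ^ (1 - ε) / (2 - ε) := by ring
        _ = R ^ 2 + 2 * b * (tc:ℝ) ^ (1 - ε) / (2 - ε) := by rw [hcancel, hbb]; ring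
    linarith
  -- conclude
  rw [ge_iff_le, le_div_iff₀ hγd, inv_mul_eq_div, div_le_iff₀ hDpos]
  have h7 : γd ≤ b * (tc:ℝ) ^ (1 - ε) / ‖a tc‖ *
      ((R ^ 2 / b) * (tc : ℝ) ^ (ε - 1) + 2 / (2 - ε)) := by
    rw [div_mul_eq_mul_div, le_div_iff₀ hNpos]
    linarith [hkey]
  have h6 := mul_le_mul_of_nonneg_right hmlow hDpos.le
  linarith [h6, h7]
end

section
/- Let 0 < ε ≤ 1, b > 0, let a : ℕ → E be an ℓ-margitron run of length T, and let N be an integer with 1 ≤ N ≤ T. Then for every t with N ≤ t ≤ T it holds that ‖a_t‖^(1+ε) ≤ R^(1+ε)·( N^(1+ε) + ((1+ε)/(2ε))·(R/γ_d)^(1−ε)·( t^ε − (N − ε + ⌊ε⌋)/N^(1−ε) ) + (1+ε)·(b/R^(1+ε))·t ), where ⌊ε⌋ is the integer part of ε. -/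
open scoped RealInnerProductSpace

private lemma tangent_rpow {x δ p : ℝ} (hx : 0 < x) (hδ : 0 ≤ δ) (hp0 : 0 ≤ p) (hp1 : p ≤ 1) :
    (x + δ) ^ p ≤ x ^ p + p * x ^ (p - 1) * δ := by
  have h2 : (0:ℝ) ≤ δ / x := div_nonneg hδ hx.le
  have h3 : (1 + δ / x) ^ p ≤ 1 + p * (δ / x) :=
    rpow_one_add_le_one_add_mul_self (by linarith) hp0 hp1
  have h1 : x + δ = x * (1 + δ / x) := by field_simp
  calc (x + δ) ^ p = x ^ p * (1 + δ / x) ^ p := by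
        rw [h1, Real.mul_rpow hx.le (by linarith)]
    _ ≤ x ^ p * (1 + p * (δ / x)) :=
        mul_le_mul_of_nonneg_left h3 (Real.rpow_nonneg hx.le p)
    _ = x ^ p + p * (x ^ p / x) * δ := by field_simp
    _ = x ^ p + p * x ^ (p - 1) * δ := by rw [← Real.rpow_sub_one hx.ne']

private lemma step_rpow {s ε : ℝ} (hs : 1 ≤ s) (hε : 0 ≤ ε) (hε1 : ε ≤ 1) :
    ε * s ^ (ε - 1) ≤ s ^ ε - (s - 1) ^ ε := by
  have hs0 : 0 < s := lt_of_lt_of_le one_pos hs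
  have hinv : 1 / s ≤ 1 := by rw [div_le_one hs0]; exact hs
  have h3 : (1 + (-(1 / s))) ^ ε ≤ 1 + ε * (-(1 / s)) :=
    rpow_one_add_le_one_add_mul_self (by linarith) hε hε1
  have h1 : s - 1 = s * (1 + (-(1 / s))) := by field_simp; ring
  have h4 : (s - 1) ^ ε ≤ s ^ ε * (1 + ε * (-(1 / s))) := by
    rw [h1, Real.mul_rpow hs0.le (by linarith)]
    exact mul_le_mul_of_nonneg_left h3 (Real.rpow_nonneg hs0.le ε)
  have h5 : s ^ ε * (1 + ε * (-(1 / s))) = s ^ ε - ε * (s ^ (ε - 1)) := by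
    rw [Real.rpow_sub_one hs0.ne']
    field_simp
    ring
  linarith [h5 ▸ h4]

set_option maxHeartbeats 1600000 in
/-- length bound for an ℓ-margitron run: for N ≤ t ≤ T,
‖a_t‖^(1+ε) ≤ R^(1+ε)·(N^(1+ε) + ((1+ε)/(2ε))·(R/γ_d)^(1−ε)·(t^ε − (N−ε+⌊ε⌋)/N^(1−ε))
 + (1+ε)·(b/R^(1+ε))·t). -/
theorem stmt10 {E : Type*} [NormedAddCommGroup E] [InnerProductSpace ℝ E]
    {n : ℕ} (hn : 0 < n) (y : Fin n → E)
    (R : ℝ) (hR : IsGreatest (Set.range (fun k : Fin n => ‖y k‖)) R)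
    (u : E) (hu : ‖u‖ = 1) (γd : ℝ) (hγd : 0 < γd)
    (hmargin : ∀ k : Fin n, γd ≤ ⟪u, y k⟫)
    (ε b : ℝ) (hε : 0 < ε) (hε1 : ε ≤ 1) (hb : 0 < b)
    (T : ℕ) (a : ℕ → E) (ha0 : a 0 = 0)
    (hrun : ∀ t : ℕ, t < T → ∃ k : Fin n, a (t + 1) = a t + y k ∧
      ⟪a t, y k⟫ ≤ if t = 0 then 0 else b * ‖a t‖ ^ (1 - ε))
    (N : ℕ) (hN1 : 1 ≤ N) (hNT : N ≤ T) :
    ∀ t : ℕ, N ≤ t → t ≤ T →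
      ‖a t‖ ^ (1 + ε) ≤ R ^ (1 + ε) * ((N : ℝ) ^ (1 + ε)
        + ((1 + ε) / (2 * ε)) * (R / γd) ^ (1 - ε) *
            ((t : ℝ) ^ ε - ((N : ℝ) - ε + (⌊ε⌋ : ℝ)) / (N : ℝ) ^ (1 - ε))
        + (1 + ε) * (b / R ^ (1 + ε)) * t) := by
  have hRk : ∀ k : Fin n, ‖y k‖ ≤ R := fun k => hR.2 ⟨k, rfl⟩
  have hγR : γd ≤ R := by
    have h1 := hmargin ⟨0, hn⟩
    have h2 := real_inner_le_norm u (y ⟨0, hn⟩)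
    rw [hu, one_mul] at h2
    linarith [hRk ⟨0, hn⟩]
  have hR0 : 0 < R := hγd.trans_le hγR
  -- lower bound on the inner product with u
  have hInner : ∀ t : ℕ, t ≤ T → (t : ℝ) * γd ≤ ⟪u, a t⟫ := by
    intro t
    induction t with
    | zero => intro _; simp [ha0]
    | succ t ih =>
      intro ht
      obtain ⟨k, hk, -⟩ := hrun t (Nat.lt_of_succ_le ht)
      rw [hk, inner_add_right]
      push_cast
      nlinarith [hmargin k, ih (le_of_lt (Nat.lt_of_succ_le ht))]
  have hlow : ∀ t : ℕ, t ≤ T → (t : ℝ) * γd ≤ ‖a t‖ := by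
    intro t ht
    have h2 := real_inner_le_norm u (a t)
    rw [hu, one_mul] at h2
    linarith [hInner t ht]
  have hup : ∀ t : ℕ, t ≤ T → ‖a t‖ ≤ (t : ℝ) * R := by
    intro t
    induction t with
    | zero => intro _; simp [ha0]
    | succ t ih =>
      intro ht
      obtain ⟨k, hk, -⟩ := hrun t (Nat.lt_of_succ_le ht)
      rw [hk]
      push_cast
      calc ‖a t + y k‖ ≤ ‖a t‖ + ‖y k‖ := norm_add_le _ _
        _ ≤ (t : ℝ) * R + R := add_le_add (ih (Nat.le_of_succ_le ht)) (hRk k)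
        _ = ((t : ℝ) + 1) * R := by ring
  -- key induction
  have key : ∀ t : ℕ, N ≤ t → t ≤ T →
      ‖a t‖ ^ (1 + ε) ≤ (R * (N : ℝ)) ^ (1 + ε) + (1 + ε) * b * t
        + ((1 + ε) / 2 * R ^ 2 * γd ^ (ε - 1)) * ∑ s ∈ Finset.Ico N t, (s : ℝ) ^ (ε - 1) := by
    intro t ht
    induction t, ht using Nat.le_induction with
    | base =>
      intro _
      rw [Finset.Ico_self, Finset.sum_empty, mul_zero, add_zero]
      have h1 : ‖a N‖ ≤ R * (N : ℝ) := by
        rw [mul_comm]; exact hup N hNT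
      have h2 : ‖a N‖ ^ (1 + ε) ≤ (R * (N : ℝ)) ^ (1 + ε) :=
        Real.rpow_le_rpow (norm_nonneg _) h1 (by linarith)
      have h3 : (0:ℝ) ≤ (1 + ε) * b * N := by positivity
      linarith
    | succ t ht ih =>
      intro hT1
      have htT : t < T := Nat.lt_of_succ_le hT1
      have ihh := ih (le_of_lt htT)
      obtain ⟨k, hk, hmis⟩ := hrun t htT
      have ht0 : t ≠ 0 := by omega
      rw [if_neg ht0] at hmis
      have hat_low : (t : ℝ) * γd ≤ ‖a t‖ := hlow t (le_of_lt htT)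
      have htR : (1 : ℝ) ≤ (t : ℝ) := by exact_mod_cast le_trans hN1 ht
      have hat_pos : 0 < ‖a t‖ := lt_of_lt_of_le (by nlinarith) hat_low
      have hsq : ‖a (t+1)‖ ^ 2 ≤ ‖a t‖ ^ 2 + (2 * b * ‖a t‖ ^ (1 - ε) + R ^ 2) := by
        rw [hk, norm_add_sq_real]
        have h1 : ‖y k‖ ^ 2 ≤ R ^ 2 := by nlinarith [hRk k, norm_nonneg (y k)]
        nlinarith [hmis]
      set x := ‖a t‖ ^ (2:ℝ) with hxdef
      set δ := 2 * b * ‖a t‖ ^ (1 - ε) + R ^ 2 with hδdef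
      have hδ0 : 0 ≤ δ := by
        have : (0:ℝ) ≤ ‖a t‖ ^ (1 - ε) := Real.rpow_nonneg (norm_nonneg _) _
        positivity
      have hx0 : 0 < x := Real.rpow_pos_of_pos hat_pos 2
      have hxδ : ‖a (t+1)‖ ^ (2:ℝ) ≤ x + δ := by
        rw [Real.rpow_two, hxdef, Real.rpow_two]; exact hsq
      have hp : ‖a (t+1)‖ ^ (1 + ε) ≤ (x + δ) ^ ((1 + ε) / 2) := by
        have e1 : ‖a (t+1)‖ ^ (1 + ε) = (‖a (t+1)‖ ^ (2:ℝ)) ^ ((1 + ε) / 2) := by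
          rw [← Real.rpow_mul (norm_nonneg _)]
          congr 1; ring
        rw [e1]
        exact Real.rpow_le_rpow (Real.rpow_nonneg (norm_nonneg _) _) hxδ (by linarith)
      have htan := tangent_rpow hx0 hδ0 (p := (1 + ε) / 2) (by linarith) (by linarith)
      have e2 : x ^ ((1 + ε) / 2) = ‖a t‖ ^ (1 + ε) := by
        rw [hxdef, ← Real.rpow_mul (norm_nonneg _)]
        congr 1; ring
      have e3 : x ^ ((1 + ε) / 2 - 1) = ‖a t‖ ^ (ε - 1) := by
        rw [hxdef, ← Real.rpow_mul (norm_nonneg _)]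
        congr 1; ring
      rw [e2, e3] at htan
      have hprod : ‖a t‖ ^ (ε - 1) * ‖a t‖ ^ (1 - ε) = 1 := by
        rw [← Real.rpow_add hat_pos]
        norm_num
      have hmono : ‖a t‖ ^ (ε - 1) ≤ (t : ℝ) ^ (ε - 1) * γd ^ (ε - 1) := by
        rw [← Real.mul_rpow (by linarith) hγd.le]
        exact Real.rpow_le_rpow_of_nonpos (by nlinarith) hat_low (by linarith)
      have hchain : ‖a (t+1)‖ ^ (1 + ε) ≤ ‖a t‖ ^ (1 + ε) + (1 + ε) * b
          + ((1 + ε) / 2 * R ^ 2 * γd ^ (ε - 1)) * (t : ℝ) ^ (ε - 1) := by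
        have h6 : (1 + ε) / 2 * ‖a t‖ ^ (ε - 1) * δ
            = (1 + ε) * b * (‖a t‖ ^ (ε - 1) * ‖a t‖ ^ (1 - ε))
              + (1 + ε) / 2 * R ^ 2 * ‖a t‖ ^ (ε - 1) := by
          rw [hδdef]; ring
        rw [h6, hprod, mul_one] at htan
        have h7 : (1 + ε) / 2 * R ^ 2 * ‖a t‖ ^ (ε - 1)
            ≤ (1 + ε) / 2 * R ^ 2 * ((t : ℝ) ^ (ε - 1) * γd ^ (ε - 1)) :=
          mul_le_mul_of_nonneg_left hmono (by positivity : (0:ℝ) ≤ (1 + ε) / 2 * R ^ 2)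
        calc ‖a (t+1)‖ ^ (1 + ε) ≤ (x + δ) ^ ((1 + ε) / 2) := hp
          _ ≤ ‖a t‖ ^ (1 + ε) + (1 + ε) * b + (1 + ε) / 2 * R ^ 2 * ‖a t‖ ^ (ε - 1) := by
              linarith
          _ ≤ ‖a t‖ ^ (1 + ε) + (1 + ε) * b
              + ((1 + ε) / 2 * R ^ 2 * γd ^ (ε - 1)) * (t : ℝ) ^ (ε - 1) := by
              linarith [h7]
      rw [Finset.sum_Ico_succ_top ht]
      push_cast
      linarith [hchain, ihh]
  -- telescoping sum bound
  have hsum : ∀ t : ℕ, N ≤ t →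
      ε * ∑ s ∈ Finset.Ico N (t + 1), (s : ℝ) ^ (ε - 1)
        ≤ ε * (N : ℝ) ^ (ε - 1) + (t : ℝ) ^ ε - (N : ℝ) ^ ε := by
    intro t ht
    induction t, ht using Nat.le_induction with
    | base =>
      rw [Finset.sum_Ico_succ_top le_rfl, Finset.Ico_self, Finset.sum_empty, zero_add]
      linarith
    | succ t ht ih =>
      rw [Finset.sum_Ico_succ_top (by omega : N ≤ t + 1)]
      have h1 : (1:ℝ) ≤ (t:ℝ) + 1 := by
        have := Nat.cast_nonneg (α := ℝ) t; linarith
      have hstep := step_rpow (s := (t : ℝ) + 1) h1 hε.le hε1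
      have h2 : ((t:ℝ) + 1) - 1 = (t:ℝ) := by ring
      rw [h2] at hstep
      push_cast
      linarith [ih]
  intro t htN htT
  have keyt := key t htN htT
  have hN0 : (1:ℝ) ≤ (N:ℝ) := by exact_mod_cast hN1
  have hNpos : (0:ℝ) < (N:ℝ) := by linarith
  have hXfin : ε * ∑ s ∈ Finset.Ico N t, (s : ℝ) ^ (ε - 1)
      ≤ (t : ℝ) ^ ε - ((N : ℝ) - ε + (⌊ε⌋ : ℝ)) / (N : ℝ) ^ (1 - ε) := by
    rcases eq_or_lt_of_le hε1 with rfl | hεlt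
    · -- ε = 1
      have hsum1 : ∑ s ∈ Finset.Ico N t, (s : ℝ) ^ ((1:ℝ) - 1) = ((t - N : ℕ) : ℝ) := by
        have hone : ∀ s ∈ Finset.Ico N t, (s : ℝ) ^ ((1:ℝ) - 1) = 1 := by
          intro s _; norm_num
        rw [Finset.sum_congr rfl hone, Finset.sum_const, Nat.card_Ico]; simp
      rw [hsum1, show ((1:ℝ) - 1) = 0 by norm_num, Real.rpow_zero, Real.rpow_one, Int.floor_one]
      push_cast [Nat.cast_sub htN]
      norm_num
    · -- ε < 1
      have hfloor : ⌊ε⌋ = 0 := Int.floor_eq_zero_iff.mpr ⟨hε.le, hεlt⟩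
      have hNpow : (N:ℝ) ^ ε = (N:ℝ) ^ (ε - 1) * (N:ℝ) := by
        rw [← Real.rpow_add_one hNpos.ne']
        congr 1; ring
      have hNdiv : ∀ c : ℝ, c / (N : ℝ) ^ (1 - ε) = c * (N:ℝ) ^ (ε - 1) := by
        intro c
        rw [div_eq_mul_inv, ← Real.rpow_neg hNpos.le, show -(1 - ε) = ε - 1 by ring]
      rcases eq_or_lt_of_le htN with rfl | htlt
      · rw [Finset.Ico_self, Finset.sum_empty, mul_zero, hfloor, hNdiv]
        have heq : (N : ℝ) ^ ε - ((N:ℝ) - ε + ((0:ℤ):ℝ)) * (N:ℝ) ^ (ε - 1)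
            = ε * (N:ℝ) ^ (ε - 1) := by
          push_cast
          rw [hNpow]; ring
        rw [heq]
        positivity
      · obtain ⟨t', rfl⟩ : ∃ t', t = t' + 1 := ⟨t - 1, by omega⟩
        have ht' : N ≤ t' := by omega
        have h1 := hsum t' ht'
        have h2 : ((t':ℝ)) ^ ε ≤ ((t':ℝ) + 1) ^ ε :=
          Real.rpow_le_rpow (by positivity) (by linarith) hε.le
        rw [hfloor, hNdiv]
        have heq : ((N:ℝ) - ε + ((0:ℤ):ℝ)) * (N:ℝ) ^ (ε - 1)
            = (N:ℝ) ^ ε - ε * (N:ℝ) ^ (ε - 1) := by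
          push_cast
          rw [hNpow]; ring
        rw [heq]
        push_cast
        linarith [h1, h2]
  have hRpow : 0 < R ^ (1 + ε) := Real.rpow_pos_of_pos hR0 _
  have eRγ : R ^ (1 + ε) * (R / γd) ^ (1 - ε) = R ^ 2 * γd ^ (ε - 1) := by
    rw [Real.div_rpow hR0.le hγd.le, div_eq_mul_inv, ← Real.rpow_neg hγd.le,
      show -(1 - ε) = ε - 1 by ring, ← mul_assoc, ← Real.rpow_add hR0,
      show 1 + ε + (1 - ε) = (2:ℝ) by ring, Real.rpow_two]
  set X := (t : ℝ) ^ ε - ((N : ℝ) - ε + (⌊ε⌋ : ℝ)) / (N : ℝ) ^ (1 - ε) with hXdef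
  have h1 : R ^ (1 + ε) * (N : ℝ) ^ (1 + ε) = (R * (N:ℝ)) ^ (1 + ε) :=
    (Real.mul_rpow hR0.le (by positivity)).symm
  have h2 : R ^ (1 + ε) * ((1 + ε) / (2 * ε) * (R / γd) ^ (1 - ε) * X)
      = (1 + ε) / (2 * ε) * (R ^ 2 * γd ^ (ε - 1)) * X := by
    rw [show R ^ (1 + ε) * ((1 + ε) / (2 * ε) * (R / γd) ^ (1 - ε) * X)
        = (1 + ε) / (2 * ε) * (R ^ (1 + ε) * (R / γd) ^ (1 - ε)) * X by ring, eRγ]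
  have h3 : R ^ (1 + ε) * ((1 + ε) * (b / R ^ (1 + ε)) * (t:ℝ)) = (1 + ε) * b * (t:ℝ) := by
    field_simp
  rw [mul_add, mul_add, h1, h2, h3]
  have hC0 : (0:ℝ) ≤ (1 + ε) / (2 * ε) * (R ^ 2 * γd ^ (ε - 1)) := by positivity
  have hKX : (1 + ε) / 2 * R ^ 2 * γd ^ (ε - 1) * ∑ s ∈ Finset.Ico N t, (s : ℝ) ^ (ε - 1)
      ≤ (1 + ε) / (2 * ε) * (R ^ 2 * γd ^ (ε - 1)) * X := by
    have h4 : (1 + ε) / 2 * R ^ 2 * γd ^ (ε - 1) * ∑ s ∈ Finset.Ico N t, (s : ℝ) ^ (ε - 1)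
        = (1 + ε) / (2 * ε) * (R ^ 2 * γd ^ (ε - 1))
          * (ε * ∑ s ∈ Finset.Ico N t, (s : ℝ) ^ (ε - 1)) := by
      field_simp
    rw [h4]
    exact mul_le_mul_of_nonneg_left hXfin hC0
  linarith [keyt, hKX]
end

section
/- Let 0 < ε ≤ 1, b > 0, and let a : ℕ → E be an ℓ-margitron run of length t_c ≥ 1 that has converged after t_c updates, i.e. ⟨a_{t_c}, y_k⟩ > b·‖a_{t_c}‖^(1−ε) for every k ∈ {1, …, n}. Then the achieved directional margin γ'_d := min_k ⟨a_{t_c}/‖a_{t_c}‖, y_k⟩ satisfies γ'_d/γ_d ≥ ( ((1+ε)^(2ε−⌊ε⌋)/(2ε)^ε)·(R^(1+ε)/b) + 1 + ε )^(−1), where ⌊ε⌋ is the integer part of ε. -/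
open scoped RealInnerProductSpace

/-- subadditivity of rpow for exponents in [0,1], real version -/
lemma margi_rpow_add_le {x y p : ℝ} (hx : 0 ≤ x) (hy : 0 ≤ y) (hp : 0 ≤ p) (hp1 : p ≤ 1) :
    (x + y) ^ p ≤ x ^ p + y ^ p := by
  lift x to NNReal using hx
  lift y to NNReal using hy
  rw [← NNReal.coe_add, ← NNReal.coe_rpow, ← NNReal.coe_rpow, ← NNReal.coe_rpow, ← NNReal.coe_add,
    NNReal.coe_le_coe]
  exact NNReal.rpow_add_le_add_rpow x y hp hp1

lemma margi_sq_rpow {z ε : ℝ} (hz : 0 ≤ z) : (z ^ 2) ^ ((1 + ε) / 2) = z ^ (1 + ε) := by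
  rw [← Real.rpow_natCast z 2, ← Real.rpow_mul hz]
  norm_num
  congr 1
  ring

/-- the key inequality -/
lemma margi_key {x R b ε : ℝ} (hx : 0 < x) (hR : 0 ≤ R) (hb : 0 < b) (hε : 0 < ε) (hε1 : ε ≤ 1) :
    (x ^ 2 + 2 * b * x ^ (1 - ε) + R ^ 2) ^ ((1 + ε) / 2)
      ≤ x ^ (1 + ε) + (1 + ε) * b + R ^ (1 + ε) := by
  set p : ℝ := (1 + ε) / 2 with hp_def
  have hp0 : 0 ≤ p := by positivity
  have hp1 : p ≤ 1 := by rw [hp_def]; linarith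
  have hδ0 : 0 ≤ 2 * b * x ^ (1 - ε) := by positivity
  have hx2 : (0:ℝ) < x ^ 2 := by positivity
  have hsub : (x ^ 2 + 2 * b * x ^ (1 - ε) + R ^ 2) ^ p
      ≤ (x ^ 2 + 2 * b * x ^ (1 - ε)) ^ p + (R ^ 2) ^ p :=
    margi_rpow_add_le (by positivity) (by positivity) hp0 hp1
  have hR2 : (R ^ 2) ^ p = R ^ (1 + ε) := margi_sq_rpow hR
  -- concavity step
  set s : ℝ := 2 * b * x ^ (1 - ε) / x ^ 2 with hs_def
  have hs0 : 0 ≤ s := by positivity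
  have h1 : x ^ 2 + 2 * b * x ^ (1 - ε) = x ^ 2 * (1 + s) := by
    rw [hs_def, mul_add, mul_one, mul_comm (x ^ 2), div_mul_cancel₀ _ hx2.ne']
  have h2 : (x ^ 2 * (1 + s)) ^ p = (x ^ 2) ^ p * (1 + s) ^ p :=
    Real.mul_rpow hx2.le (by linarith)
  have h4 : (1 + s) ^ p ≤ 1 + p * s :=
    rpow_one_add_le_one_add_mul_self (by linarith) hp0 hp1
  have hxx : x ^ (1 + ε) * x ^ (1 - ε) = x ^ 2 := by
    rw [← Real.rpow_add hx]
    norm_num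
  have h5 : (x ^ 2) ^ p * (1 + p * s) = x ^ (1 + ε) + (1 + ε) * b := by
    rw [margi_sq_rpow hx.le, hs_def, hp_def]
    field_simp
    linear_combination (1 + ε) * b * hxx
  have h6 : (x ^ 2 + 2 * b * x ^ (1 - ε)) ^ p ≤ x ^ (1 + ε) + (1 + ε) * b := by
    calc (x ^ 2 + 2 * b * x ^ (1 - ε)) ^ p = (x ^ 2) ^ p * (1 + s) ^ p := by rw [h1, h2]
    _ ≤ (x ^ 2) ^ p * (1 + p * s) := by
        apply mul_le_mul_of_nonneg_left h4 (Real.rpow_nonneg hx2.le p)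
    _ = x ^ (1 + ε) + (1 + ε) * b := h5
  calc (x ^ 2 + 2 * b * x ^ (1 - ε) + R ^ 2) ^ p
      ≤ (x ^ 2 + 2 * b * x ^ (1 - ε)) ^ p + (R ^ 2) ^ p := hsub
    _ ≤ x ^ (1 + ε) + (1 + ε) * b + R ^ (1 + ε) := by rw [hR2]; linarith

/-- a converged ℓ-margitron run with 0 < ε ≤ 1 achieves
γ'_d/γ_d ≥ (((1+ε)^(2ε−⌊ε⌋)/(2ε)^ε)·(R^(1+ε)/b) + 1 + ε)⁻¹. -/
theorem stmt12 {E : Type*} [NormedAddCommGroup E] [InnerProductSpace ℝ E]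
    {n : ℕ} (hn : 0 < n) (y : Fin n → E)
    (R : ℝ) (hR : IsGreatest (Set.range (fun k : Fin n => ‖y k‖)) R)
    (u : E) (hu : ‖u‖ = 1) (γd : ℝ) (hγd : 0 < γd)
    (hmargin : ∀ k : Fin n, γd ≤ ⟪u, y k⟫)
    (ε b : ℝ) (hε : 0 < ε) (hε1 : ε ≤ 1) (hb : 0 < b)
    (tc : ℕ) (htc : 1 ≤ tc) (a : ℕ → E) (ha0 : a 0 = 0)
    (hrun : ∀ t : ℕ, t < tc → ∃ k : Fin n, a (t + 1) = a t + y k ∧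
      ⟪a t, y k⟫ ≤ if t = 0 then 0 else b * ‖a t‖ ^ (1 - ε))
    (hconv : ∀ k : Fin n, b * ‖a tc‖ ^ (1 - ε) < ⟪a tc, y k⟫) :
    (Finset.univ.inf' (Finset.univ_nonempty_iff.mpr ⟨⟨0, hn⟩⟩)
        (fun k : Fin n => ⟪(‖a tc‖)⁻¹ • a tc, y k⟫)) / γd ≥
      (((1 + ε) ^ (2 * ε - (⌊ε⌋ : ℝ)) / (2 * ε) ^ ε) * (R ^ (1 + ε) / b)
        + 1 + ε)⁻¹ := by
  have hub : ∀ k : Fin n, ‖y k‖ ≤ R := fun k => hR.2 ⟨k, rfl⟩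
  have hR0 : 0 < R := lt_of_lt_of_le hγd
    (le_trans (le_trans (hmargin ⟨0, hn⟩) (real_inner_le_norm u _)) (by rw [hu, one_mul]; exact hub _))
  set C : ℝ := (1 + ε) ^ (2 * ε - (⌊ε⌋ : ℝ)) / (2 * ε) ^ ε with hC_def
  have h2ε : (0:ℝ) < (2 * ε) ^ ε := Real.rpow_pos_of_pos (by linarith) ε
  have hC1 : 1 ≤ C := by
    rw [hC_def, le_div_iff₀ h2ε, one_mul]
    rcases eq_or_lt_of_le hε1 with h1 | h1
    · subst h1
      norm_num
    · have hfl : ⌊ε⌋ = 0 := Int.floor_eq_zero_iff.mpr ⟨hε.le, h1⟩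
      rw [hfl]
      push_cast
      rw [sub_zero]
      have : (1 + ε) ^ (2 * ε) = ((1 + ε) ^ (2:ℝ)) ^ ε := by
        rw [← Real.rpow_mul (by linarith)]
      rw [this]
      apply Real.rpow_le_rpow (by linarith) _ hε.le
      rw [show ((2:ℝ)) = ((2:ℕ):ℝ) by norm_num, Real.rpow_natCast]
      push_cast
      nlinarith
  set K : ℝ := C * R ^ (1 + ε) + (1 + ε) * b with hK_def
  have hRp : (0:ℝ) < R ^ (1 + ε) := Real.rpow_pos_of_pos hR0 _
  have hK : 0 < K := by
    have : (0:ℝ) < (1 + ε) * b := by positivity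
    nlinarith
  -- inner product growth
  have hinner : ∀ t : ℕ, t ≤ tc → (t : ℝ) * γd ≤ ⟪u, a t⟫ := by
    intro t
    induction t with
    | zero => intro _; simp [ha0]
    | succ t ih =>
      intro h
      obtain ⟨k, hk, -⟩ := hrun t (by omega)
      rw [hk, inner_add_right]
      have h1 := ih (by omega)
      have h2 := hmargin k
      push_cast
      linarith
  have hnormpos : ∀ t : ℕ, 1 ≤ t → t ≤ tc → (t : ℝ) * γd ≤ ‖a t‖ := by
    intro t ht1 ht2
    have := le_trans (hinner t ht2) (real_inner_le_norm u (a t))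
    rwa [hu, one_mul] at this
  -- norm growth
  have hnormbd : ∀ t : ℕ, t ≤ tc → ‖a t‖ ^ (1 + ε) ≤ K * t := by
    intro t
    induction t with
    | zero =>
      intro _
      simp [ha0, Real.zero_rpow (by positivity : (1:ℝ) + ε ≠ 0)]
    | succ t ih =>
      intro h
      obtain ⟨k, hk, hmis⟩ := hrun t (by omega)
      by_cases ht0 : t = 0
      · subst ht0
        rw [hk, ha0, zero_add]
        have h1 : ‖y k‖ ^ (1 + ε) ≤ R ^ (1 + ε) :=
          Real.rpow_le_rpow (norm_nonneg _) (hub k) (by linarith)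
        have h2 : R ^ (1 + ε) ≤ C * R ^ (1 + ε) := le_mul_of_one_le_left hRp.le hC1
        push_cast
        have : (0:ℝ) < (1 + ε) * b := by positivity
        rw [hK_def]
        linarith
      · have ht1 : 1 ≤ t := by omega
        rw [if_neg ht0] at hmis
        have hx : 0 < ‖a t‖ := by
          have := hnormpos t ht1 (by omega)
          have htr : (1:ℝ) ≤ (t:ℝ) := by exact_mod_cast ht1
          nlinarith
        have hyk : ‖y k‖ ^ 2 ≤ R ^ 2 := by nlinarith [hub k, norm_nonneg (y k)]
        have hsq : ‖a (t + 1)‖ ^ 2 ≤ ‖a t‖ ^ 2 + 2 * b * ‖a t‖ ^ (1 - ε) + R ^ 2 := by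
          rw [hk]
          have := norm_add_sq_real (a t) (y k)
          nlinarith
        have hstep := margi_key hx hR0.le hb hε hε1
        have hmono : (‖a (t + 1)‖ ^ 2) ^ ((1 + ε) / 2)
            ≤ (‖a t‖ ^ 2 + 2 * b * ‖a t‖ ^ (1 - ε) + R ^ 2) ^ ((1 + ε) / 2) :=
          Real.rpow_le_rpow (by positivity) hsq (by positivity)
        rw [margi_sq_rpow (norm_nonneg _)] at hmono
        have h2 : R ^ (1 + ε) ≤ C * R ^ (1 + ε) := le_mul_of_one_le_left hRp.le hC1
        have hih := ih (by omega)
        push_cast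
        rw [hK_def] at hih ⊢
        linarith
  -- conclusion
  set A : ℝ := ‖a tc‖ with hA_def
  have hAlb : (tc : ℝ) * γd ≤ A := hnormpos tc htc le_rfl
  have htcr : (1:ℝ) ≤ (tc:ℝ) := by exact_mod_cast htc
  have hA : 0 < A := by nlinarith
  have hAub : A ^ (1 + ε) ≤ K * tc := hnormbd tc le_rfl
  have hAsplit : A ^ (1 + ε) = A * A ^ ε := by
    rw [Real.rpow_add hA, Real.rpow_one]
  have hAε : 0 < A ^ ε := Real.rpow_pos_of_pos hA ε
  have hγA : γd * A ^ ε ≤ K := by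
    have h1 : (tc : ℝ) ≤ A / γd := (le_div_iff₀ hγd).mpr hAlb
    have h2 : A * A ^ ε ≤ K * (A / γd) := by
      rw [← hAsplit]
      calc A ^ (1 + ε) ≤ K * tc := hAub
        _ ≤ K * (A / γd) := by apply mul_le_mul_of_nonneg_left h1 hK.le
    have h3 : γd * (A * A ^ ε) ≤ K * A := by
      rw [mul_comm K (A / γd)] at h2
      calc γd * (A * A ^ ε) ≤ γd * (A / γd * K) := by
            apply mul_le_mul_of_nonneg_left h2 hγd.le
        _ = K * A := by field_simp
    have := (mul_le_mul_iff_left₀ hA).mpr (le_refl (γd * A ^ ε))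
    nlinarith
  -- lower bound for the inf
  have hinf : b / A ^ ε ≤ Finset.univ.inf' (Finset.univ_nonempty_iff.mpr ⟨⟨0, hn⟩⟩)
      (fun k : Fin n => ⟪(‖a tc‖)⁻¹ • a tc, y k⟫) := by
    apply Finset.le_inf'
    intro k _
    have h1 : ⟪(‖a tc‖)⁻¹ • a tc, y k⟫ = A⁻¹ * ⟪a tc, y k⟫ := real_inner_smul_left _ _ _
    rw [h1]
    have h2 : b * A ^ (1 - ε) ≤ ⟪a tc, y k⟫ := (hconv k).le
    have h3 : A⁻¹ * (b * A ^ (1 - ε)) ≤ A⁻¹ * ⟪a tc, y k⟫ :=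
      mul_le_mul_of_nonneg_left h2 (by positivity)
    have h4 : A⁻¹ * (b * A ^ (1 - ε)) = b / A ^ ε := by
      rw [Real.rpow_sub hA, Real.rpow_one]
      field_simp
    linarith
  have hRHS : (C * (R ^ (1 + ε) / b) + 1 + ε)⁻¹ = b / K := by
    rw [hK_def]
    rw [show C * (R ^ (1 + ε) / b) + 1 + ε = (C * R ^ (1 + ε) + (1 + ε) * b) / b by
      field_simp; ring]
    rw [inv_div]
  rw [ge_iff_le, hRHS, div_le_div_iff₀ hK hγd]
  have hm : 0 < b / A ^ ε := by positivity
  have h5 : b / A ^ ε * (γd * A ^ ε) ≤ (Finset.univ.inf' (Finset.univ_nonempty_iff.mpr ⟨⟨0, hn⟩⟩)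
      (fun k : Fin n => ⟪(‖a tc‖)⁻¹ • a tc, y k⟫)) * K :=
    mul_le_mul hinf hγA (by positivity) (le_trans hm.le hinf)
  have h6 : b / A ^ ε * (γd * A ^ ε) = b * γd := by field_simp
  linarith [h5, h6.symm.le]
end

section
/- Let 0 < ε < 1, b > 0, and let a : ℕ → E be an ℓ-margitron run of length t_c ≥ 1 that has converged after t_c updates, i.e. ⟨a_{t_c}, y_k⟩ > b·‖a_{t_c}‖^(1−ε) for every k ∈ {1, …, n}, and let γ'_d := min_k ⟨a_{t_c}/‖a_{t_c}‖, y_k⟩ be the achieved directional margin. Let N be a positive integer satisfying either (t_c ≥ N and N ≥ ((1+ε)/2)·(R/γ'_d)^(1−ε)) or (t_c ≥ N·((1 − ε·N^(−1))/(1 − ε))^(1/ε)). Then γ'_d/γ_d ≥ ( (R^(1+ε)/b)·( N^(1+ε) + ((1+ε)/(2ε))·(R/γ'_d)^(1−ε)·( t_c^ε − (N − ε)/N^(1−ε) ) )·t_c^(−1) + 1 + ε )^(−1). -/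
open scoped RealInnerProductSpace


lemma aux_div {x S b tc c : ℝ} (hb : b ≠ 0) (htc : tc ≠ 0) :
    (x / b) * S * tc⁻¹ + c = (x * S + c * b * tc) / (b * tc) := by
  field_simp

lemma aux_div2 {M t b x : ℝ} (ht : t ≠ 0) (hb : b ≠ 0) (hx : x ≠ 0) :
    (M / t) / (b * x⁻¹) = M * x / (b * t) := by
  field_simp

lemma aux_bern1 {x y p : ℝ} (hx : 0 < x) (hy : 0 ≤ y) (hp0 : 0 ≤ p) (hp1 : p ≤ 1) :
    (x + y) ^ p ≤ x ^ p + p * y * x ^ (p - 1) := by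
  have hx' : (0:ℝ) ≤ y / x := by positivity
  have h1 : x + y = x * (1 + y / x) := by field_simp
  have h2 : (1 + y / x) ^ p ≤ 1 + p * (y / x) :=
    rpow_one_add_le_one_add_mul_self (by linarith) hp0 hp1
  calc (x + y) ^ p = x ^ p * (1 + y / x) ^ p := by
        rw [h1, Real.mul_rpow hx.le (by linarith)]
    _ ≤ x ^ p * (1 + p * (y / x)) := by
        apply mul_le_mul_of_nonneg_left h2 (by positivity)
    _ = x ^ p + p * y * x ^ (p - 1) := by
        rw [Real.rpow_sub_one hx.ne']
        field_simp

lemma aux_bern2 {t ε : ℝ} (ht : 1 ≤ t) (hε : 0 < ε) (hε1 : ε < 1) :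
    ε * t ^ (ε - 1) ≤ t ^ ε - (t - 1) ^ ε := by
  have ht0 : 0 < t := lt_of_lt_of_le one_pos ht
  have hd : -1/t ≥ -1 := by
    rw [ge_iff_le, neg_div, neg_le_neg_iff, div_le_one ht0]; exact ht
  have h1 : t - 1 = t * (1 + (-1/t)) := by field_simp; ring
  have h2 : (1 + (-1/t)) ^ ε ≤ 1 + ε * (-1/t) :=
    rpow_one_add_le_one_add_mul_self hd hε.le hε1.le
  have h3 : (t - 1) ^ ε ≤ t ^ ε * (1 + ε * (-1/t)) := by
    rw [h1, Real.mul_rpow ht0.le (by linarith)]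
    exact mul_le_mul_of_nonneg_left h2 (by positivity)
  have h4 : t ^ ε * (1 + ε * (-1/t)) = t ^ ε - ε * t ^ (ε - 1) := by
    rw [Real.rpow_sub_one ht0.ne']
    field_simp
    ring
  linarith [h3, h4.symm.le]

/-- after-running estimate for a converged ℓ-margitron run with
0 < ε < 1, for any positive integer N satisfying one of the two constraints. -/
theorem stmt13 {E : Type*} [NormedAddCommGroup E] [InnerProductSpace ℝ E]
    {n : ℕ} (hn : 0 < n) (y : Fin n → E)
    (R : ℝ) (hR : IsGreatest (Set.range (fun k : Fin n => ‖y k‖)) R)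
    (u : E) (hu : ‖u‖ = 1) (γd : ℝ) (hγd : 0 < γd)
    (hmargin : ∀ k : Fin n, γd ≤ ⟪u, y k⟫)
    (ε b : ℝ) (hε : 0 < ε) (hε1 : ε < 1) (hb : 0 < b)
    (tc : ℕ) (htc : 1 ≤ tc) (a : ℕ → E) (ha0 : a 0 = 0)
    (hrun : ∀ t : ℕ, t < tc → ∃ k : Fin n, a (t + 1) = a t + y k ∧
      ⟪a t, y k⟫ ≤ if t = 0 then 0 else b * ‖a t‖ ^ (1 - ε))
    (hconv : ∀ k : Fin n, b * ‖a tc‖ ^ (1 - ε) < ⟪a tc, y k⟫)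
    (γ'd : ℝ)
    (hγ'd : γ'd = Finset.univ.inf' (Finset.univ_nonempty_iff.mpr ⟨⟨0, hn⟩⟩)
        (fun k : Fin n => ⟪(‖a tc‖)⁻¹ • a tc, y k⟫))
    (N : ℕ) (hN : 0 < N)
    (hNc : (N ≤ tc ∧ ((1 + ε) / 2) * (R / γ'd) ^ (1 - ε) ≤ (N : ℝ)) ∨
      ((N : ℝ) * ((1 - ε * (N : ℝ)⁻¹) / (1 - ε)) ^ (1 / ε) ≤ (tc : ℝ))) :
    γ'd / γd ≥ ((R ^ (1 + ε) / b) * ((N : ℝ) ^ (1 + ε)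
        + ((1 + ε) / (2 * ε)) * (R / γ'd) ^ (1 - ε) *
            ((tc : ℝ) ^ ε - ((N : ℝ) - ε) / (N : ℝ) ^ (1 - ε))) * (tc : ℝ)⁻¹
      + 1 + ε)⁻¹ := by
  have hne : (1:ℝ) - ε ≠ 0 := by linarith
  have hεne : ε ≠ 0 := ne_of_gt hε
  -- a tc ≠ 0
  have hMpos : 0 < ‖a tc‖ := by
    rcases eq_or_ne (a tc) 0 with h | h
    · exfalso
      have h2 := hconv ⟨0, hn⟩
      rw [h] at h2
      simp [Real.zero_rpow hne] at h2
    · exact norm_pos_iff.mpr h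
  set M := ‖a tc‖ with hMdef
  -- R bounds
  have hyR : ∀ k : Fin n, ‖y k‖ ≤ R := fun k => hR.2 ⟨k, rfl⟩
  have hRpos : 0 < R := by
    have h1 := hmargin ⟨0, hn⟩
    have h2 := real_inner_le_norm u (y ⟨0, hn⟩)
    rw [hu, one_mul] at h2
    linarith [hyR ⟨0, hn⟩]
  -- key margin property of γ'd
  have hkey : ∀ k : Fin n, γ'd * M ≤ ⟪a tc, y k⟫ := by
    intro k
    have h1 : γ'd ≤ ⟪(M)⁻¹ • a tc, y k⟫ := by
      rw [hγ'd]; exact Finset.inf'_le _ (Finset.mem_univ k)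
    rw [real_inner_smul_left] at h1
    calc γ'd * M ≤ (M⁻¹ * ⟪a tc, y k⟫) * M := by
          apply mul_le_mul_of_nonneg_right h1 hMpos.le
      _ = ⟪a tc, y k⟫ := by field_simp
  -- γ'd > b * M^(-ε)
  have hγ'lb : b * M ^ (-ε) < γ'd := by
    rw [hγ'd, Finset.lt_inf'_iff]
    intro k _
    have h1 := hconv k
    rw [real_inner_smul_left]
    have h2 : b * M ^ (1 - ε) * M⁻¹ < ⟪a tc, y k⟫ * M⁻¹ :=
      mul_lt_mul_of_pos_right h1 (inv_pos.mpr hMpos)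
    have h3 : b * M ^ (1 - ε) * M⁻¹ = b * M ^ (-ε) := by
      rw [mul_assoc, ← Real.rpow_neg_one M, ← Real.rpow_add hMpos,
        show (1 - ε + -1) = -ε by ring]
    rw [h3] at h2
    linarith [h2]
  have hγ'pos : 0 < γ'd := lt_trans (by positivity) hγ'lb
  -- accumulation lemma
  have hacc : ∀ (w : E) (c : ℝ), (∀ k, c ≤ ⟪w, y k⟫) →
      ∀ t, t ≤ tc → c * t ≤ ⟪w, a t⟫ := by
    intro w c hc t
    induction t with
    | zero => intro _; simp [ha0]
    | succ t ih =>
      intro h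
      have h1 : t < tc := h
      obtain ⟨k, hk, -⟩ := hrun t h1
      have h2 := ih h1.le
      have h3 := hc k
      rw [hk, inner_add_right]
      push_cast
      linarith
  -- upper bound on norms
  have hup : ∀ t, t ≤ tc → ‖a t‖ ≤ t * R := by
    intro t
    induction t with
    | zero => intro _; simp [ha0]
    | succ t ih =>
      intro h
      have h1 : t < tc := h
      obtain ⟨k, hk, -⟩ := hrun t h1
      have h2 := ih h1.le
      rw [hk]
      calc ‖a t + y k‖ ≤ ‖a t‖ + ‖y k‖ := norm_add_le _ _
        _ ≤ t * R + R := add_le_add h2 (hyR k)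
        _ = (t + 1 : ℕ) * R := by push_cast; ring
  -- lower bound on norms
  have hlow : ∀ t, t ≤ tc → γ'd * t ≤ ‖a t‖ := by
    intro t ht
    have h1 := hacc (a tc) (γ'd * M) hkey t ht
    have h2 : ⟪a tc, a t⟫ ≤ M * ‖a t‖ := real_inner_le_norm _ _
    nlinarith
  -- γd * tc ≤ M
  have hγdM : γd * tc ≤ M := by
    have h1 := hacc u γd hmargin tc le_rfl
    have h2 : ⟪u, a tc⟫ ≤ ‖u‖ * M := real_inner_le_norm _ _
    rw [hu, one_mul] at h2
    linarith
  -- square to power conversion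
  have hsq : ∀ z : ℝ, 0 ≤ z → (z ^ 2) ^ ((1 + ε)/2) = z ^ (1 + ε) := by
    intro z hz
    rw [← Real.rpow_natCast z 2, ← Real.rpow_mul hz]
    congr 1
    ring
  have hsq' : ∀ z : ℝ, 0 ≤ z → (z ^ 2) ^ ((1 + ε)/2 - 1) = z ^ (ε - 1) := by
    intro z hz
    rw [← Real.rpow_natCast z 2, ← Real.rpow_mul hz]
    congr 1
    ring
  -- the recursion step
  have hstep : ∀ t, 1 ≤ t → t < tc →
      ‖a (t+1)‖ ^ (1 + ε) ≤ ‖a t‖ ^ (1 + ε) + (1 + ε) * b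
        + ((1 + ε)/2) * R ^ 2 * ‖a t‖ ^ (ε - 1) := by
    intro t ht1 httc
    obtain ⟨k, hk, hmis⟩ := hrun t httc
    rw [if_neg (by omega)] at hmis
    have hat : 0 < ‖a t‖ := by
      have h1 := hlow t httc.le
      have h2 : γ'd * 1 ≤ γ'd * t := by
        apply mul_le_mul_of_nonneg_left _ hγ'pos.le
        exact_mod_cast ht1
      nlinarith
    have hsqb : ‖a (t+1)‖ ^ 2 ≤ ‖a t‖ ^ 2 + (2 * b * ‖a t‖ ^ (1 - ε) + R ^ 2) := by
      rw [hk, @norm_add_sq_real]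
      have h1 : ‖y k‖ ^ 2 ≤ R ^ 2 := by
        apply sq_le_sq'
        · linarith [norm_nonneg (y k)]
        · exact hyR k
      nlinarith
    have hynn : (0:ℝ) ≤ 2 * b * ‖a t‖ ^ (1 - ε) + R ^ 2 := by positivity
    have h2 : ‖a (t+1)‖ ^ (1 + ε) ≤ (‖a t‖ ^ 2 + (2 * b * ‖a t‖ ^ (1 - ε) + R ^ 2)) ^ ((1 + ε)/2) := by
      rw [← hsq _ (norm_nonneg _)]
      apply Real.rpow_le_rpow (by positivity) hsqb (by linarith)
    have h3 := aux_bern1 (x := ‖a t‖ ^ 2) (y := 2 * b * ‖a t‖ ^ (1 - ε) + R ^ 2)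
      (p := (1 + ε)/2) (by positivity) hynn (by linarith) (by linarith)
    rw [hsq _ (norm_nonneg _), hsq' _ (norm_nonneg _)] at h3
    have h4 : ((1 + ε)/2) * (2 * b * ‖a t‖ ^ (1 - ε) + R ^ 2) * ‖a t‖ ^ (ε - 1)
        = (1 + ε) * b + ((1 + ε)/2) * R ^ 2 * ‖a t‖ ^ (ε - 1) := by
      have h5 : ‖a t‖ ^ (1 - ε) * ‖a t‖ ^ (ε - 1) = 1 := by
        rw [← Real.rpow_add hat]
        norm_num
      linear_combination (1 + ε) * b * h5
    linarith
  -- the main induction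
  have hE : ∀ m, N ≤ m → m ≤ tc →
      ‖a m‖ ^ (1 + ε) ≤ ((N:ℝ) * R) ^ (1 + ε) + ((m:ℝ) - N) * ((1 + ε) * b)
        + ((1 + ε)/2) * R ^ 2 * γ'd ^ (ε - 1) *
          ∑ t ∈ Finset.Ico N m, (t:ℝ) ^ (ε - 1) := by
    intro m hm
    induction m, hm using Nat.le_induction with
    | base =>
      intro hNtc
      simp only [Finset.Ico_self, Finset.sum_empty, mul_zero, sub_self, zero_mul, add_zero]
      apply Real.rpow_le_rpow (norm_nonneg _) (hup N hNtc) (by linarith)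
    | succ m hm ih =>
      intro hmtc
      have hm1 : m < tc := hmtc
      have ih' := ih hm1.le
      have hst := hstep m (le_trans hN hm) hm1
      have hmpos : 0 < (m:ℝ) := by exact_mod_cast lt_of_lt_of_le hN hm
      have hbd : ‖a m‖ ^ (ε - 1) ≤ γ'd ^ (ε - 1) * (m:ℝ) ^ (ε - 1) := by
        have h1 : γ'd * m ≤ ‖a m‖ := hlow m hm1.le
        have h2 : (γ'd * m) ^ (ε - 1) = γ'd ^ (ε - 1) * (m:ℝ) ^ (ε - 1) :=
          Real.mul_rpow hγ'pos.le hmpos.le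
        rw [← h2]
        exact Real.rpow_le_rpow_of_nonpos (by positivity) h1 (by linarith)
      rw [Finset.sum_Ico_succ_top hm]
      have hcoef : (0:ℝ) ≤ ((1 + ε)/2) * R ^ 2 := by positivity
      have h3 : ((1 + ε)/2) * R ^ 2 * ‖a m‖ ^ (ε - 1)
          ≤ ((1 + ε)/2) * R ^ 2 * (γ'd ^ (ε - 1) * (m:ℝ) ^ (ε - 1)) :=
        mul_le_mul_of_nonneg_left hbd hcoef
      have hexp1 : ((1 + ε)/2) * R ^ 2 * γ'd ^ (ε - 1) *
          ((∑ t ∈ Finset.Ico N m, (t:ℝ) ^ (ε - 1)) + (m:ℝ) ^ (ε - 1))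
          = ((1 + ε)/2) * R ^ 2 * γ'd ^ (ε - 1) * (∑ t ∈ Finset.Ico N m, (t:ℝ) ^ (ε - 1))
            + ((1 + ε)/2) * R ^ 2 * (γ'd ^ (ε - 1) * (m:ℝ) ^ (ε - 1)) := by ring
      have hexp2 : (((m:ℕ):ℝ) + 1 - (N:ℝ)) * ((1 + ε) * b)
          = (((m:ℕ):ℝ) - (N:ℝ)) * ((1 + ε) * b) + (1 + ε) * b := by ring
      push_cast
      linarith [h3, hst, ih', hexp1.le, hexp1.ge, hexp2.le, hexp2.ge]
  -- sum estimate
  have hNtc : N ≤ tc := by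
    rcases hNc with ⟨h, -⟩ | h
    · exact h
    · have hN1 : (1:ℝ) ≤ (N:ℝ) := by exact_mod_cast hN
      have h1 : ε * (N:ℝ)⁻¹ ≤ ε := by
        calc ε * (N:ℝ)⁻¹ ≤ ε * 1 := by
              apply mul_le_mul_of_nonneg_left _ hε.le
              rw [inv_le_one_iff₀]; right; exact hN1
          _ = ε := mul_one ε
      have h2 : (1:ℝ) ≤ (1 - ε * (N:ℝ)⁻¹) / (1 - ε) := by
        rw [le_div_iff₀ (by linarith)]
        linarith
      have h3 : (1:ℝ) ≤ ((1 - ε * (N:ℝ)⁻¹) / (1 - ε)) ^ (1/ε) :=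
        Real.one_le_rpow h2 (by positivity)
      have h4 : (N:ℝ) ≤ (tc:ℝ) := by
        calc (N:ℝ) = (N:ℝ) * 1 := (mul_one _).symm
          _ ≤ (N:ℝ) * ((1 - ε * (N:ℝ)⁻¹) / (1 - ε)) ^ (1/ε) := by
              apply mul_le_mul_of_nonneg_left h3 (by positivity)
          _ ≤ (tc:ℝ) := h
      exact_mod_cast h4
  have hsum : ∑ t ∈ Finset.Ico N tc, (t:ℝ) ^ (ε - 1)
      ≤ (N:ℝ) ^ (ε - 1) + ((tc:ℝ) ^ ε - (N:ℝ) ^ ε) / ε := by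
    rcases eq_or_lt_of_le hNtc with h | h
    · subst h
      simp [Finset.Ico_self]
      positivity
    · have hN1tc : N + 1 ≤ tc := h
      rw [Finset.sum_eq_sum_Ico_succ_bot h]
      have hbd : ∑ t ∈ Finset.Ico (N+1) tc, (t:ℝ) ^ (ε - 1)
          ≤ (((tc:ℝ) - 1) ^ ε - (N:ℝ) ^ ε) / ε := by
        have h1 : ∀ t ∈ Finset.Ico (N+1) tc, (t:ℝ) ^ (ε - 1)
            ≤ ((t:ℝ) ^ ε - ((t:ℝ) - 1) ^ ε) / ε := by
          intro t ht
          rw [Finset.mem_Ico] at ht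
          have ht1 : (1:ℝ) ≤ (t:ℝ) := by
            have : 1 ≤ t := le_trans (by omega) ht.1
            exact_mod_cast this
          have := aux_bern2 ht1 hε hε1
          rw [le_div_iff₀ hε]
          linarith
        calc ∑ t ∈ Finset.Ico (N+1) tc, (t:ℝ) ^ (ε - 1)
            ≤ ∑ t ∈ Finset.Ico (N+1) tc, ((t:ℝ) ^ ε - ((t:ℝ) - 1) ^ ε) / ε :=
              Finset.sum_le_sum h1
          _ = (∑ t ∈ Finset.Ico (N+1) tc, ((t:ℝ) ^ ε - ((t:ℝ) - 1) ^ ε)) / ε := by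
              rw [Finset.sum_div]
          _ = (((tc:ℝ) - 1) ^ ε - (N:ℝ) ^ ε) / ε := by
              congr 1
              rw [Finset.sum_Ico_eq_sum_range]
              have hts := Finset.sum_range_sub (fun j => ((N + j : ℕ):ℝ) ^ ε) (tc - (N+1))
              have heq : ∑ i ∈ Finset.range (tc - (N+1)),
                    (((N + 1 + i : ℕ):ℝ) ^ ε - (((N + 1 + i : ℕ):ℝ) - 1) ^ ε)
                  = ∑ i ∈ Finset.range (tc - (N+1)),
                    (((N + (i+1) : ℕ):ℝ) ^ ε - ((N + i : ℕ):ℝ) ^ ε) := by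
                apply Finset.sum_congr rfl
                intro i _
                congr 2 <;> push_cast <;> ring
              rw [heq, hts, show N + (tc - (N+1)) = tc - 1 by omega, Nat.add_zero]
              have h2 : (((tc - 1 : ℕ)):ℝ) = (tc:ℝ) - 1 := by
                push_cast [Nat.cast_sub htc]
                ring
              rw [h2]
      have htc1 : (1:ℝ) ≤ (tc:ℝ) := by exact_mod_cast htc
      have h2 : (((tc:ℝ) - 1) ^ ε - (N:ℝ) ^ ε) / ε ≤ ((tc:ℝ) ^ ε - (N:ℝ) ^ ε) / ε := by
        have hx : ((tc:ℝ) - 1) ^ ε ≤ (tc:ℝ) ^ ε :=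
          Real.rpow_le_rpow (by linarith) (by linarith) hε.le
        rw [div_le_div_iff_of_pos_right hε]
        linarith
      have h3 : (0:ℝ) ≤ (N:ℝ) ^ (ε - 1) := by positivity
      linarith
  -- combine everything
  have hNpos : (0:ℝ) < (N:ℝ) := by exact_mod_cast hN
  have htcpos : (0:ℝ) < (tc:ℝ) := by exact_mod_cast htc
  obtain ⟨S, hSdef⟩ : ∃ S : ℝ, S = (N : ℝ) ^ (1 + ε)
        + ((1 + ε) / (2 * ε)) * (R / γ'd) ^ (1 - ε) *
            ((tc : ℝ) ^ ε - ((N : ℝ) - ε) / (N : ℝ) ^ (1 - ε)) := ⟨_, rfl⟩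
  have eN1 : (N:ℝ) ^ ε * (N:ℝ) ^ (1 - ε) = (N:ℝ) := by
    rw [← Real.rpow_add hNpos, show ε + (1 - ε) = 1 by ring, Real.rpow_one]
  have eN2 : (N:ℝ) ^ (ε - 1) * (N:ℝ) ^ (1 - ε) = 1 := by
    rw [← Real.rpow_add hNpos, show ε - 1 + (1 - ε) = 0 by ring, Real.rpow_zero]
  have idN : ((N:ℝ) - ε) / (N:ℝ) ^ (1 - ε) = (N:ℝ) ^ ε - ε * (N:ℝ) ^ (ε - 1) := by
    rw [div_eq_iff (ne_of_gt (Real.rpow_pos_of_pos hNpos _))]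
    linear_combination -eN1 + ε * eN2
  have eR : R ^ 2 = R ^ (1 + ε) * R ^ (1 - ε) := by
    rw [← Real.rpow_add hRpos, show (1 + ε) + (1 - ε) = 2 by ring,
      ← Real.rpow_natCast R 2]
    norm_num
  have eQ : (R / γ'd) ^ (1 - ε) = R ^ (1 - ε) * γ'd ^ (ε - 1) := by
    rw [Real.div_rpow hRpos.le hγ'pos.le, show ε - 1 = -(1 - ε) by ring,
      Real.rpow_neg hγ'pos.le, div_eq_mul_inv]
  have hEQ : ((1 + ε)/2) * R ^ 2 * γ'd ^ (ε - 1) *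
        ((N:ℝ) ^ (ε - 1) + ((tc:ℝ) ^ ε - (N:ℝ) ^ ε) / ε)
      = R ^ (1 + ε) * (((1 + ε) / (2 * ε)) * ((R / γ'd) ^ (1 - ε)) *
          ((tc:ℝ) ^ ε - ((N:ℝ) ^ ε - ε * (N:ℝ) ^ (ε - 1)))) := by
    rw [eQ, eR]
    field_simp
    ring
  have hNR : ((N:ℝ) * R) ^ (1 + ε) = (N:ℝ) ^ (1 + ε) * R ^ (1 + ε) :=
    Real.mul_rpow hNpos.le hRpos.le
  have hKey : M ^ (1 + ε) ≤ R ^ (1 + ε) * S + (1 + ε) * b * tc := by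
    have h1 := hE tc hNtc le_rfl
    have hC : (0:ℝ) ≤ ((1 + ε)/2) * R ^ 2 * γ'd ^ (ε - 1) := by positivity
    have h2 : ((1 + ε)/2) * R ^ 2 * γ'd ^ (ε - 1) *
          (∑ t ∈ Finset.Ico N tc, (t:ℝ) ^ (ε - 1))
        ≤ ((1 + ε)/2) * R ^ 2 * γ'd ^ (ε - 1) *
          ((N:ℝ) ^ (ε - 1) + ((tc:ℝ) ^ ε - (N:ℝ) ^ ε) / ε) :=
      mul_le_mul_of_nonneg_left hsum hC
    have h3 : ((tc:ℝ) - (N:ℝ)) * ((1 + ε) * b) ≤ (tc:ℝ) * ((1 + ε) * b) := by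
      apply mul_le_mul_of_nonneg_right _ (by positivity)
      linarith
    have h4 : R ^ (1 + ε) * S = (N:ℝ) ^ (1 + ε) * R ^ (1 + ε)
        + R ^ (1 + ε) * (((1 + ε) / (2 * ε)) * ((R / γ'd) ^ (1 - ε)) *
            ((tc:ℝ) ^ ε - ((N:ℝ) ^ ε - ε * (N:ℝ) ^ (ε - 1)))) := by
      rw [hSdef, idN]
      ring
    have h5 : (tc:ℝ) * ((1 + ε) * b) = (1 + ε) * b * tc := by ring
    have h0 : M ^ (1 + ε) = ‖a tc‖ ^ (1 + ε) := rfl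
    linarith [h0.le, h0.ge, h1, h2, h3]
  -- final derivation
  have hMε : (0:ℝ) < M ^ (-ε) := Real.rpow_pos_of_pos hMpos _
  have hM1ε : (0:ℝ) < M ^ (1 + ε) := Real.rpow_pos_of_pos hMpos _
  have hKpos : (0:ℝ) < R ^ (1 + ε) * S + (1 + ε) * b * tc := lt_of_lt_of_le hM1ε hKey
  have hX : (R ^ (1 + ε) / b) * S * (tc:ℝ)⁻¹ + 1 + ε
      = (R ^ (1 + ε) * S + (1 + ε) * b * tc) / (b * tc) := by
    have := aux_div (x := R ^ (1 + ε)) (S := S) (c := 1 + ε) hb.ne' htcpos.ne'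
    calc (R ^ (1 + ε) / b) * S * (tc:ℝ)⁻¹ + 1 + ε
        = (R ^ (1 + ε) / b) * S * (tc:ℝ)⁻¹ + (1 + ε) := by ring
      _ = (R ^ (1 + ε) * S + (1 + ε) * b * tc) / (b * tc) := by rw [this]
  have hdd : γd / γ'd ≤ (R ^ (1 + ε) * S + (1 + ε) * b * tc) / (b * tc) := by
    have h1 : γd ≤ M / tc := by
      rw [le_div_iff₀ htcpos]
      linarith [hγdM]
    have eM : M ^ (1 + ε) = M * M ^ ε := by
      rw [Real.rpow_add hMpos, Real.rpow_one]
    have h2 : γd / γ'd ≤ (M / tc) / (b * M ^ (-ε)) := by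
      apply div_le_div₀ (by positivity) h1 (by positivity) hγ'lb.le
    have h3 : (M / tc) / (b * M ^ (-ε)) = M ^ (1 + ε) / (b * tc) := by
      rw [Real.rpow_neg hMpos.le, eM]
      exact aux_div2 htcpos.ne' hb.ne' (Real.rpow_pos_of_pos hMpos ε).ne'
    have h4 : M ^ (1 + ε) / (b * tc) ≤ (R ^ (1 + ε) * S + (1 + ε) * b * tc) / (b * tc) := by
      exact (div_le_div_iff_of_pos_right (by positivity)).mpr hKey
    calc γd / γ'd ≤ (M / tc) / (b * M ^ (-ε)) := h2
      _ = M ^ (1 + ε) / (b * tc) := h3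
      _ ≤ _ := h4
  rw [ge_iff_le, ← hSdef, hX]
  have hq : 0 < γd / γ'd := by positivity
  calc ((R ^ (1 + ε) * S + (1 + ε) * b * tc) / (b * tc))⁻¹
      ≤ (γd / γ'd)⁻¹ := by
        apply inv_anti₀ hq hdd
    _ = γ'd / γd := by rw [inv_div]
end

section
/- Let 1 < ε < 2 and b > 0, and let a : ℕ → E be a t-margitron run of length T. Then T ≤ R²/γ_d² + ((2/(2−ε))·b/γ_d²)^(1/ε). Moreover, if the run has converged after t_c ≥ 1 updates, i.e. ⟨a_{t_c}, y_k⟩ > b·t_c^(1−ε) for every k, then the achieved directional margin γ'_d := min_k ⟨a_{t_c}/‖a_{t_c}‖, y_k⟩ satisfies γ'_d/γ_d ≥ ( (R²/b)·T_b^(ε−1) + 2/(2−ε) )^(−1), where T_b = R²/γ_d² + ((2/(2−ε))·b/γ_d²)^(1/ε). -/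
open scoped RealInnerProductSpace

set_option maxHeartbeats 1000000

lemma stmt16_aux {p x : ℝ} (hp0 : 0 < p) (hp1 : p ≤ 1) (hx : 1 ≤ x) :
    p * x ^ (p - 1) ≤ x ^ p - (x - 1) ^ p := by
  have hx0 : (0:ℝ) < x := lt_of_lt_of_le one_pos hx
  have hs : -1 ≤ -(1/x) := by
    rw [neg_le_neg_iff]
    exact div_le_one_of_le₀ hx hx0.le
  have hbern := rpow_one_add_le_one_add_mul_self hs hp0.le hp1
  have h1 : (0:ℝ) ≤ 1 + -(1/x) := by
    have := div_le_one_of_le₀ hx hx0.le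
    linarith
  have hmul := mul_le_mul_of_nonneg_left hbern (Real.rpow_nonneg hx0.le p)
  have hxe : x ^ p * (1 + -(1/x)) ^ p = (x - 1) ^ p := by
    rw [← Real.mul_rpow hx0.le h1]
    congr 1
    field_simp
    ring
  have hx1 : x ^ p * (1/x) = x ^ (p - 1) := by
    rw [Real.rpow_sub hx0, Real.rpow_one]
    ring
  calc p * x ^ (p-1) = x ^ p - x ^ p * (1 + p * -(1/x)) := by
        rw [← hx1]; ring
    _ ≤ x ^ p - (x-1) ^ p := by
        rw [← hxe]; linarith

lemma stmt16_aux' {ε x : ℝ} (hε : 1 ≤ ε) (hε2 : ε < 2) (hx : 1 ≤ x) :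
    (2-ε) * x ^ (1-ε) ≤ x ^ (2-ε) - (x-1) ^ (2-ε) := by
  have h := stmt16_aux (p := 2-ε) (x := x) (by linarith) (by linarith) hx
  have he : (2-ε) - 1 = 1 - ε := by ring
  rwa [he] at h

/-- a t-margitron run with 1 < ε < 2 has length
T ≤ T_b := R²/γ_d² + ((2/(2−ε))·b/γ_d²)^(1/ε); if moreover it has converged after
T ≥ 1 updates then γ'_d/γ_d ≥ ((R²/b)·T_b^(ε−1) + 2/(2−ε))⁻¹. -/
theorem stmt16 {E : Type*} [NormedAddCommGroup E] [InnerProductSpace ℝ E]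
    {n : ℕ} (hn : 0 < n) (y : Fin n → E)
    (R : ℝ) (hR : IsGreatest (Set.range (fun k : Fin n => ‖y k‖)) R)
    (u : E) (hu : ‖u‖ = 1) (γd : ℝ) (hγd : 0 < γd)
    (hmargin : ∀ k : Fin n, γd ≤ ⟪u, y k⟫)
    (ε b : ℝ) (hε : 1 < ε) (hε2 : ε < 2) (hb : 0 < b)
    (T : ℕ) (a : ℕ → E) (ha0 : a 0 = 0)
    (hrun : ∀ t : ℕ, t < T → ∃ k : Fin n, a (t + 1) = a t + y k ∧
      ⟪a t, y k⟫ ≤ if t = 0 then 0 else b * (t : ℝ) ^ (1 - ε))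
    (Tb : ℝ) (hTb : Tb = R ^ 2 / γd ^ 2 + ((2 / (2 - ε)) * b / γd ^ 2) ^ (1 / ε)) :
    (T : ℝ) ≤ Tb ∧
    (1 ≤ T → (∀ k : Fin n, b * (T : ℝ) ^ (1 - ε) < ⟪a T, y k⟫) →
      (Finset.univ.inf' (Finset.univ_nonempty_iff.mpr ⟨⟨0, hn⟩⟩)
          (fun k : Fin n => ⟪(‖a T‖)⁻¹ • a T, y k⟫)) / γd ≥
        ((R ^ 2 / b) * Tb ^ (ε - 1) + 2 / (2 - ε))⁻¹) := by
  have hp0 : (0:ℝ) < 2 - ε := by linarith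
  have hRk : ∀ k : Fin n, ‖y k‖ ≤ R := fun k => hR.2 ⟨k, rfl⟩
  have hR0 : 0 < R := by
    have h1 := hmargin ⟨0, hn⟩
    have h2 := real_inner_le_norm u (y ⟨0, hn⟩)
    have h3 := hRk ⟨0, hn⟩
    rw [hu, one_mul] at h2
    linarith
  -- Step A: γd * t ≤ ⟪u, a t⟫ for t ≤ T
  have hA : ∀ t : ℕ, t ≤ T → γd * t ≤ ⟪u, a t⟫ := by
    intro t
    induction t with
    | zero => intro _; simp [ha0]
    | succ t ih =>
      intro h
      obtain ⟨k, hk, -⟩ := hrun t (by omega)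
      have h1 := ih (by omega)
      have h2 := hmargin k
      rw [hk, inner_add_right]
      push_cast
      linarith
  have hAn : ∀ t : ℕ, t ≤ T → γd * t ≤ ‖a t‖ := by
    intro t ht
    have h1 := hA t ht
    have h2 := real_inner_le_norm u (a t)
    rw [hu, one_mul] at h2
    linarith
  -- Step B: norm-squared bound
  have hB : ∀ t : ℕ, 1 ≤ t → t ≤ T →
      ‖a t‖ ^ 2 ≤ R ^ 2 * t + (2 * b / (2 - ε)) * ((t:ℝ) - 1) ^ (2 - ε) := by
    intro t
    induction t with
    | zero => omega
    | succ t ih =>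
      intro _ hle
      obtain ⟨k, hk, hmis⟩ := hrun t (by omega)
      have hsq : ‖a (t+1)‖ ^ 2 = ‖a t‖ ^ 2 + 2 * ⟪a t, y k⟫ + ‖y k‖ ^ 2 := by
        rw [hk]; exact norm_add_sq_real (a t) (y k)
      have hyk : ‖y k‖ ^ 2 ≤ R ^ 2 := by
        have := hRk k
        nlinarith [norm_nonneg (y k)]
      rcases Nat.eq_zero_or_pos t with ht0 | ht1
      · subst ht0
        rw [if_pos rfl] at hmis
        rw [ha0] at hsq
        simp only [inner_zero_left, norm_zero] at hsq
        push_cast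
        have h0p : ((1:ℝ) - 1) ^ (2 - ε) = 0 := by
          rw [sub_self, Real.zero_rpow (ne_of_gt hp0)]
        rw [h0p]
        rw [ha0] at hmis
        simp only [inner_zero_left] at hmis
        nlinarith
      · rw [if_neg (by omega)] at hmis
        have hih := ih ht1 (by omega)
        have ht1' : (1:ℝ) ≤ (t:ℝ) := by exact_mod_cast ht1
        have haux := stmt16_aux' hε.le hε2 ht1'
        have hkey : 2 * (b * (t:ℝ) ^ (1-ε)) + (2*b/(2-ε)) * ((t:ℝ)-1) ^ (2-ε)
            ≤ (2*b/(2-ε)) * (t:ℝ) ^ (2-ε) := by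
          have h := mul_le_mul_of_nonneg_left haux (by positivity : (0:ℝ) ≤ 2*b/(2-ε))
          have he : 2*b/(2-ε) * ((2-ε) * (t:ℝ) ^ (1-ε)) = 2 * (b * (t:ℝ) ^ (1-ε)) := by
            field_simp
          rw [he] at h
          linarith
        push_cast
        have hc : ((t:ℝ) + 1) - 1 = (t:ℝ) := by ring
        rw [hc]
        nlinarith
  -- Part 1
  have hTbA : 0 ≤ ((2 / (2 - ε)) * b / γd ^ 2) ^ (1 / ε) :=
    Real.rpow_nonneg (by positivity) _
  have part1 : (T:ℝ) ≤ Tb := by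
    rcases Nat.eq_zero_or_pos T with hT0 | hT1
    · subst hT0
      simp only [Nat.cast_zero]
      rw [hTb]
      positivity
    · have hTpos : (0:ℝ) < T := by exact_mod_cast hT1
      have hT1' : (1:ℝ) ≤ (T:ℝ) := by exact_mod_cast hT1
      have h1 := hAn T le_rfl
      have h2 := hB T hT1 le_rfl
      have h3 : ((T:ℝ) - 1) ^ (2-ε) ≤ (T:ℝ) ^ (2-ε) :=
        Real.rpow_le_rpow (by linarith) (by linarith) hp0.le
      have hTp : (T:ℝ) ^ (2-ε) = (T:ℝ) ^ (1-ε) * T := by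
        rw [← Real.rpow_add_one (ne_of_gt hTpos)]
        congr 1
        ring
      have h2' : ‖a T‖ ^ 2 ≤ R ^ 2 * T + (2*b/(2-ε)) * ((T:ℝ) ^ (1-ε) * T) := by
        rw [← hTp]
        have := mul_le_mul_of_nonneg_left h3 (by positivity : (0:ℝ) ≤ 2*b/(2-ε))
        linarith
      have h4 : (γd * (T:ℝ)) ^ 2 ≤ ‖a T‖ ^ 2 :=
        pow_le_pow_left₀ (by positivity) h1 2
      have h5 : γd ^ 2 * (T:ℝ) ≤ R ^ 2 + (2*b/(2-ε)) * (T:ℝ) ^ (1-ε) := by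
        apply le_of_mul_le_mul_right _ hTpos
        nlinarith
      have hg2 : (0:ℝ) < γd ^ 2 := by positivity
      have h6 : (T:ℝ) ≤ R ^ 2 / γd ^ 2 + ((2*b/(2-ε)) / γd ^ 2) * (T:ℝ) ^ (1-ε) := by
        apply le_of_mul_le_mul_left _ hg2
        have heq : γd ^ 2 * (R ^ 2 / γd ^ 2 + ((2*b/(2-ε)) / γd ^ 2) * (T:ℝ) ^ (1-ε))
            = R ^ 2 + (2*b/(2-ε)) * (T:ℝ) ^ (1-ε) := by
          field_simp
        rw [heq]
        linarith
      have hDeq : (2 / (2 - ε)) * b / γd ^ 2 = (2*b/(2-ε)) / γd ^ 2 := by ring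
      rw [hTb, hDeq]
      by_cases hTA : (T:ℝ) ≤ R ^ 2 / γd ^ 2
      · have : (0:ℝ) ≤ ((2*b/(2-ε)) / γd ^ 2) ^ (1/ε) :=
          Real.rpow_nonneg (by positivity) _
        linarith
      · push_neg at hTA
        have hs0 : (0:ℝ) < (T:ℝ) - R ^ 2 / γd ^ 2 := by linarith
        have hD0 : (0:ℝ) < (2*b/(2-ε)) / γd ^ 2 := by positivity
        have h8 : (T:ℝ) ^ (1-ε) ≤ ((T:ℝ) - R ^ 2 / γd ^ 2) ^ (1-ε) := by
          apply Real.rpow_le_rpow_of_nonpos hs0 _ (by linarith)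
          have : (0:ℝ) ≤ R ^ 2 / γd ^ 2 := by positivity
          linarith
        have h9 : (T:ℝ) - R ^ 2 / γd ^ 2
            ≤ ((2*b/(2-ε)) / γd ^ 2) * ((T:ℝ) - R ^ 2 / γd ^ 2) ^ (1-ε) := by
          calc (T:ℝ) - R ^ 2 / γd ^ 2 ≤ ((2*b/(2-ε)) / γd ^ 2) * (T:ℝ) ^ (1-ε) := by
                linarith
            _ ≤ _ := mul_le_mul_of_nonneg_left h8 hD0.le
        have h10 : ((T:ℝ) - R ^ 2 / γd ^ 2) ^ ε ≤ (2*b/(2-ε)) / γd ^ 2 := by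
          have hse : ((T:ℝ) - R ^ 2 / γd ^ 2) ^ ε
              = ((T:ℝ) - R ^ 2 / γd ^ 2) ^ (ε-1) * ((T:ℝ) - R ^ 2 / γd ^ 2) := by
            rw [← Real.rpow_add_one (ne_of_gt hs0)]
            congr 1
            ring
          have hcancel : ((T:ℝ) - R ^ 2 / γd ^ 2) ^ (1-ε) * ((T:ℝ) - R ^ 2 / γd ^ 2) ^ (ε-1)
              = 1 := by
            rw [← Real.rpow_add hs0]
            norm_num
          calc ((T:ℝ) - R ^ 2 / γd ^ 2) ^ ε
              = ((T:ℝ) - R ^ 2 / γd ^ 2) ^ (ε-1) * ((T:ℝ) - R ^ 2 / γd ^ 2) := hse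
            _ ≤ ((T:ℝ) - R ^ 2 / γd ^ 2) ^ (ε-1)
                * (((2*b/(2-ε)) / γd ^ 2) * ((T:ℝ) - R ^ 2 / γd ^ 2) ^ (1-ε)) :=
                mul_le_mul_of_nonneg_left h9 (Real.rpow_nonneg hs0.le _)
            _ = ((2*b/(2-ε)) / γd ^ 2)
                * (((T:ℝ) - R ^ 2 / γd ^ 2) ^ (1-ε) * ((T:ℝ) - R ^ 2 / γd ^ 2) ^ (ε-1)) := by
                ring
            _ = (2*b/(2-ε)) / γd ^ 2 := by rw [hcancel, mul_one]
        have h11 : (T:ℝ) - R ^ 2 / γd ^ 2 ≤ ((2*b/(2-ε)) / γd ^ 2) ^ (1/ε) := by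
          have h := Real.rpow_le_rpow (Real.rpow_nonneg hs0.le ε) h10
            (by positivity : (0:ℝ) ≤ 1/ε)
          rwa [← Real.rpow_mul hs0.le, mul_one_div_cancel (by linarith : ε ≠ 0),
            Real.rpow_one] at h
        linarith
  refine ⟨part1, ?_⟩
  -- Part 2
  intro hT1 hconv
  have hTpos : (0:ℝ) < T := by exact_mod_cast hT1
  have hT1' : (1:ℝ) ≤ (T:ℝ) := by exact_mod_cast hT1
  have hNpos : 0 < ‖a T‖ := by
    have := hAn T le_rfl
    nlinarith
  have hm : b * (T:ℝ) ^ (1-ε) / ‖a T‖ ≤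
      (Finset.univ.inf' (Finset.univ_nonempty_iff.mpr ⟨⟨0, hn⟩⟩)
        (fun k : Fin n => ⟪(‖a T‖)⁻¹ • a T, y k⟫)) := by
    apply Finset.le_inf'
    intro k _
    rw [real_inner_smul_left, inv_mul_eq_div]
    exact (div_le_div_iff_of_pos_right hNpos).mpr (hconv k).le
  have hTbpos : 0 < Tb := lt_of_lt_of_le hTpos part1
  have hQpos : 0 < (R ^ 2 / b) * Tb ^ (ε - 1) + 2 / (2 - ε) := by
    have : 0 < Tb ^ (ε - 1) := Real.rpow_pos_of_pos hTbpos _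
    positivity
  rw [ge_iff_le, le_div_iff₀ hγd, inv_mul_le_iff₀ hQpos]
  -- goal: γd ≤ Q * m
  have h1 := hAn T le_rfl
  have h2 := hB T hT1 le_rfl
  have h3 : ((T:ℝ) - 1) ^ (2-ε) ≤ (T:ℝ) ^ (2-ε) :=
    Real.rpow_le_rpow (by linarith) (by linarith) hp0.le
  have hTp : (T:ℝ) ^ (2-ε) = (T:ℝ) ^ (1-ε) * T := by
    rw [← Real.rpow_add_one (ne_of_gt hTpos)]
    congr 1
    ring
  have h2' : ‖a T‖ ^ 2 ≤ R ^ 2 * T + (2*b/(2-ε)) * ((T:ℝ) ^ (1-ε) * T) := by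
    rw [← hTp]
    have := mul_le_mul_of_nonneg_left h3 (by positivity : (0:ℝ) ≤ 2*b/(2-ε))
    linarith
  have h5 : γd * ‖a T‖ ≤ R ^ 2 + (2*b/(2-ε)) * (T:ℝ) ^ (1-ε) := by
    apply le_of_mul_le_mul_right _ hTpos
    calc γd * ‖a T‖ * T = ‖a T‖ * (γd * T) := by ring
      _ ≤ ‖a T‖ * ‖a T‖ := mul_le_mul_of_nonneg_left h1 hNpos.le
      _ = ‖a T‖ ^ 2 := by ring
      _ ≤ R ^ 2 * T + (2*b/(2-ε)) * ((T:ℝ) ^ (1-ε) * T) := h2'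
      _ = (R ^ 2 + 2*b/(2-ε) * (T:ℝ) ^ (1-ε)) * T := by ring
  have h6 : (T:ℝ) ^ (ε-1) ≤ Tb ^ (ε-1) :=
    Real.rpow_le_rpow hTpos.le part1 (by linarith)
  have hcancel : (T:ℝ) ^ (ε-1) * (T:ℝ) ^ (1-ε) = 1 := by
    rw [← Real.rpow_add hTpos]
    norm_num
  have h7 : R ^ 2 + (2*b/(2-ε)) * (T:ℝ) ^ (1-ε)
      ≤ ((R ^ 2 / b) * Tb ^ (ε-1) + 2/(2-ε)) * (b * (T:ℝ) ^ (1-ε)) := by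
    have hQb : ((R ^ 2 / b) * Tb ^ (ε-1) + 2/(2-ε)) * (b * (T:ℝ) ^ (1-ε))
        = R ^ 2 * (Tb ^ (ε-1) * (T:ℝ) ^ (1-ε)) + (2*b/(2-ε)) * (T:ℝ) ^ (1-ε) := by
      field_simp
    rw [hQb]
    have hge : (1:ℝ) ≤ Tb ^ (ε-1) * (T:ℝ) ^ (1-ε) :=
      calc (1:ℝ) = (T:ℝ) ^ (ε-1) * (T:ℝ) ^ (1-ε) := hcancel.symm
        _ ≤ Tb ^ (ε-1) * (T:ℝ) ^ (1-ε) :=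
            mul_le_mul_of_nonneg_right h6 (Real.rpow_nonneg hTpos.le _)
    nlinarith [sq_nonneg R]
  calc γd = γd * ‖a T‖ / ‖a T‖ := by field_simp
    _ ≤ ((R ^ 2 / b) * Tb ^ (ε-1) + 2/(2-ε)) * (b * (T:ℝ) ^ (1-ε)) / ‖a T‖ :=
        (div_le_div_iff_of_pos_right hNpos).mpr (le_trans h5 h7)
    _ = ((R ^ 2 / b) * Tb ^ (ε-1) + 2/(2-ε)) * (b * (T:ℝ) ^ (1-ε) / ‖a T‖) := by ring
    _ ≤ _ := mul_le_mul_of_nonneg_left hm hQpos.le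
end

section
/- Let 1 < ε < 2 and b > 0, and let a : ℕ → E be an ℓ-margitron run of length T. Then T ≤ R²/γ_d² + ((2/(2−ε))·b/γ_d^(1+ε))^(1/ε). Moreover, if the run has converged after t_c ≥ 1 updates, i.e. ⟨a_{t_c}, y_k⟩ > b·‖a_{t_c}‖^(1−ε) for every k, then the achieved directional margin γ'_d := min_k ⟨a_{t_c}/‖a_{t_c}‖, y_k⟩ satisfies γ'_d/γ_d ≥ ( (R²/(b·γ_d^(1−ε)))·T_b^(ε−1) + 2/(2−ε) )^(−1), where T_b = R²/γ_d² + ((2/(2−ε))·b/γ_d^(1+ε))^(1/ε). -/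
open scoped RealInnerProductSpace

private lemma bern_aux {m p : ℝ} (hm : 0 ≤ m) (hp0 : 0 < p) (hp1 : p ≤ 1) :
    m ^ p + p * (m + 1) ^ (p - 1) ≤ (m + 1) ^ p := by
  have hm1 : (0:ℝ) < m + 1 := by linarith
  have hs : (-1:ℝ) ≤ -(1/(m+1)) := by
    rw [neg_le_neg_iff, div_le_one hm1]; linarith
  have h := rpow_one_add_le_one_add_mul_self hs hp0.le hp1
  have hbase : 1 + -(1/(m+1)) = m / (m+1) := by field_simp; ring
  rw [hbase, Real.div_rpow hm hm1.le] at h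
  have hpos : (0:ℝ) < (m+1) ^ p := Real.rpow_pos_of_pos hm1 p
  rw [div_le_iff₀ hpos] at h
  have h3 : (m+1) ^ (p-1) = (m+1)^p / (m+1) := by
    rw [Real.rpow_sub hm1, Real.rpow_one]
  rw [h3]
  have hexp : (1 + p * -(1/(m+1))) * (m+1)^p = (m+1)^p - p * ((m+1)^p/(m+1)) := by
    field_simp; ring
  linarith [hexp ▸ h]

set_option maxHeartbeats 1000000 in
/-- an ℓ-margitron run with 1 < ε < 2 has length
T ≤ T_b := R²/γ_d² + ((2/(2−ε))·b/γ_d^(1+ε))^(1/ε); if moreover it has converged after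
T ≥ 1 updates then γ'_d/γ_d ≥ ((R²/(b·γ_d^(1−ε)))·T_b^(ε−1) + 2/(2−ε))⁻¹. -/
theorem stmt17 {E : Type*} [NormedAddCommGroup E] [InnerProductSpace ℝ E]
    {n : ℕ} (hn : 0 < n) (y : Fin n → E)
    (R : ℝ) (hR : IsGreatest (Set.range (fun k : Fin n => ‖y k‖)) R)
    (u : E) (hu : ‖u‖ = 1) (γd : ℝ) (hγd : 0 < γd)
    (hmargin : ∀ k : Fin n, γd ≤ ⟪u, y k⟫)
    (ε b : ℝ) (hε : 1 < ε) (hε2 : ε < 2) (hb : 0 < b)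
    (T : ℕ) (a : ℕ → E) (ha0 : a 0 = 0)
    (hrun : ∀ t : ℕ, t < T → ∃ k : Fin n, a (t + 1) = a t + y k ∧
      ⟪a t, y k⟫ ≤ if t = 0 then 0 else b * ‖a t‖ ^ (1 - ε))
    (Tb : ℝ)
    (hTb : Tb = R ^ 2 / γd ^ 2 + ((2 / (2 - ε)) * b / γd ^ (1 + ε)) ^ (1 / ε)) :
    (T : ℝ) ≤ Tb ∧
    (1 ≤ T → (∀ k : Fin n, b * ‖a T‖ ^ (1 - ε) < ⟪a T, y k⟫) →
      (Finset.univ.inf' (Finset.univ_nonempty_iff.mpr ⟨⟨0, hn⟩⟩)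
          (fun k : Fin n => ⟪(‖a T‖)⁻¹ • a T, y k⟫)) / γd ≥
        ((R ^ 2 / (b * γd ^ (1 - ε))) * Tb ^ (ε - 1) + 2 / (2 - ε))⁻¹) := by
  have hεpos : (0:ℝ) < ε := by linarith
  have h2ε : (0:ℝ) < 2 - ε := by linarith
  have hp1 : 2 - ε ≤ 1 := by linarith
  have hyR : ∀ k : Fin n, ‖y k‖ ≤ R := fun k => hR.2 ⟨k, rfl⟩
  set K : ℝ := 2 * b * γd ^ (1 - ε) / (2 - ε) with hKdef
  set C : ℝ := (2 / (2 - ε)) * b / γd ^ (1 + ε) with hCdef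
  have hγpow : ∀ z : ℝ, 0 < γd ^ z := fun z => Real.rpow_pos_of_pos hγd z
  have hKpos : 0 < K :=
    div_pos (mul_pos (by linarith : (0:ℝ) < 2 * b) (hγpow _)) h2ε
  have hCpos : 0 < C :=
    div_pos (mul_pos (div_pos two_pos h2ε) hb) (hγpow _)
  have hTbpos : 0 < Tb := by
    rw [hTb]
    have h1 : (0:ℝ) ≤ R ^ 2 / γd ^ 2 := by positivity
    have h2 : (0:ℝ) < C ^ (1 / ε) := Real.rpow_pos_of_pos hCpos _
    linarith
  have hγs : γd ^ (1 + ε) * γd ^ (1 - ε) = γd ^ 2 := by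
    rw [← Real.rpow_add hγd, show (1 + ε) + (1 - ε) = ((2:ℕ):ℝ) by push_cast; ring,
      Real.rpow_natCast]
  have hKC : K = C * γd ^ 2 := by
    rw [hKdef, hCdef]
    field_simp
    linear_combination hγs
  -- the main induction
  have key : ∀ t : ℕ, t ≤ T → (t:ℝ) * γd ≤ ⟪u, a t⟫ ∧
      ‖a t‖ ^ 2 ≤ (t:ℝ) * R ^ 2 + K * ((t - 1 : ℕ) : ℝ) ^ (2 - ε) := by
    intro t
    induction t with
    | zero =>
      intro _
      constructor
      · simp [ha0]
      · simp [ha0, Real.zero_rpow (by linarith : (2:ℝ) - ε ≠ 0)]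
    | succ t ih =>
      intro hle
      obtain ⟨k, hstep, hmis⟩ := hrun t (by omega)
      obtain ⟨ih1, ih2⟩ := ih (by omega)
      have hinner : ⟪u, a (t+1)⟫ = ⟪u, a t⟫ + ⟪u, y k⟫ := by
        rw [hstep, inner_add_right]
      have part1 : ((t+1 : ℕ):ℝ) * γd ≤ ⟪u, a (t+1)⟫ := by
        rw [hinner]; push_cast
        have := hmargin k
        linarith
      refine ⟨part1, ?_⟩
      have hexp : ‖a (t+1)‖ ^ 2 = ‖a t‖ ^ 2 + 2 * ⟪a t, y k⟫ + ‖y k‖ ^ 2 := by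
        rw [hstep]; exact norm_add_sq_real _ _
      have hy2 : ‖y k‖ ^ 2 ≤ R ^ 2 := by
        have := hyR k
        nlinarith [norm_nonneg (y k)]
      have hgoalcast : (t + 1 - 1 : ℕ) = t := by omega
      rw [hgoalcast]
      rcases Nat.eq_zero_or_pos t with ht0 | ht1
      · subst ht0
        rw [if_pos rfl, ha0, inner_zero_left] at hmis
        rw [ha0] at hexp
        simp only [inner_zero_left, norm_zero] at hexp
        have hz : ((0:ℕ):ℝ) ^ (2 - ε) = 0 := by
          rw [Nat.cast_zero]; exact Real.zero_rpow (by linarith)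
        rw [hz, mul_zero]
        push_cast
        nlinarith
      · have ht0 : t ≠ 0 := by omega
        rw [if_neg ht0] at hmis
        have hat : (t:ℝ) * γd ≤ ‖a t‖ := by
          calc (t:ℝ) * γd ≤ ⟪u, a t⟫ := ih1
            _ ≤ ‖u‖ * ‖a t‖ := real_inner_le_norm _ _
            _ = ‖a t‖ := by rw [hu, one_mul]
        have ht1' : (1:ℝ) ≤ (t:ℝ) := by exact_mod_cast ht1
        have htγ : (0:ℝ) < (t:ℝ) * γd := by nlinarith
        have hpow : ‖a t‖ ^ (1 - ε) ≤ ((t:ℝ) * γd) ^ (1 - ε) :=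
          Real.rpow_le_rpow_of_nonpos htγ hat (by linarith)
        have hmul : ((t:ℝ) * γd) ^ (1 - ε) = (t:ℝ) ^ (1 - ε) * γd ^ (1 - ε) :=
          Real.mul_rpow (by positivity) hγd.le
        have hcast : ((t - 1 : ℕ) : ℝ) + 1 = (t : ℝ) := by
          rw [Nat.cast_sub ht1]; ring
        have hbern := bern_aux (m := ((t - 1 : ℕ) : ℝ)) (Nat.cast_nonneg _) h2ε hp1
        rw [hcast, show (2 - ε) - 1 = 1 - ε by ring] at hbern
        have hK2 : K * (2 - ε) = 2 * b * γd ^ (1 - ε) := by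
          rw [hKdef]; field_simp
        have hstep2 : K * ((t - 1 : ℕ):ℝ) ^ (2 - ε) + 2 * b * γd ^ (1 - ε) * (t:ℝ) ^ (1 - ε)
            ≤ K * (t:ℝ) ^ (2 - ε) := by
          have h := mul_le_mul_of_nonneg_left hbern hKpos.le
          rw [mul_add, ← mul_assoc, hK2] at h
          linarith
        have hmis2 : ⟪a t, y k⟫ ≤ b * ((t:ℝ) ^ (1 - ε) * γd ^ (1 - ε)) := by
          calc ⟪a t, y k⟫ ≤ b * ‖a t‖ ^ (1 - ε) := hmis
            _ ≤ b * ((t:ℝ) ^ (1 - ε) * γd ^ (1 - ε)) := by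
                rw [← hmul]; exact mul_le_mul_of_nonneg_left hpow hb.le
        push_cast
        nlinarith [hstep2, hexp, hy2, ih2, hmis2]
  -- derived bounds at T
  have hlowT : (T:ℝ) * γd ≤ ‖a T‖ := by
    calc (T:ℝ) * γd ≤ ⟪u, a T⟫ := (key T le_rfl).1
      _ ≤ ‖u‖ * ‖a T‖ := real_inner_le_norm _ _
      _ = ‖a T‖ := by rw [hu, one_mul]
  have hupT : ‖a T‖ ^ 2 ≤ (T:ℝ) * R ^ 2 + K * (T:ℝ) ^ (2 - ε) := by
    have h1 := (key T le_rfl).2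
    have h2 : (((T - 1 : ℕ)) : ℝ) ^ (2 - ε) ≤ (T : ℝ) ^ (2 - ε) := by
      apply Real.rpow_le_rpow (Nat.cast_nonneg _) _ h2ε.le
      exact_mod_cast Nat.sub_le T 1
    nlinarith
  -- Part 1
  have part1 : (T : ℝ) ≤ Tb := by
    by_contra hcon
    push_neg at hcon
    have hTpos : (0:ℝ) < T := lt_trans hTbpos hcon
    have hTC : C ^ (1 / ε) ≤ (T:ℝ) := by
      rw [hTb] at hcon
      have : (0:ℝ) ≤ R ^ 2 / γd ^ 2 := by positivity
      linarith
    have hCT : C * (T:ℝ) ^ (1 - ε) ≤ C ^ (1 / ε) := by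
      have h1 : (T:ℝ) ^ (1 - ε) ≤ (C ^ (1 / ε)) ^ (1 - ε) :=
        Real.rpow_le_rpow_of_nonpos (Real.rpow_pos_of_pos hCpos _) hTC (by linarith)
      have h2 : (C ^ (1 / ε)) ^ (1 - ε) = C ^ ((1 / ε) * (1 - ε)) :=
        (Real.rpow_mul hCpos.le _ _).symm
      have h3 : C * C ^ ((1 / ε) * (1 - ε)) = C ^ (1 + (1 / ε) * (1 - ε)) := by
        rw [Real.rpow_add hCpos, Real.rpow_one]
      have h4 : 1 + (1 / ε) * (1 - ε) = 1 / ε := by field_simp; ring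
      calc C * (T:ℝ) ^ (1 - ε) ≤ C * (C ^ (1 / ε)) ^ (1 - ε) :=
            mul_le_mul_of_nonneg_left h1 hCpos.le
        _ = C ^ (1 + (1 / ε) * (1 - ε)) := by rw [h2, h3]
        _ = C ^ (1 / ε) := by rw [h4]
    have hsplit : (T:ℝ) ^ (2 - ε) = (T:ℝ) * (T:ℝ) ^ (1 - ε) := by
      rw [show (2:ℝ) - ε = 1 + (1 - ε) by ring, Real.rpow_add hTpos, Real.rpow_one]
    have hsq : ((T:ℝ) * γd) ^ 2 ≤ ‖a T‖ ^ 2 :=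
      pow_le_pow_left₀ (mul_pos hTpos hγd).le hlowT 2
    have hmain : (T:ℝ)^2 * γd^2 ≤ (T:ℝ) * R^2 + C * γd^2 * ((T:ℝ) * (T:ℝ)^(1-ε)) := by
      rw [← hsplit, ← hKC]
      nlinarith [hsq, hupT]
    have hCT2 : (T:ℝ) * γd^2 * (C * (T:ℝ)^(1-ε)) ≤ (T:ℝ) * γd^2 * C^(1/ε) :=
      mul_le_mul_of_nonneg_left hCT (by positivity)
    have hg3 : (T:ℝ) * γd^2 * (R^2/γd^2) = (T:ℝ) * R^2 := by field_simp
    have hcon2 : (T:ℝ) * γd^2 * Tb < (T:ℝ) * γd^2 * T :=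
      mul_lt_mul_of_pos_left hcon (mul_pos hTpos (pow_pos hγd 2))
    rw [hTb, mul_add, hg3] at hcon2
    nlinarith [hmain, hCT2, hcon2]
  refine ⟨part1, ?_⟩
  -- Part 2
  intro hT1 hconv
  have hTpos : (0:ℝ) < T := by exact_mod_cast hT1
  have hna : (0:ℝ) < ‖a T‖ := lt_of_lt_of_le (mul_pos hTpos hγd) hlowT
  set D : ℝ := (R ^ 2 / (b * γd ^ (1 - ε))) * Tb ^ (ε - 1) + 2 / (2 - ε) with hDdef
  have hDpos : 0 < D := by
    have h1 : (0:ℝ) ≤ (R ^ 2 / (b * γd ^ (1 - ε))) * Tb ^ (ε - 1) :=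
      mul_nonneg (div_nonneg (sq_nonneg R) (mul_pos hb (hγpow _)).le)
        (Real.rpow_nonneg hTbpos.le _)
    have h2 : (0:ℝ) < 2 / (2 - ε) := div_pos two_pos h2ε
    rw [hDdef]; linarith
  -- lower bound for the inf
  have hinf : b * ‖a T‖ ^ (-ε) ≤ Finset.univ.inf' (Finset.univ_nonempty_iff.mpr ⟨⟨0, hn⟩⟩)
      (fun k : Fin n => ⟪(‖a T‖)⁻¹ • a T, y k⟫) := by
    apply Finset.le_inf'
    intro k _
    have h1 : ⟪(‖a T‖)⁻¹ • a T, y k⟫ = (‖a T‖)⁻¹ * ⟪a T, y k⟫ := real_inner_smul_left _ _ _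
    have h2 : (‖a T‖)⁻¹ * (b * ‖a T‖ ^ (1 - ε)) = b * ‖a T‖ ^ (-ε) := by
      have h3 : ‖a T‖ ^ (-ε) = ‖a T‖ ^ (1 - ε) * (‖a T‖)⁻¹ := by
        rw [← Real.rpow_neg_one ‖a T‖, ← Real.rpow_add hna]
        congr 1; ring
      rw [h3]; ring
    rw [h1, ← h2]
    exact mul_le_mul_of_nonneg_left (hconv k).le (by positivity)
  -- key estimate
  have hest : ‖a T‖ ^ ε * γd ≤ b * D := by
    have e1 : ‖a T‖ ^ ε = ‖a T‖ ^ 2 * ‖a T‖ ^ (ε - 2) := by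
      rw [← Real.rpow_natCast ‖a T‖ 2, ← Real.rpow_add hna]
      congr 1; push_cast; ring
    have e2 : ‖a T‖ ^ (ε - 2) ≤ ((T:ℝ) * γd) ^ (ε - 2) :=
      Real.rpow_le_rpow_of_nonpos (mul_pos hTpos hγd) hlowT (by linarith)
    have e3 : ((T:ℝ) * γd) ^ (ε - 2) = (T:ℝ) ^ (ε - 2) * γd ^ (ε - 2) :=
      Real.mul_rpow (by positivity) hγd.le
    have e4 : ‖a T‖ ^ ε ≤
        ((T:ℝ) * R ^ 2 + K * (T:ℝ) ^ (2 - ε)) * ((T:ℝ) ^ (ε - 2) * γd ^ (ε - 2)) := by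
      rw [e1, ← e3]
      have hnn : (0:ℝ) ≤ ‖a T‖ ^ 2 := sq_nonneg _
      have hub : (0:ℝ) ≤ (T:ℝ) * R ^ 2 + K * (T:ℝ) ^ (2 - ε) := le_trans hnn hupT
      exact mul_le_mul hupT e2 (Real.rpow_nonneg hna.le _) hub
    have e5 : (T:ℝ) * (T:ℝ) ^ (ε - 2) = (T:ℝ) ^ (ε - 1) := by
      nth_rewrite 1 [← Real.rpow_one (T:ℝ)]
      rw [← Real.rpow_add hTpos]
      congr 1; ring
    have e6 : (T:ℝ) ^ (2 - ε) * (T:ℝ) ^ (ε - 2) = 1 := by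
      rw [← Real.rpow_add hTpos, show (2 - ε) + (ε - 2) = (0:ℝ) by ring, Real.rpow_zero]
    have e7 : ‖a T‖ ^ ε ≤ R ^ 2 * γd ^ (ε - 2) * (T:ℝ) ^ (ε - 1) + K * γd ^ (ε - 2) := by
      calc ‖a T‖ ^ ε ≤
          ((T:ℝ) * R ^ 2 + K * (T:ℝ) ^ (2 - ε)) * ((T:ℝ) ^ (ε - 2) * γd ^ (ε - 2)) := e4
        _ = R ^ 2 * γd ^ (ε - 2) * ((T:ℝ) * (T:ℝ) ^ (ε - 2)) +
            K * γd ^ (ε - 2) * ((T:ℝ) ^ (2 - ε) * (T:ℝ) ^ (ε - 2)) := by ring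
        _ = R ^ 2 * γd ^ (ε - 2) * (T:ℝ) ^ (ε - 1) + K * γd ^ (ε - 2) := by
            rw [e5, e6, mul_one]
    have e8 : (T:ℝ) ^ (ε - 1) ≤ Tb ^ (ε - 1) :=
      Real.rpow_le_rpow hTpos.le part1 (by linarith)
    have e9 : ‖a T‖ ^ ε ≤ R ^ 2 * γd ^ (ε - 2) * Tb ^ (ε - 1) + K * γd ^ (ε - 2) := by
      have h := mul_le_mul_of_nonneg_left e8
        (mul_nonneg (sq_nonneg R) (hγpow (ε - 2)).le)
      linarith
    have hγ1 : γd * (γd ^ (ε - 2) * γd ^ (1 - ε)) = 1 := by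
      have h : γd ^ (ε - 2) * γd ^ (1 - ε) = γd ^ (-1 : ℝ) := by
        rw [← Real.rpow_add hγd]; congr 1; ring
      rw [h, Real.rpow_neg_one]; exact mul_inv_cancel₀ hγd.ne'
    have id1 : γd * (R ^ 2 * γd ^ (ε - 2)) = b * (R ^ 2 / (b * γd ^ (1 - ε))) := by
      have hb' : b * (R ^ 2 / (b * γd ^ (1 - ε))) = R ^ 2 / γd ^ (1 - ε) := by
        rw [← mul_div_assoc, mul_div_mul_left _ _ hb.ne']
      rw [hb', eq_div_iff (ne_of_gt (hγpow (1 - ε)))]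
      linear_combination R ^ 2 * hγ1
    have id2 : γd * (K * γd ^ (ε - 2)) = b * (2 / (2 - ε)) := by
      rw [hKdef]
      calc γd * (2 * b * γd ^ (1 - ε) / (2 - ε) * γd ^ (ε - 2))
          = 2 * b / (2 - ε) * (γd * (γd ^ (ε - 2) * γd ^ (1 - ε))) := by ring
        _ = 2 * b / (2 - ε) := by rw [hγ1, mul_one]
        _ = b * (2 / (2 - ε)) := by ring
    have h := mul_le_mul_of_nonneg_left e9 hγd.le
    calc ‖a T‖ ^ ε * γd = γd * ‖a T‖ ^ ε := by ring
      _ ≤ γd * (R ^ 2 * γd ^ (ε - 2) * Tb ^ (ε - 1) + K * γd ^ (ε - 2)) := h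
      _ = γd * (R ^ 2 * γd ^ (ε - 2)) * Tb ^ (ε - 1) + γd * (K * γd ^ (ε - 2)) := by ring
      _ = b * (R ^ 2 / (b * γd ^ (1 - ε))) * Tb ^ (ε - 1) + b * (2 / (2 - ε)) := by
          rw [id1, id2]
      _ = b * D := by rw [hDdef]; ring
  -- conclude
  have hxe : ‖a T‖ ^ (-ε) * ‖a T‖ ^ ε = 1 := by
    rw [← Real.rpow_add hna, show -ε + ε = (0:ℝ) by ring, Real.rpow_zero]
  have h1 : γd ≤ b * ‖a T‖ ^ (-ε) * D := by
    have h2 := mul_le_mul_of_nonneg_left hest (Real.rpow_nonneg hna.le (-ε))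
    calc γd = ‖a T‖ ^ (-ε) * ‖a T‖ ^ ε * γd := by rw [hxe, one_mul]
      _ = ‖a T‖ ^ (-ε) * (‖a T‖ ^ ε * γd) := by ring
      _ ≤ ‖a T‖ ^ (-ε) * (b * D) := h2
      _ = b * ‖a T‖ ^ (-ε) * D := by ring
  have h3 : D⁻¹ ≤ (b * ‖a T‖ ^ (-ε)) / γd := by
    rw [inv_eq_one_div, div_le_div_iff₀ hDpos hγd]
    linarith
  rw [ge_iff_le]
  calc D⁻¹ ≤ (b * ‖a T‖ ^ (-ε)) / γd := h3
    _ ≤ _ / γd := div_le_div_of_nonneg_right hinf hγd.le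
end

section
/- Let 1/2 ≤ ε ≤ 1, δ > 0, and suppose the parameter b is chosen as b/R² = (1 − ε/2)^(1−ε)·δ^(−ε)·(γ_d²/R²)^(1−ε). If a : ℕ → E is a t-margitron run of length t_c ≥ 1 that has converged after t_c updates, i.e. ⟨a_{t_c}, y_k⟩ > b·t_c^(1−ε) for every k ∈ {1, …, n}, then the achieved directional margin γ'_d := min_k ⟨a_{t_c}/‖a_{t_c}‖, y_k⟩ satisfies γ'_d/γ_d ≥ (δ + 2/(2−ε))^(−1). -/
open scoped RealInnerProductSpace

private lemma rpow_split {x : ℝ} (hx : 0 < x) {p q r : ℝ} (h : p = q + r) :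
    x ^ p = x ^ q * x ^ r := by
  rw [h, Real.rpow_add hx]

private lemma rpow_sq' {x : ℝ} (hx : 0 < x) {p q : ℝ} (h : q = p + p) :
    (x ^ p) ^ 2 = x ^ q := by
  rw [sq, ← Real.rpow_add hx, h]

set_option maxHeartbeats 1000000 in
/-- with 1/2 ≤ ε ≤ 1, δ > 0 and
b/R² = (1−ε/2)^(1−ε)·δ^(−ε)·(γ_d²/R²)^(1−ε), a converged t-margitron run achieves
γ'_d/γ_d ≥ (δ + 2/(2−ε))⁻¹. -/
theorem stmt18 {E : Type*} [NormedAddCommGroup E] [InnerProductSpace ℝ E]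
    {n : ℕ} (hn : 0 < n) (y : Fin n → E)
    (R : ℝ) (hR : IsGreatest (Set.range (fun k : Fin n => ‖y k‖)) R)
    (u : E) (hu : ‖u‖ = 1) (γd : ℝ) (hγd : 0 < γd)
    (hmargin : ∀ k : Fin n, γd ≤ ⟪u, y k⟫)
    (ε b δ : ℝ) (hε : 1 / 2 ≤ ε) (hε1 : ε ≤ 1) (hb : 0 < b) (hδ : 0 < δ)
    (hbeq : b / R ^ 2 =
      (1 - ε / 2) ^ (1 - ε) * δ ^ (-ε) * (γd ^ 2 / R ^ 2) ^ (1 - ε))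
    (tc : ℕ) (htc : 1 ≤ tc) (a : ℕ → E) (ha0 : a 0 = 0)
    (hrun : ∀ t : ℕ, t < tc → ∃ k : Fin n, a (t + 1) = a t + y k ∧
      ⟪a t, y k⟫ ≤ if t = 0 then 0 else b * (t : ℝ) ^ (1 - ε))
    (hconv : ∀ k : Fin n, b * (tc : ℝ) ^ (1 - ε) < ⟪a tc, y k⟫) :
    (Finset.univ.inf' (Finset.univ_nonempty_iff.mpr ⟨⟨0, hn⟩⟩)
        (fun k : Fin n => ⟪(‖a tc‖)⁻¹ • a tc, y k⟫)) / γd ≥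
      (δ + 2 / (2 - ε))⁻¹ := by
  have hε0 : (0:ℝ) < ε := lt_of_lt_of_le (by norm_num) hε
  have h2ε : (0:ℝ) < 2 - ε := by linarith
  have h1ε : (0:ℝ) ≤ 1 - ε := by linarith
  have hhalf : (0:ℝ) < 1 - ε/2 := by linarith
  have hk0 : ∀ k : Fin n, ‖y k‖ ≤ R := fun k => hR.2 ⟨k, rfl⟩
  have hγdR : γd ≤ R := by
    have h1 := hmargin ⟨0, hn⟩
    have h2 := real_inner_le_norm u (y ⟨0, hn⟩)
    have h3 := hk0 ⟨0, hn⟩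
    rw [hu, one_mul] at h2
    linarith
  have hRpos : (0:ℝ) < R := lt_of_lt_of_le hγd hγdR
  -- directional growth
  have F1 : ∀ t : ℕ, t ≤ tc → γd * t ≤ ⟪u, a t⟫ := by
    intro t
    induction t with
    | zero => intro _; simp [ha0]
    | succ t ih =>
      intro h
      obtain ⟨k, hk, -⟩ := hrun t (by omega)
      have h1 := ih (by omega)
      have h2 := hmargin k
      rw [hk, inner_add_right]
      push_cast
      linarith
  -- norm growth
  have F2 : ∀ t : ℕ, t ≤ tc →
      ‖a t‖^2 ≤ R^2 * t + (2*b/(2-ε)) * (t:ℝ)^(2-ε) := by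
    intro t
    induction t with
    | zero =>
      intro _
      simp [ha0, Real.zero_rpow h2ε.ne']
    | succ t ih =>
      intro h
      obtain ⟨k, hk, hmis⟩ := hrun t (by omega)
      have hprev := ih (by omega)
      have hny : ‖y k‖^2 ≤ R^2 := pow_le_pow_left₀ (norm_nonneg _) (hk0 k) 2
      have hexp : ‖a (t+1)‖^2 = ‖a t‖^2 + 2*⟪a t, y k⟫ + ‖y k‖^2 := by
        rw [hk]; exact norm_add_sq_real _ _
      rcases Nat.eq_zero_or_pos t with ht0 | htpos
      · subst ht0
        rw [if_pos rfl] at hmis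
        have ha0n : ‖a 0‖^2 = 0 := by simp [ha0]
        have hc : ((0+1:ℕ):ℝ) = 1 := by norm_num
        rw [hc, Real.one_rpow]
        have hpos : (0:ℝ) ≤ 2*b/(2-ε) := by positivity
        linarith
      · have htR : (0:ℝ) < (t:ℝ) := by exact_mod_cast htpos
        rw [if_neg (by omega)] at hmis
        have hbern : ((t:ℝ))^(2-ε) + (2-ε)*(t:ℝ)^(1-ε) ≤ ((t:ℝ)+1)^(2-ε) := by
          have hp : (1:ℝ) ≤ 2-ε := by linarith
          have hinv : (0:ℝ) < (t:ℝ)⁻¹ := by positivity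
          have hber := one_add_mul_self_le_rpow_one_add
            (by linarith : (-1:ℝ) ≤ (t:ℝ)⁻¹) hp
          have h2 := mul_le_mul_of_nonneg_left hber
            (Real.rpow_nonneg htR.le (2-ε))
          have e1 : (t:ℝ)^(2-ε) * (1+(t:ℝ)⁻¹)^(2-ε) = ((t:ℝ)+1)^(2-ε) := by
            rw [← Real.mul_rpow htR.le (by positivity)]
            congr 1
            field_simp
          have e2 : (t:ℝ)^(2-ε) * (t:ℝ)⁻¹ = (t:ℝ)^(1-ε) := by
            rw [show (2-ε:ℝ) = (1-ε) + 1 by ring, Real.rpow_add htR, Real.rpow_one]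
            field_simp
          rw [e1] at h2
          calc ((t:ℝ))^(2-ε) + (2-ε)*(t:ℝ)^(1-ε)
              = (t:ℝ)^(2-ε) * (1+(2-ε)*(t:ℝ)⁻¹) := by rw [← e2]; ring
            _ ≤ ((t:ℝ)+1)^(2-ε) := h2
        have hkey : (2*b/(2-ε)) * (t:ℝ)^(2-ε) + 2*(b*(t:ℝ)^(1-ε))
            ≤ (2*b/(2-ε)) * ((t:ℝ)+1)^(2-ε) := by
          have h3 := mul_le_mul_of_nonneg_left hbern
            (by positivity : (0:ℝ) ≤ 2*b/(2-ε))
          have e3 : (2*b/(2-ε)) * ((2-ε)*(t:ℝ)^(1-ε)) = 2*(b*(t:ℝ)^(1-ε)) := by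
            field_simp
          calc (2*b/(2-ε)) * (t:ℝ)^(2-ε) + 2*(b*(t:ℝ)^(1-ε))
              = (2*b/(2-ε)) * ((t:ℝ)^(2-ε) + (2-ε)*(t:ℝ)^(1-ε)) := by
                linear_combination -e3
            _ ≤ (2*b/(2-ε)) * ((t:ℝ)+1)^(2-ε) := h3
        have hc : ((t+1:ℕ):ℝ) = (t:ℝ)+1 := by push_cast; ring
        rw [hc]
        linarith [hexp, hprev, hmis, hny, hkey]
  -- main quantities
  set T : ℝ := (tc:ℝ) with hTdef
  have hT1 : (1:ℝ) ≤ T := by rw [hTdef]; exact_mod_cast htc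
  have hTpos : (0:ℝ) < T := by linarith
  set N : ℝ := ‖a tc‖ with hNdef
  have hNlb : γd * T ≤ N := by
    have h1 := F1 tc le_rfl
    have h2 := real_inner_le_norm u (a tc)
    rw [hu, one_mul] at h2
    exact le_trans h1 h2
  have hNpos : (0:ℝ) < N := lt_of_lt_of_le (by positivity) hNlb
  have hN2 : N^2 ≤ R^2*T + (2*b/(2-ε))*T^(2-ε) := F2 tc le_rfl
  set D : ℝ := δ + 2/(2-ε) with hDdef
  have hDpos : (0:ℝ) < D := by rw [hDdef]; positivity
  have hTe : T^(1-ε) * T = T^(2-ε) := by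
    rw [show (2-ε:ℝ) = (1-ε)+1 by ring, Real.rpow_add hTpos, Real.rpow_one]
  have hTpow : (0:ℝ) < T^(1-ε) := Real.rpow_pos_of_pos hTpos _
  have key : γd / D ≤ (b * T^(1-ε)) / N := by
    rw [div_le_div_iff₀ hDpos hNpos]
    rcases le_or_gt (R^2) (δ * (b * T^(1-ε))) with hA | hB
    · -- Case A
      rw [← mul_le_mul_iff_of_pos_right hTpos]
      calc γd*N*T = (γd*T)*N := by ring
        _ ≤ N*N := mul_le_mul_of_nonneg_right hNlb hNpos.le
        _ = N^2 := (sq N).symm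
        _ ≤ R^2*T + (2*b/(2-ε))*T^(2-ε) := hN2
        _ ≤ δ*(b*T^(1-ε))*T + (2*b/(2-ε))*T^(2-ε) := by
            have := mul_le_mul_of_nonneg_right hA hTpos.le
            linarith
        _ = b*T^(1-ε)*D*T := by rw [hDdef, ← hTe]; field_simp
    · -- Case B
      set S : ℝ := 1 + 2/((2-ε)*δ) with hSdef
      have hSpos : (0:ℝ) < S := by rw [hSdef]; positivity
      have hDS : D = δ * S := by rw [hDdef, hSdef]; field_simp
      have hbT : b*T^(1-ε) < R^2/δ := by
        rw [lt_div_iff₀ hδ]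
        calc b*T^(1-ε)*δ = δ*(b*T^(1-ε)) := by ring
          _ < R^2 := hB
      have e3 : (2*b/(2-ε))*T^(2-ε) = (2/(2-ε))*(b*T^(1-ε))*T := by
        rw [← hTe]; ring
      have hN2' : N^2 ≤ R^2*T*S := by
        have h4 : (2/(2-ε))*(b*T^(1-ε))*T ≤ (2/(2-ε))*(R^2/δ)*T := by
          apply mul_le_mul_of_nonneg_right _ hTpos.le
          exact mul_le_mul_of_nonneg_left hbT.le (by positivity)
        have e4 : R^2*T + (2/(2-ε))*(R^2/δ)*T = R^2*T*S := by
          rw [hSdef]; field_simp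
        rw [e3] at hN2
        calc N^2 ≤ R^2*T + (2/(2-ε))*(b*T^(1-ε))*T := hN2
          _ ≤ R^2*T + (2/(2-ε))*(R^2/δ)*T := add_le_add_right h4 _
          _ = R^2*T*S := e4
      have h5 : γd^2*T^2 ≤ R^2*T*S := by
        have h6 : (γd*T)^2 ≤ N^2 := pow_le_pow_left₀ (by positivity) hNlb 2
        calc γd^2*T^2 = (γd*T)^2 := by ring
          _ ≤ N^2 := h6
          _ ≤ R^2*T*S := hN2'
      have hTub : T ≤ R^2*S/γd^2 := by
        rw [le_div_iff₀ (by positivity)]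
        rw [← mul_le_mul_iff_of_pos_right hTpos]
        calc T*γd^2*T = γd^2*T^2 := by ring
          _ ≤ R^2*T*S := h5
          _ = R^2*S*T := by ring
      -- square comparison
      set g : ℝ := γd^2/R^2 with hgdef
      have hgpos : (0:ℝ) < g := by rw [hgdef]; positivity
      have hγd2 : γd^2 = g * R^2 := by rw [hgdef]; field_simp
      have e5 : R^2*S/γd^2 = S/g := by
        rw [hgdef]; rw [div_div_eq_mul_div]; field_simp
      have hTm : T^(2*ε-1) ≤ (R^2*S/γd^2)^(2*ε-1) :=
        Real.rpow_le_rpow hTpos.le hTub (by linarith)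
      have hTsplit : T = T^(2-2*ε)*T^(2*ε-1) := by
        rw [← Real.rpow_add hTpos, show (2-2*ε)+(2*ε-1) = (1:ℝ) by ring,
          Real.rpow_one]
      have hTsq : (T^(1-ε))^2 = T^(2-2*ε) := rpow_sq' hTpos (by ring)
      have hbval : b = R^2 * ((1-ε/2)^(1-ε) * δ^(-ε) * (γd^2/R^2)^(1-ε)) := by
        have h7 := (div_eq_iff (by positivity : (R:ℝ)^2 ≠ 0)).mp hbeq
        rw [h7]; ring
      have hbsq : b^2 = (R^2)^2 * ((1-ε/2)^(2-2*ε) * δ^(-(2*ε)) * g^(2-2*ε)) := by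
        rw [hbval, ← hgdef, mul_pow, mul_pow, mul_pow,
          rpow_sq' hhalf (by ring : (2-2*ε:ℝ) = (1-ε)+(1-ε)),
          rpow_sq' hδ (by ring : (-(2*ε):ℝ) = (-ε)+(-ε)),
          rpow_sq' hgpos (by ring : (2-2*ε:ℝ) = (1-ε)+(1-ε))]
      have eS : S * S^(2*ε-1) = S^(2*ε) := by
        rw [rpow_split hSpos (show (2*ε:ℝ) = 1 + (2*ε-1) by ring), Real.rpow_one]
      have egprod : g^(2-2*ε) * g^(2*ε-1) = g := by
        rw [← Real.rpow_add hgpos, show (2-2*ε)+(2*ε-1) = (1:ℝ) by ring,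
          Real.rpow_one]
      have hgp : (0:ℝ) < g^(2*ε-1) := Real.rpow_pos_of_pos hgpos _
      have egdiv : g / g^(2*ε-1) = g^(2-2*ε) :=
        (div_eq_iff hgp.ne').mpr egprod.symm
      have eA : (R^2*S/γd^2)^(2*ε-1) = S^(2*ε-1)/g^(2*ε-1) := by
        rw [e5, Real.div_rpow hSpos.le hgpos.le]
      have hLHS : γd^2*R^2*S*(R^2*S/γd^2)^(2*ε-1)
          = (R^2)^2 * (S^(2*ε) * g^(2-2*ε)) := by
        calc γd^2*R^2*S*(R^2*S/γd^2)^(2*ε-1)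
            = (g*R^2)*R^2*S*(S^(2*ε-1)/g^(2*ε-1)) := by rw [eA, hγd2]
          _ = (R^2)^2*((S*S^(2*ε-1))*(g/g^(2*ε-1))) := by ring
          _ = (R^2)^2*(S^(2*ε)*g^(2-2*ε)) := by rw [eS, egdiv]
      have hD2 : D^2 = D^(2*ε) * D^(2-2*ε) := by
        rw [← Real.rpow_add hDpos]
        norm_num
      have hDe : D^(2*ε) = δ^(2*ε) * S^(2*ε) := by
        rw [hDS, Real.mul_rpow hδ.le hSpos.le]
      have hδc : δ^(-(2*ε)) * δ^(2*ε) = 1 := by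
        rw [← Real.rpow_add hδ, show (-(2*ε)+2*ε:ℝ) = 0 by ring, Real.rpow_zero]
      have hDP : (1:ℝ) ≤ D*(1-ε/2) := by
        have e6 : (2/(2-ε))*(1-ε/2) = 1 := by field_simp
        have e7 : (δ + 2/(2-ε))*(1-ε/2) = δ*(1-ε/2) + 1 := by
          linear_combination e6
        rw [hDdef, e7]
        have := mul_pos hδ hhalf
        linarith
      have hone : (1:ℝ) ≤ (D*(1-ε/2))^(2-2*ε) := by
        calc (1:ℝ) = 1^(2-2*ε) := (Real.one_rpow _).symm
          _ ≤ (D*(1-ε/2))^(2-2*ε) :=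
              Real.rpow_le_rpow zero_le_one hDP (by linarith)
      have hcore : γd^2*R^2*S*(R^2*S/γd^2)^(2*ε-1) ≤ b^2*D^2 := by
        rw [hLHS, hbsq, hD2, hDe]
        have hfin : (1:ℝ) * (S^(2*ε) * g^(2-2*ε))
            ≤ ((1-ε/2)^(2-2*ε) * D^(2-2*ε)) * (S^(2*ε) * g^(2-2*ε)) := by
          apply mul_le_mul_of_nonneg_right _ (by positivity)
          calc (1:ℝ) ≤ (D*(1-ε/2))^(2-2*ε) := hone
            _ = D^(2-2*ε)*(1-ε/2)^(2-2*ε) := Real.mul_rpow hDpos.le hhalf.le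
            _ = (1-ε/2)^(2-2*ε) * D^(2-2*ε) := by ring
        calc (R^2)^2 * (S^(2*ε)*g^(2-2*ε))
            = (R^2)^2 * (1 * (S^(2*ε)*g^(2-2*ε))) := by ring
          _ ≤ (R^2)^2 * (((1-ε/2)^(2-2*ε) * D^(2-2*ε)) * (S^(2*ε)*g^(2-2*ε))) :=
              mul_le_mul_of_nonneg_left hfin (by positivity)
          _ = (R^2)^2 * ((1-ε/2)^(2-2*ε) * δ^(-(2*ε)) * g^(2-2*ε))
              * (δ^(2*ε)*S^(2*ε) * D^(2-2*ε)) := by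
              linear_combination (-((R^2)^2 * (1-ε/2)^(2-2*ε) * g^(2-2*ε)
                * S^(2*ε) * D^(2-2*ε))) * hδc
      -- assemble square inequality
      have hsq : (γd*N)^2 ≤ (b*T^(1-ε)*D)^2 := by
        have c1 : (γd*N)^2 ≤ γd^2*R^2*S*(R^2*S/γd^2)^(2*ε-1) * T^(2-2*ε) := by
          calc (γd*N)^2 = γd^2 * N^2 := by ring
            _ ≤ γd^2 * (R^2*T*S) :=
                mul_le_mul_of_nonneg_left hN2' (by positivity)
            _ = (γd^2*R^2*S) * (T^(2-2*ε)*T^(2*ε-1)) := by rw [← hTsplit]; ring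
            _ ≤ (γd^2*R^2*S) * (T^(2-2*ε)*(R^2*S/γd^2)^(2*ε-1)) := by
                apply mul_le_mul_of_nonneg_left _ (by positivity)
                exact mul_le_mul_of_nonneg_left hTm (by positivity)
            _ = γd^2*R^2*S*(R^2*S/γd^2)^(2*ε-1) * T^(2-2*ε) := by ring
        have c2 : (b*T^(1-ε)*D)^2 = b^2*D^2 * T^(2-2*ε) := by
          rw [← hTsq]; ring
        rw [c2]
        exact le_trans c1 (mul_le_mul_of_nonneg_right hcore (by positivity))
      have hxnn : (0:ℝ) ≤ γd*N := by positivity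
      have hynn : (0:ℝ) ≤ b*T^(1-ε)*D := by positivity
      calc γd*N = Real.sqrt ((γd*N)^2) := (Real.sqrt_sq hxnn).symm
        _ ≤ Real.sqrt ((b*T^(1-ε)*D)^2) := Real.sqrt_le_sqrt hsq
        _ = b*T^(1-ε)*D := Real.sqrt_sq hynn
  -- conclude
  rw [ge_iff_le, le_div_iff₀ hγd]
  refine Finset.le_inf' _ _ (fun k _ => ?_)
  have h1 := (hconv k).le
  have h2 : γd / D ≤ N⁻¹ * ⟪a tc, y k⟫ := by
    calc γd/D ≤ (b*T^(1-ε))/N := key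
      _ = N⁻¹ * (b*T^(1-ε)) := by rw [div_eq_inv_mul]
      _ ≤ N⁻¹ * ⟪a tc, y k⟫ :=
          mul_le_mul_of_nonneg_left h1 (inv_nonneg.mpr hNpos.le)
  calc D⁻¹*γd = γd/D := by rw [div_eq_inv_mul, mul_comm]
    _ ≤ N⁻¹ * ⟪a tc, y k⟫ := h2
    _ = ⟪N⁻¹ • a tc, y k⟫ := (real_inner_smul_left _ _ _).symm
end

section
/- Let ε > 0 and b > 0, and let a : ℕ → E be a t-margitron run of length T. Then for every t with 1 ≤ t ≤ T one has a_t ≠ 0 and the normalised margin threshold C(t) := b·t^(1−ε)/‖a_t‖ satisfies C(t) ≤ (b/γ_d)·t^(−ε); similarly, if a is an ℓ-margitron run of length T, then for every 1 ≤ t ≤ T the threshold C(t) := b·‖a_t‖^(−ε) satisfies C(t) ≤ (b/γ_d^ε)·t^(−ε). -/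
open scoped RealInnerProductSpace

/-- for a t-margitron run, for 1 ≤ t ≤ T one has a_t ≠ 0 and
C(t) = b·t^(1−ε)/‖a_t‖ ≤ (b/γ_d)·t^(−ε); for an ℓ-margitron run, a_t ≠ 0 and
C(t) = b·‖a_t‖^(−ε) ≤ (b/γ_d^ε)·t^(−ε). -/
theorem stmt19 {E : Type*} [NormedAddCommGroup E] [InnerProductSpace ℝ E]
    {n : ℕ} (hn : 0 < n) (y : Fin n → E)
    (R : ℝ) (hR : IsGreatest (Set.range (fun k : Fin n => ‖y k‖)) R)
    (u : E) (hu : ‖u‖ = 1) (γd : ℝ) (hγd : 0 < γd)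
    (hmargin : ∀ k : Fin n, γd ≤ ⟪u, y k⟫)
    (ε b : ℝ) (hε : 0 < ε) (hb : 0 < b)
    (T : ℕ) (a : ℕ → E) (ha0 : a 0 = 0) :
    ((∀ t : ℕ, t < T → ∃ k : Fin n, a (t + 1) = a t + y k ∧
        ⟪a t, y k⟫ ≤ if t = 0 then 0 else b * (t : ℝ) ^ (1 - ε)) →
      ∀ t : ℕ, 1 ≤ t → t ≤ T → a t ≠ 0 ∧
        b * (t : ℝ) ^ (1 - ε) / ‖a t‖ ≤ (b / γd) * (t : ℝ) ^ (-ε)) ∧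
    ((∀ t : ℕ, t < T → ∃ k : Fin n, a (t + 1) = a t + y k ∧
        ⟪a t, y k⟫ ≤ if t = 0 then 0 else b * ‖a t‖ ^ (1 - ε)) →
      ∀ t : ℕ, 1 ≤ t → t ≤ T → a t ≠ 0 ∧
        b * ‖a t‖ ^ (-ε) ≤ (b / γd ^ ε) * (t : ℝ) ^ (-ε)) := by
  -- common lemma: a step structure implies ‖a t‖ ≥ γd * t
  have key : ∀ (h : ∀ t : ℕ, t < T → ∃ k : Fin n, a (t + 1) = a t + y k),
      ∀ t : ℕ, t ≤ T → γd * t ≤ ‖a t‖ := by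
    intro h t ht
    have inner_bd : γd * t ≤ ⟪u, a t⟫ := by
      induction t with
      | zero => simp [ha0]
      | succ s ih =>
        obtain ⟨k, hk⟩ := h s (lt_of_lt_of_le (Nat.lt_succ_self s) ht)
        have ihs := ih (le_trans (Nat.le_succ s) ht)
        have := hmargin k
        rw [hk, inner_add_right]
        push_cast
        nlinarith
    calc γd * t ≤ ⟪u, a t⟫ := inner_bd
      _ ≤ ‖u‖ * ‖a t‖ := real_inner_le_norm u (a t)
      _ = ‖a t‖ := by rw [hu, one_mul]
  constructor
  · intro hrun t ht1 htT
    have hkey := key (fun s hs => (hrun s hs).imp (fun k hk => hk.1)) t htT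
    have htpos : (0 : ℝ) < t := by exact_mod_cast ht1
    have hnorm : 0 < ‖a t‖ := lt_of_lt_of_le (by positivity) hkey
    refine ⟨fun h0 => by simp [h0] at hnorm, ?_⟩
    have h1 : b * (t : ℝ) ^ (1 - ε) / ‖a t‖ ≤ b * (t : ℝ) ^ (1 - ε) / (γd * t) := by
      apply div_le_div_of_nonneg_left _ (by positivity) hkey
      positivity
    have h2 : b * (t : ℝ) ^ (1 - ε) / (γd * t) = (b / γd) * (t : ℝ) ^ (-ε) := by
      have : (t : ℝ) ^ (1 - ε) = t * (t : ℝ) ^ (-ε) := by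
        rw [Real.rpow_sub htpos, Real.rpow_one, Real.rpow_neg (le_of_lt htpos),
          div_eq_mul_inv]
      rw [this]; field_simp
    linarith [h2 ▸ h1]
  · intro hrun t ht1 htT
    have hkey := key (fun s hs => (hrun s hs).imp (fun k hk => hk.1)) t htT
    have htpos : (0 : ℝ) < t := by exact_mod_cast ht1
    have hnorm : 0 < ‖a t‖ := lt_of_lt_of_le (by positivity) hkey
    refine ⟨fun h0 => by simp [h0] at hnorm, ?_⟩
    have h1 : ‖a t‖ ^ (-ε) ≤ (γd * t) ^ (-ε) :=
      Real.rpow_le_rpow_of_nonpos (by positivity) hkey (by linarith)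
    have h2 : (γd * t) ^ (-ε) = γd ^ (-ε) * (t : ℝ) ^ (-ε) :=
      Real.mul_rpow (le_of_lt hγd) (le_of_lt htpos)
    have h3 : b / γd ^ ε = b * γd ^ (-ε) := by
      rw [Real.rpow_neg (le_of_lt hγd)]; field_simp
    calc b * ‖a t‖ ^ (-ε) ≤ b * ((γd * t) ^ (-ε)) := by
          exact mul_le_mul_of_nonneg_left h1 (le_of_lt hb)
      _ = (b / γd ^ ε) * (t : ℝ) ^ (-ε) := by rw [h2, h3]; ring
end
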